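/- arXiv:0909.2607 — 4 statements merged into one kernel-verified Lean document; each statement's English description precedes it below -/
import Mathlib

section
/- Let d ≥ 1, n₁,…,n_d ≥ 1, n = n₁+…+n_d. Let w ∈ L¹_loc(ℝⁿ) with w > 0 almost everywhere, and suppose there is A ≥ 1 such that M_s w(x) ≤ A·w(x) for almost every x. Then log w has finite little bmo norm, and ‖log w‖_bmo ≤ 4 log A. -/
open MeasureTheory ENNReal Filter

noncomputable section

/-- A dyadic cube in `ℝ^m`, recorded by its generation `k` and its corner index `j`;
it represents the set `∏ i, [j i * 2^k, (j i + 1) * 2^k)`. -/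
structure DyadicCube (m : ℕ) where
  k : ℤ
  j : Fin m → ℤ

/-- The underlying set of a dyadic cube. -/
def dyadicCubeSet {m : ℕ} (c : DyadicCube m) : Set (Fin m → ℝ) :=
  {x | ∀ i, (c.j i : ℝ) * 2 ^ c.k ≤ x i ∧ x i < ((c.j i : ℝ) + 1) * 2 ^ c.k}

/-- The generation-`k` dyadic cube containing the point `x`. -/
def dyadicCubeOf {m : ℕ} (k : ℤ) (x : Fin m → ℝ) : DyadicCube m :=
  ⟨k, fun i => ⌊x i / 2 ^ k⌋⟩

/-- `E_k f x`: the average of `f` over the generation-`k` dyadic cube containing `x`. -/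
def Ek {m : ℕ} (k : ℤ) (f : (Fin m → ℝ) → ℝ) (x : Fin m → ℝ) : ℝ :=
  ⨍ y in dyadicCubeSet (dyadicCubeOf k x), f y

/-- The martingale difference operator `Δ_Q f = (E_{k-1} f - E_k f) · 1_Q`
for a dyadic cube `Q` of generation `k`. -/
def deltaQ {m : ℕ} (c : DyadicCube m) (f : (Fin m → ℝ) → ℝ) : (Fin m → ℝ) → ℝ :=
  (dyadicCubeSet c).indicator (fun y => Ek (c.k - 1) f y - Ek c.k f y)

/-- The product space `ℝ^{n 0} × ⋯ × ℝ^{n (d-1)}`. -/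
abbrev ProductSpace {d : ℕ} (n : Fin d → ℕ) : Type := ∀ i, (Fin (n i) → ℝ)

/-- A dyadic rectangle `R = Q₁ × ⋯ × Q_d`, one dyadic cube in each block. -/
abbrev DyadicRect {d : ℕ} (n : Fin d → ℕ) : Type := ∀ i, DyadicCube (n i)

/-- The underlying set of a dyadic rectangle. -/
def dyadicRectSet {d : ℕ} {n : Fin d → ℕ} (R : DyadicRect n) : Set (ProductSpace n) :=
  {x | ∀ i, x i ∈ dyadicCubeSet (R i)}

/-- Apply the one-parameter operator `Δ_Q` in the `i`-th block of variables. -/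
def deltaBlock {d : ℕ} {n : Fin d → ℕ} (i : Fin d) (c : DyadicCube (n i))
    (f : ProductSpace n → ℝ) (x : ProductSpace n) : ℝ :=
  deltaQ c (fun y => f (Function.update x i y)) (x i)

/-- The multiparameter difference operator `Δ_R = Δ_{Q₁} ⊗ ⋯ ⊗ Δ_{Q_d}`, obtained
by applying `Δ_{Q_i}` in the `i`-th block of variables. -/
def deltaR {d : ℕ} {n : Fin d → ℕ} (R : DyadicRect n) (f : ProductSpace n → ℝ) :
    ProductSpace n → ℝ :=
  (List.finRange d).foldr (fun i g => deltaBlock i (R i) g) f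

/-- The squared `L²` norm `‖g‖_{L²}²`, as an extended nonnegative real. -/
def l2normSq {d : ℕ} {n : Fin d → ℕ} (g : ProductSpace n → ℝ) : ℝ≥0∞ :=
  ∫⁻ x, ENNReal.ofReal (g x ^ 2)

/-- The multiparameter dyadic square function `S f (x) = (∑_R |Δ_R f(x)|²)^{1/2}`. -/
def squareFn {d : ℕ} {n : Fin d → ℕ} (f : ProductSpace n → ℝ) (x : ProductSpace n) : ℝ≥0∞ :=
  (∑' R : DyadicRect n, ENNReal.ofReal (deltaR R f x ^ 2)) ^ (1 / 2 : ℝ)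

/-- The dyadic product `H¹` norm `‖S f‖_{L¹}`. -/
def H1Norm {d : ℕ} {n : Fin d → ℕ} (f : ProductSpace n → ℝ) : ℝ≥0∞ :=
  ∫⁻ x, squareFn f x

/-- An axis-parallel cube in `ℝ^m` with arbitrary corner and (positive) side length. -/
structure Cube (m : ℕ) where
  corner : Fin m → ℝ
  side : ℝ
  side_pos : 0 < side

/-- The underlying set of a cube. -/
def cubeSet {m : ℕ} (c : Cube m) : Set (Fin m → ℝ) :=
  {x | ∀ i, c.corner i ≤ x i ∧ x i < c.corner i + c.side}

/-- A rectangle `R = Q₁ × ⋯ × Q_d`: an axis-parallel cube in each block. -/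
abbrev Rect {d : ℕ} (n : Fin d → ℕ) : Type := ∀ i, Cube (n i)

/-- The underlying set of a rectangle. -/
def rectSet {d : ℕ} {n : Fin d → ℕ} (R : Rect n) : Set (ProductSpace n) :=
  {x | ∀ i, x i ∈ cubeSet (R i)}

/-- The little `bmo` norm: `sup_R |R|⁻¹ ∫_R |f - f_R|` over all rectangles. -/
def bmo1 {d : ℕ} {n : Fin d → ℕ} (f : ProductSpace n → ℝ) : ℝ≥0∞ :=
  ⨆ R : Rect n,
    (volume (rectSet R))⁻¹ * ∫⁻ x in rectSet R, ENNReal.ofReal |f x - ⨍ y in rectSet R, f y|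

/-- The `L²`-based little `bmo` norm: `sup_R (|R|⁻¹ ∫_R |f - f_R|²)^{1/2}` over all
rectangles. -/
def bmo2 {d : ℕ} {n : Fin d → ℕ} (f : ProductSpace n → ℝ) : ℝ≥0∞ :=
  ⨆ R : Rect n,
    ((volume (rectSet R))⁻¹ *
      ∫⁻ x in rectSet R, ENNReal.ofReal ((f x - ⨍ y in rectSet R, f y) ^ 2)) ^ (1 / 2 : ℝ)

/-- The one-parameter `BMO` norm over all axis-parallel cubes in `ℝ^m`. -/
def bmo1Cube {m : ℕ} (g : (Fin m → ℝ) → ℝ) : ℝ≥0∞ :=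
  ⨆ Q : Cube m,
    (volume (cubeSet Q))⁻¹ * ∫⁻ x in cubeSet Q, ENNReal.ofReal |g x - ⨍ y in cubeSet Q, g y|

/-- The `L²`-based one-parameter `BMO` norm over all axis-parallel cubes in `ℝ^m`. -/
def bmo2Cube {m : ℕ} (g : (Fin m → ℝ) → ℝ) : ℝ≥0∞ :=
  ⨆ Q : Cube m,
    ((volume (cubeSet Q))⁻¹ *
      ∫⁻ x in cubeSet Q, ENNReal.ofReal ((g x - ⨍ y in cubeSet Q, g y) ^ 2)) ^ (1 / 2 : ℝ)

/-- The strong maximal function: supremum of averages of `|f|` over all rectangles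
containing the point. -/
def strongMaximal {d : ℕ} {n : Fin d → ℕ} (f : ProductSpace n → ℝ) (x : ProductSpace n) :
    ℝ≥0∞ :=
  ⨆ (R : Rect n) (_ : x ∈ rectSet R),
    (volume (rectSet R))⁻¹ * ∫⁻ y in rectSet R, ENNReal.ofReal |f y|

end
/-- if `w > 0` a.e. is locally integrable and `M_s w ≤ A·w` a.e. for
some `A ≥ 1` (a strong-maximal `A₁` weight), then `log w` has finite little `bmo` norm
and `‖log w‖_bmo ≤ 4 log A`. -/
theorem statement10 {d : ℕ} (hd : 1 ≤ d) (n : Fin d → ℕ) (hn : ∀ i, 1 ≤ n i)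
    (w : ProductSpace n → ℝ) (hw : LocallyIntegrable w volume)
    (hwpos : ∀ᵐ x ∂(volume : Measure (ProductSpace n)), 0 < w x)
    (A : ℝ) (hA : 1 ≤ A)
    (hA1 : ∀ᵐ x ∂(volume : Measure (ProductSpace n)),
      strongMaximal w x ≤ ENNReal.ofReal (A * w x)) :
    bmo1 (fun x => Real.log (w x)) ≤ ENNReal.ofReal (4 * Real.log A) := by
  have hApos : (0:ℝ) < A := lt_of_lt_of_le one_pos hA
  have hL : 0 ≤ Real.log A := Real.log_nonneg hA
  set f : ProductSpace n → ℝ := fun x => Real.log (w x) with hf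
  rw [bmo1]
  refine iSup_le fun R => ?_
  set S : Set (ProductSpace n) := rectSet R with hSdef
  -- S as a pi set
  have hSpi : S = Set.pi Set.univ fun i =>
      Set.pi Set.univ fun j => Set.Ico ((R i).corner j) ((R i).corner j + (R i).side) := by
    ext x
    simp [hSdef, rectSet, cubeSet, Set.mem_pi, Set.mem_Ico]
  have hSm : MeasurableSet S := by
    rw [hSpi]
    exact MeasurableSet.univ_pi fun i => MeasurableSet.univ_pi fun j => measurableSet_Ico
  have hvol : volume S = ∏ i, (ENNReal.ofReal (R i).side) ^ (n i) := by
    rw [hSpi, volume_pi_pi]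
    refine Finset.prod_congr rfl fun i _ => ?_
    rw [volume_pi_pi]
    simp [Real.volume_Ico]
  have hS0 : volume S ≠ 0 := by
    rw [hvol]
    refine Finset.prod_ne_zero_iff.mpr fun i _ => pow_ne_zero _ ?_
    simp [ENNReal.ofReal_eq_zero, not_le, (R i).side_pos]
  have hSfin : volume S ≠ ⊤ := by
    rw [hvol]
    exact (ENNReal.prod_lt_top fun i _ => ENNReal.pow_lt_top ENNReal.ofReal_lt_top).ne
  set V : ℝ := (volume S).toReal with hV
  have hVpos : 0 < V := ENNReal.toReal_pos hS0 hSfin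
  -- integrability of w on S
  have hK : IsCompact (Set.pi Set.univ fun i =>
      Set.pi Set.univ fun j => Set.Icc ((R i).corner j) ((R i).corner j + (R i).side)) :=
    isCompact_univ_pi fun i => isCompact_univ_pi fun j => isCompact_Icc
  have hSsub : S ⊆ Set.pi Set.univ fun i =>
      Set.pi Set.univ fun j => Set.Icc ((R i).corner j) ((R i).corner j + (R i).side) := by
    rw [hSpi]
    exact Set.pi_mono fun i _ => Set.pi_mono fun j _ => Set.Ico_subset_Icc_self
  have hwS : IntegrableOn w S volume := (hw.integrableOn_isCompact hK).mono_set hSsub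
  have hw_ae : ∀ᵐ x ∂(volume.restrict S), 0 < w x := ae_restrict_of_ae hwpos
  -- positivity of the average of w
  set a : ℝ := ⨍ y in S, w y with ha
  have hIw_pos : 0 < ∫ x in S, w x := by
    rw [setIntegral_pos_iff_support_of_nonneg_ae (hw_ae.mono fun x hx => hx.le) hwS]
    have hnull : volume (S \ Function.support w) = 0 := by
      have h1 : volume {x | ¬ 0 < w x} = 0 := by simpa [ae_iff] using hwpos
      refine measure_mono_null (fun x hx => ?_) h1
      simp only [Set.mem_setOf_eq]
      intro h
      exact hx.2 (ne_of_gt h)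
    have : volume S ≤ volume (Function.support w ∩ S) := by
      calc volume S ≤ volume ((Function.support w ∩ S) ∪ (S \ Function.support w)) := by
            refine measure_mono fun x hx => ?_
            by_cases h : x ∈ Function.support w
            · exact Or.inl ⟨h, hx⟩
            · exact Or.inr ⟨hx, h⟩
        _ ≤ volume (Function.support w ∩ S) + volume (S \ Function.support w) :=
            measure_union_le _ _
        _ = volume (Function.support w ∩ S) := by rw [hnull, add_zero]
    exact lt_of_lt_of_le (pos_iff_ne_zero.mpr hS0) this
  have hapos : 0 < a := by
    rw [ha, setAverage_eq, smul_eq_mul]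
    exact mul_pos (inv_pos.mpr hVpos) hIw_pos
  -- a ≤ A * w x  a.e. on S
  have hkey0 : ∀ᵐ x, x ∈ S → a ≤ A * w x := by
    filter_upwards [hA1, hwpos] with x hx hxpos hxS
    have heq : ENNReal.ofReal a = (volume S)⁻¹ * ∫⁻ y in S, ENNReal.ofReal |w y| := by
      have habs : ∫⁻ y in S, ENNReal.ofReal |w y| = ENNReal.ofReal (∫ y in S, |w y|) :=
        (MeasureTheory.ofReal_integral_eq_lintegral_ofReal hwS.abs
          (Filter.Eventually.of_forall fun y => abs_nonneg _)).symm
      have hww : ∫ y in S, |w y| = ∫ y in S, w y :=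
        integral_congr_ae (hw_ae.mono fun y hy => abs_of_pos hy)
      rw [habs, hww, ha, setAverage_eq, smul_eq_mul, measureReal_def, ← hV,
        ENNReal.ofReal_mul (inv_nonneg.mpr hVpos.le),
        ENNReal.ofReal_inv_of_pos hVpos, hV, ENNReal.ofReal_toReal hSfin]
    have h1 : ENNReal.ofReal a ≤ strongMaximal w x := by
      rw [heq, strongMaximal]
      exact le_iSup₂ (f := fun (R' : Rect n) (_ : x ∈ rectSet R') =>
        (volume (rectSet R'))⁻¹ * ∫⁻ y in rectSet R', ENNReal.ofReal |w y|) R hxS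
    exact (ENNReal.ofReal_le_ofReal_iff (le_of_lt (mul_pos hApos hxpos))).mp (h1.trans hx)
  have hkey : ∀ᵐ x ∂(volume.restrict S), a ≤ A * w x := (ae_restrict_iff' hSm).mpr hkey0
  set c : ℝ := Real.log a with hc
  -- bound: c - log A ≤ f x ≤ w x a.e. on S
  have hlow : ∀ᵐ x ∂(volume.restrict S), c - Real.log A ≤ f x := by
    filter_upwards [hkey, hw_ae] with x hx hxpos
    have : c ≤ Real.log (A * w x) := Real.log_le_log hapos hx
    rw [Real.log_mul hApos.ne' hxpos.ne'] at this
    simp only [hf]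
    linarith
  -- integrability of f on S
  have hfmeas : AEStronglyMeasurable f (volume.restrict S) :=
    (Real.measurable_log.comp_aemeasurable
      hw.aestronglyMeasurable.aemeasurable.restrict).aestronglyMeasurable
  have hconst : ∀ b : ℝ, IntegrableOn (fun _ => b) S volume := fun b =>
    integrableOn_const hSfin
  have hfS : IntegrableOn f S volume := by
    refine Integrable.mono' (hwS.abs.add (hconst (|c| + Real.log A))) hfmeas ?_
    filter_upwards [hlow, hw_ae] with x hx hxpos
    simp only [Pi.add_apply]
    rw [Real.norm_eq_abs, abs_le]
    have h1 : f x ≤ w x - 1 := Real.log_le_sub_one_of_pos hxpos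
    have h2 : w x ≤ |w x| := le_abs_self _
    constructor
    · have := neg_abs_le c
      linarith [abs_nonneg (w x)]
    · linarith [abs_nonneg c]
  set m : ℝ := ⨍ y in S, f y with hm
  -- Jensen: exp m ≤ a, hence m ≤ c
  have hexp : (fun x => Real.exp (f x)) =ᵐ[volume.restrict S] w :=
    hw_ae.mono fun x hx => Real.exp_log hx
  have hJ : Real.exp m ≤ a := by
    have hgi : IntegrableOn (Real.exp ∘ f) S volume := hwS.congr_fun_ae hexp.symm
    have := ConvexOn.map_set_average_le (s := Set.univ) (f := f) convexOn_exp
      Real.continuous_exp.continuousOn isClosed_univ hS0 hSfin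
      (Filter.Eventually.of_forall fun x => Set.mem_univ _) hfS hgi
    calc Real.exp m ≤ ⨍ x in S, Real.exp (f x) := this
      _ = a := average_congr hexp
  have hmc : m ≤ c := by
    rw [hc, Real.le_log_iff_exp_le hapos]
    exact hJ
  -- pointwise bound on |f - m|
  have hbound : ∀ᵐ x ∂(volume.restrict S), |f x - m| ≤ (f x - m) + 2 * Real.log A := by
    filter_upwards [hlow] with x hx
    rw [abs_le]
    constructor <;> nlinarith
  -- real integral estimate
  have hsub_int : IntegrableOn (fun x => |f x - m|) S volume := (hfS.sub (hconst m)).abs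
  have hrhs_int : IntegrableOn (fun x => (f x - m) + 2 * Real.log A) S volume :=
    (hfS.sub (hconst m)).add (hconst _)
  have hIf : ∫ x in S, f x = V * m := by
    have := hm
    rw [setAverage_eq, smul_eq_mul, measureReal_def, ← hV] at this
    rw [this]
    field_simp
  have hIest : ∫ x in S, |f x - m| ≤ V * (2 * Real.log A) := by
    calc ∫ x in S, |f x - m| ≤ ∫ x in S, ((f x - m) + 2 * Real.log A) :=
          integral_mono_ae hsub_int hrhs_int hbound
      _ = (∫ x in S, (f x - m)) + ∫ x in S, (2 * Real.log A : ℝ) :=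
          integral_add (hfS.sub (hconst m)) (hconst _)
      _ = ((∫ x in S, f x) - ∫ x in S, (m : ℝ)) + ∫ x in S, (2 * Real.log A : ℝ) := by
          rw [integral_sub hfS (hconst m)]
      _ = V * m - V * m + V * (2 * Real.log A) := by
          rw [hIf, setIntegral_const, setIntegral_const, smul_eq_mul, smul_eq_mul, measureReal_def, ← hV]
      _ = V * (2 * Real.log A) := by ring
  -- pass to ENNReal
  have hlin : ∫⁻ x in S, ENNReal.ofReal |f x - m| = ENNReal.ofReal (∫ x in S, |f x - m|) :=
    (MeasureTheory.ofReal_integral_eq_lintegral_ofReal hsub_int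
      (Filter.Eventually.of_forall fun x => abs_nonneg _)).symm
  calc (volume S)⁻¹ * ∫⁻ x in S, ENNReal.ofReal |f x - m|
      ≤ (volume S)⁻¹ * ENNReal.ofReal (V * (4 * Real.log A)) := by
        rw [hlin]
        refine mul_le_mul_right (ENNReal.ofReal_le_ofReal ?_) _
        nlinarith
    _ = (volume S)⁻¹ * (volume S * ENNReal.ofReal (4 * Real.log A)) := by
        rw [ENNReal.ofReal_mul hVpos.le, hV, ENNReal.ofReal_toReal hSfin]
    _ = ENNReal.ofReal (4 * Real.log A) := by
        rw [← mul_assoc, ENNReal.inv_mul_cancel hS0 hSfin, one_mul]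
end

section
/- Let d ≥ 1, n₁,…,n_d ≥ 1, n = n₁+…+n_d. There is a constant C depending only on n₁,…,n_d such that for every f ∈ L¹_loc(ℝⁿ) with ‖f‖_bmo < ∞ one has f ∈ L²_loc(ℝⁿ) and ‖f‖_{bmo,2} ≤ C‖f‖_bmo (John–Nirenberg inequality for little bmo: the L¹-based and L²-based bmo norms are equivalent). -/
open MeasureTheory ENNReal Filter

namespace JN

open MeasureTheory ENNReal Filter Metric Set

variable {d : ℕ} {n : Fin d → ℕ}

noncomputable section

lemma cubeSet_eq {m : ℕ} (c : Cube m) :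
    cubeSet c = Set.pi Set.univ (fun t => Set.Ico (c.corner t) (c.corner t + c.side)) := by
  ext x; simp [cubeSet, Set.mem_pi, Set.mem_Ico]

lemma measurableSet_cubeSet {m : ℕ} (c : Cube m) : MeasurableSet (cubeSet c) := by
  rw [cubeSet_eq]; exact MeasurableSet.univ_pi fun t => measurableSet_Ico

lemma volume_cubeSet {m : ℕ} (c : Cube m) :
    volume (cubeSet c) = ENNReal.ofReal (c.side ^ m) := by
  rw [cubeSet_eq, volume_pi_pi]
  simp only [Real.volume_Ico, add_sub_cancel_left]
  rw [Finset.prod_const, ENNReal.ofReal_pow c.side_pos.le]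
  simp

lemma rectSet_eq (R : Rect n) : rectSet R = Set.pi Set.univ (fun i => cubeSet (R i)) := by
  ext x; simp [rectSet, Set.mem_pi]

lemma measurableSet_rectSet (R : Rect n) : MeasurableSet (rectSet R) := by
  rw [rectSet_eq]; exact MeasurableSet.univ_pi fun i => measurableSet_cubeSet _

lemma volume_rectSet (R : Rect n) :
    volume (rectSet R) = ENNReal.ofReal (∏ i, (R i).side ^ (n i)) := by
  rw [rectSet_eq, volume_pi_pi]
  simp only [volume_cubeSet]
  rw [← ENNReal.ofReal_prod_of_nonneg]
  intro i _; exact pow_nonneg (R i).side_pos.le _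

lemma prod_side_pos (R : Rect n) : 0 < ∏ i, (R i).side ^ (n i) := by
  apply Finset.prod_pos; intro i _; exact pow_pos (R i).side_pos _

lemma volume_rectSet_pos (R : Rect n) : 0 < volume (rectSet R) := by
  rw [volume_rectSet]; exact ENNReal.ofReal_pos.mpr (prod_side_pos R)

lemma volume_rectSet_ne_top (R : Rect n) : volume (rectSet R) ≠ ⊤ := by
  rw [volume_rectSet]; exact ENNReal.ofReal_ne_top

/-! ### Dyadic children of a rectangle -/

/-- The dyadic sub-rectangle of `R` at generation `m` with index `j`. -/
def chRect (R : Rect n) (m : ℕ) (j : ∀ i, Fin (n i) → ℤ) : Rect n := fun i =>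
  { corner := fun t => (R i).corner t + (j i t : ℝ) * ((R i).side / 2 ^ m)
    side := (R i).side / 2 ^ m
    side_pos := by have := (R i).side_pos; positivity }

/-- The index of the generation-`m` dyadic sub-rectangle of `R` containing `x`. -/
def idx (R : Rect n) (m : ℕ) (x : ProductSpace n) : ∀ i, Fin (n i) → ℤ :=
  fun i t => ⌊(x i t - (R i).corner t) / ((R i).side / 2 ^ m)⌋

lemma scalar_iff {a s x : ℝ} (hs : 0 < s) (k : ℤ) :
    (a + (k : ℝ) * s ≤ x ∧ x < a + (k : ℝ) * s + s) ↔ ⌊(x - a) / s⌋ = k := by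
  rw [Int.floor_eq_iff, le_div_iff₀ hs, div_lt_iff₀ hs]
  push_cast
  constructor <;> rintro ⟨h1, h2⟩ <;> constructor <;> nlinarith

lemma mem_chRect_iff {R : Rect n} {m : ℕ} {j : ∀ i, Fin (n i) → ℤ} {x : ProductSpace n} :
    x ∈ rectSet (chRect R m j) ↔ idx R m x = j := by
  have hs : ∀ i : Fin d, (0:ℝ) < (R i).side / 2 ^ m := fun i => by
    have := (R i).side_pos; positivity
  constructor
  · intro hx
    funext i t
    exact (scalar_iff (hs i) (j i t)).mp (hx i t)
  · intro hj i t
    exact (scalar_iff (hs i) (j i t)).mpr (by rw [← hj]; rfl)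

lemma mem_own (R : Rect n) (m : ℕ) (x : ProductSpace n) :
    x ∈ rectSet (chRect R m (idx R m x)) := mem_chRect_iff.mpr rfl

lemma floor_half_congr {u v : ℝ} (h : ⌊u⌋ = ⌊v⌋) : ⌊u / 2⌋ = ⌊v / 2⌋ := by
  have key : ∀ w : ℝ, ∀ j : ℤ, (⌊w⌋ = j + j ∨ ⌊w⌋ = 2 * j + 1) → ⌊w / 2⌋ = j := by
    intro w j hj
    have h1 := Int.floor_le w
    have h2 := Int.lt_floor_add_one w
    rw [Int.floor_eq_iff]
    rcases hj with h | h <;> rw [h] at h1 h2 <;> push_cast at h1 h2 ⊢ <;>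
      constructor <;> linarith
  rcases Int.even_or_odd ⌊u⌋ with ⟨j, hj⟩ | ⟨j, hj⟩
  · rw [key u j (Or.inl hj), key v j (Or.inl (h ▸ hj))]
  · rw [key u j (Or.inr hj), key v j (Or.inr (h ▸ hj))]

lemma div_side_succ {s : ℝ} (hs : 0 < s) (w : ℝ) (m : ℕ) :
    w / (s / 2 ^ m) = w / (s / 2 ^ (m + 1)) / 2 := by
  rw [div_div, pow_succ]
  congr 1
  field_simp

lemma idx_succ_congr {R : Rect n} {m : ℕ} {x y : ProductSpace n}
    (h : idx R (m + 1) x = idx R (m + 1) y) : idx R m x = idx R m y := by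
  funext i t
  have hs := (R i).side_pos
  have hx := div_side_succ hs (x i t - (R i).corner t) m
  have hy := div_side_succ hs (y i t - (R i).corner t) m
  unfold idx
  rw [hx, hy]
  exact floor_half_congr (congrFun (congrFun h i) t)

lemma idx_add_congr {R : Rect n} (k : ℕ) {m' : ℕ} {x y : ProductSpace n}
    (h : idx R (m' + k) x = idx R (m' + k) y) : idx R m' x = idx R m' y := by
  induction k with
  | zero => exact h
  | succ k ih => exact ih (idx_succ_congr h)

lemma idx_le_congr {R : Rect n} {m' m : ℕ} (hm : m' ≤ m) {x y : ProductSpace n}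
    (h : idx R m x = idx R m y) : idx R m' x = idx R m' y := by
  obtain ⟨k, rfl⟩ := Nat.exists_eq_add_of_le hm
  exact idx_add_congr k h

lemma chRect_subset {R : Rect n} {m : ℕ} {x : ProductSpace n} (hx : x ∈ rectSet R) :
    rectSet (chRect R m (idx R m x)) ⊆ rectSet R := by
  intro y hy i t
  have hs := (R i).side_pos
  have hs' : (0:ℝ) < (R i).side / 2 ^ m := by positivity
  have hxt := hx i t
  have hyt := (mem_chRect_iff.mp hy) ▸ hy i t
  -- bounds on the index
  set k : ℤ := idx R m x i t with hk
  have hk0 : 0 ≤ k := by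
    rw [hk]; unfold idx
    exact Int.floor_nonneg.mpr (div_nonneg (by linarith [hxt.1]) hs'.le)
  have hk1 : k < 2 ^ m := by
    rw [hk]; unfold idx
    rw [Int.floor_lt]
    rw [div_lt_iff₀ hs']
    push_cast
    have h2 : ((2:ℝ) ^ m) * ((R i).side / 2 ^ m) = (R i).side := by field_simp
    rw [h2]
    linarith [hxt.2]
  have hy1 := hy i t
  simp only [chRect] at hy1
  constructor
  · have : (0:ℝ) ≤ (k : ℝ) * ((R i).side / 2 ^ m) := by
      apply mul_nonneg _ hs'.le; exact_mod_cast hk0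
    linarith [hy1.1]
  · have hk1' : (k : ℝ) + 1 ≤ (2:ℝ) ^ m := by exact_mod_cast hk1
    have : ((k:ℝ) + 1) * ((R i).side / 2 ^ m) ≤ (2:ℝ) ^ m * ((R i).side / 2 ^ m) :=
      mul_le_mul_of_nonneg_right hk1' hs'.le
    have h2 : ((2:ℝ) ^ m) * ((R i).side / 2 ^ m) = (R i).side := by field_simp
    rw [h2] at this
    have := hy1.2
    nlinarith

lemma D_subset_of_le {R : Rect n} {m' m : ℕ} (hm : m' ≤ m) (x : ProductSpace n) :
    rectSet (chRect R m (idx R m x)) ⊆ rectSet (chRect R m' (idx R m' x)) := fun y hy =>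
  mem_chRect_iff.mpr (idx_le_congr hm (mem_chRect_iff.mp hy))

lemma D_congr {R : Rect n} {m' m : ℕ} (hm : m' ≤ m) {x y : ProductSpace n}
    (hy : y ∈ rectSet (chRect R m (idx R m x))) :
    rectSet (chRect R m' (idx R m' y)) = rectSet (chRect R m' (idx R m' x)) := by
  rw [idx_le_congr hm (mem_chRect_iff.mp hy)]

lemma idx_zero_eq {R : Rect n} {x : ProductSpace n} (hx : x ∈ rectSet R) :
    idx R 0 x = fun _ _ => 0 := by
  funext i t
  have hs := (R i).side_pos
  unfold idx
  rw [Int.floor_eq_iff]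
  have h1 := (hx i t).1
  have h2 := (hx i t).2
  simp only [pow_zero, div_one, Int.cast_zero]
  constructor
  · exact div_nonneg (by linarith) hs.le
  · rw [div_lt_iff₀ hs]; linarith

lemma D_zero {R : Rect n} {x : ProductSpace n} (hx : x ∈ rectSet R) :
    rectSet (chRect R 0 (idx R 0 x)) = rectSet R := by
  ext y
  rw [mem_chRect_iff, idx_zero_eq hx]
  constructor
  · intro hy i t
    have hs := (R i).side_pos
    have := congrFun (congrFun hy i) t
    unfold idx at this
    rw [Int.floor_eq_iff] at this
    simp only [pow_zero, div_one, Int.cast_zero, zero_add] at this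
    rw [div_nonneg_iff, div_lt_one hs] at this
    constructor
    · rcases this.1 with h | h
      · linarith [h.1]
      · linarith [h.2, hs]
    · linarith [this.2]
  · intro hy
    exact idx_zero_eq hy

lemma volume_chRect (R : Rect n) (m : ℕ) (j : ∀ i, Fin (n i) → ℤ) :
    volume (rectSet (chRect R m j)) =
      ENNReal.ofReal ((∏ i, (R i).side ^ (n i)) / (2 ^ m) ^ (∑ i, n i)) := by
  rw [volume_rectSet]
  congr 1
  simp only [chRect]
  rw [← Finset.prod_pow_eq_pow_sum, ← Finset.prod_div_distrib]
  exact Finset.prod_congr rfl fun i _ => div_pow _ _ _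

end
end JN
namespace JN

open MeasureTheory ENNReal Filter Metric Set

variable {d : ℕ} {n : Fin d → ℕ}

noncomputable section

/-- The closed version of a rectangle. -/
def closedRectSet (Q : Rect n) : Set (ProductSpace n) :=
  Set.pi Set.univ fun i => Set.pi Set.univ fun t =>
    Icc ((Q i).corner t) ((Q i).corner t + (Q i).side)

lemma isCompact_closedRectSet (Q : Rect n) : IsCompact (closedRectSet Q) :=
  isCompact_univ_pi fun i => isCompact_univ_pi fun t => isCompact_Icc

lemma isClosed_closedRectSet (Q : Rect n) : IsClosed (closedRectSet Q) :=
  (isCompact_closedRectSet Q).isClosed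

lemma rectSet_subset_closedRectSet (Q : Rect n) : rectSet Q ⊆ closedRectSet Q := by
  intro x hx i _ t _
  exact ⟨(hx i t).1, ((hx i t).2).le⟩

lemma volume_closedRectSet (Q : Rect n) :
    volume (closedRectSet Q) = ENNReal.ofReal (∏ i, (Q i).side ^ (n i)) := by
  unfold closedRectSet
  rw [volume_pi_pi]
  have : ∀ i : Fin d, volume (Set.pi Set.univ fun t =>
      Icc ((Q i).corner t) ((Q i).corner t + (Q i).side)) =
      ENNReal.ofReal ((Q i).side ^ (n i)) := by
    intro i
    rw [volume_pi_pi]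
    simp only [Real.volume_Icc, add_sub_cancel_left]
    rw [Finset.prod_const, ENNReal.ofReal_pow (Q i).side_pos.le]
    simp
  simp only [this]
  rw [← ENNReal.ofReal_prod_of_nonneg]
  intro i _; exact pow_nonneg (Q i).side_pos.le _

lemma restrict_closedRectSet (Q : Rect n) :
    volume.restrict (closedRectSet Q) = volume.restrict (rectSet Q) := by
  apply Measure.restrict_congr_set
  rw [MeasureTheory.ae_eq_set]
  constructor
  · rw [measure_diff (rectSet_subset_closedRectSet Q)
      (measurableSet_rectSet Q).nullMeasurableSet (volume_rectSet_ne_top Q),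
      volume_closedRectSet, volume_rectSet, tsub_self]
  · rw [Set.diff_eq_empty.mpr (rectSet_subset_closedRectSet Q)]; simp

lemma setAverage_closedRectSet (Q : Rect n) (g : ProductSpace n → ℝ) :
    (⨍ y in closedRectSet Q, g y) = ⨍ y in rectSet Q, g y := by
  apply setAverage_congr
  apply (MeasureTheory.ae_eq_set).mpr
  constructor
  · rw [measure_diff (rectSet_subset_closedRectSet Q)
      (measurableSet_rectSet Q).nullMeasurableSet (volume_rectSet_ne_top Q),
      volume_closedRectSet, volume_rectSet, tsub_self]
  · rw [Set.diff_eq_empty.mpr (rectSet_subset_closedRectSet Q)]; simp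

lemma integrableOn_rectSet {f : ProductSpace n → ℝ} (hf : LocallyIntegrable f volume)
    (Q : Rect n) : IntegrableOn f (rectSet Q) volume :=
  (hf.integrableOn_isCompact (isCompact_closedRectSet Q)).mono_set
    (rectSet_subset_closedRectSet Q)

/-- Volume of closed balls in the product space. -/
lemma volume_closedBall_prod (x : ProductSpace n) {r : ℝ} (hr : 0 ≤ r) :
    volume (closedBall x r) = ENNReal.ofReal ((2 * r) ^ (∑ i, n i)) := by
  rw [closedBall_pi x hr, volume_pi_pi]
  have : ∀ i : Fin d, volume (closedBall (x i) r) = ENNReal.ofReal ((2 * r) ^ (n i)) := by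
    intro i
    rw [closedBall_pi (x i) hr, volume_pi_pi]
    simp only [Real.closedBall_eq_Icc, Real.volume_Icc,
      show ∀ a : ℝ, a + r - (a - r) = 2 * r from fun a => by ring]
    rw [Finset.prod_const, Finset.card_univ, Fintype.card_fin,
      ← ENNReal.ofReal_pow (by linarith)]
  simp only [this]
  rw [← ENNReal.ofReal_prod_of_nonneg (fun i _ => pow_nonneg (by linarith) _)]
  rw [Finset.prod_pow_eq_pow_sum]

end
end JN
namespace JN

open MeasureTheory ENNReal Filter Metric Set Topology NNReal

variable {d : ℕ} {n : Fin d → ℕ}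

noncomputable section

lemma prod_side_chRect (R : Rect n) (m : ℕ) (j : ∀ i, Fin (n i) → ℤ) :
    (∏ i, ((chRect R m j) i).side ^ (n i)) =
      (∏ i, (R i).side ^ (n i)) / (2 ^ m) ^ (∑ i, n i) := by
  simp only [chRect]
  rw [← Finset.prod_pow_eq_pow_sum, ← Finset.prod_div_distrib]
  exact Finset.prod_congr rfl fun i _ => div_pow _ _ _

/-- Almost-everywhere differentiation along the dyadic children of a fixed rectangle. -/
lemma ae_tendsto_D (hd : 1 ≤ d) (R : Rect n)
    {g : ProductSpace n → ℝ} (hg : LocallyIntegrable g volume) :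
    ∀ᵐ x : ProductSpace n, Tendsto
      (fun m => ⨍ y in rectSet (chRect R m (idx R m x)), g y) atTop (𝓝 (g x)) := by
  haveI : Nonempty (Fin d) := ⟨⟨0, hd⟩⟩
  set N : ℕ := ∑ i, n i with hN
  set S : ℝ := ∑ i, (R i).side with hS
  have hS0 : 0 < S := Finset.sum_pos (fun i _ => (R i).side_pos) Finset.univ_nonempty
  set P : ℝ := ∏ i, (R i).side ^ (n i) with hP
  have hP0 : 0 < P := prod_side_pos R
  have hside_le : ∀ i : Fin d, (R i).side ≤ S := fun i =>
    Finset.single_le_sum (fun i _ => (R i).side_pos.le) (Finset.mem_univ i)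
  have hPle : P ≤ (2 * S) ^ N := by
    rw [hP, hN, ← Finset.prod_pow_eq_pow_sum]
    apply Finset.prod_le_prod (fun i _ => pow_nonneg (R i).side_pos.le _)
    intro i _
    exact pow_le_pow_left₀ (R i).side_pos.le (by linarith [hside_le i]) _
  set Creal : ℝ := (6 * S) ^ N / P with hCreal
  have hCreal0 : 0 < Creal := div_pos (pow_pos (by linarith) _) hP0
  set C : ℝ≥0 := ⟨Creal, hCreal0.le⟩ with hC
  have hCoe : (C : ℝ≥0∞) = ENNReal.ofReal Creal := (ofReal_eq_coe_nnreal hCreal0.le).symm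
  have hfreq : ∀ x : ProductSpace n, ∃ᶠ r in 𝓝[>] (0:ℝ),
      volume (closedBall x (3 * r)) ≤ (C : ℝ≥0∞) * volume (closedBall x r) := by
    intro x
    apply Eventually.frequently
    filter_upwards [self_mem_nhdsWithin] with r (hr : 0 < r)
    rw [volume_closedBall_prod x (by linarith), volume_closedBall_prod x hr.le, hCoe,
      ← ENNReal.ofReal_mul hCreal0.le]
    apply ENNReal.ofReal_le_ofReal
    have h1 : (2 * (3 * r)) ^ N = 3 ^ N * (2 * r) ^ N := by
      rw [← mul_pow]; ring_nf
    rw [h1]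
    apply mul_le_mul_of_nonneg_right _ (pow_nonneg (by linarith) _)
    rw [hCreal, le_div_iff₀ hP0]
    calc (3:ℝ) ^ N * P ≤ 3 ^ N * (2 * S) ^ N :=
          mul_le_mul_of_nonneg_left hPle (pow_nonneg (by norm_num) _)
      _ = (6 * S) ^ N := by rw [← mul_pow]; ring_nf
  set v : VitaliFamily (volume : Measure (ProductSpace n)) :=
    Vitali.vitaliFamily volume C hfreq with hv
  filter_upwards [v.ae_tendsto_average hg] with x hx
  set A : ℕ → Set (ProductSpace n) := fun m => closedRectSet (chRect R m (idx R m x)) with hA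
  have hsub : ∀ m, A m ⊆ closedBall x (S / 2 ^ m) := by
    intro m y hy
    have hr : (0:ℝ) ≤ S / 2 ^ m := by positivity
    rw [Metric.mem_closedBall, dist_pi_le_iff hr]
    intro i
    rw [dist_pi_le_iff hr]
    intro t
    rw [Real.dist_eq, abs_le]
    have hxm : x ∈ A m := rectSet_subset_closedRectSet _ (mem_own R m x)
    have hyt := hy i (Set.mem_univ i) t (Set.mem_univ t)
    have hxt := hxm i (Set.mem_univ i) t (Set.mem_univ t)
    simp only [chRect, Set.mem_Icc] at hyt hxt
    have hss : (R i).side / 2 ^ m ≤ S / 2 ^ m := by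
      gcongr
      exact hside_le i
    constructor <;> [linarith [hyt.1, hxt.2]; linarith [hyt.2, hxt.1]]
  have hvol : ∀ m, volume (A m) = ENNReal.ofReal (P / (2 ^ m) ^ N) := by
    intro m
    rw [hA]
    rw [volume_closedRectSet, prod_side_chRect]
  have hmem : ∀ m, A m ∈ v.setsAt x := by
    intro m
    rw [hv]
    simp only [Vitali.vitaliFamily]
    refine ⟨isClosed_closedRectSet _, ?_, ⟨S / 2 ^ m, hsub m, ?_⟩⟩
    · -- nonempty interior
      set Q := chRect R m (idx R m x) with hQ
      have hopen : IsOpen (Set.pi Set.univ fun i => Set.pi Set.univ fun t =>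
          Ioo ((Q i).corner t) ((Q i).corner t + (Q i).side)) :=
        isOpen_set_pi Set.finite_univ fun i _ =>
          isOpen_set_pi Set.finite_univ fun t _ => isOpen_Ioo
      have hsub' : (Set.pi Set.univ fun i => Set.pi Set.univ fun t =>
          Ioo ((Q i).corner t) ((Q i).corner t + (Q i).side)) ⊆ interior (A m) := by
        rw [hopen.subset_interior_iff]
        intro z hz i _ t _
        exact Ioo_subset_Icc_self (hz i (Set.mem_univ i) t (Set.mem_univ t))
      refine Set.Nonempty.mono hsub' ⟨fun i t => (Q i).corner t + (Q i).side / 2, ?_⟩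
      intro i _ t _
      have := (Q i).side_pos
      constructor <;> simp <;> linarith
    · rw [hvol m, volume_closedBall_prod x (by positivity), hCoe,
        ← ENNReal.ofReal_mul hCreal0.le]
      apply ENNReal.ofReal_le_ofReal
      apply le_of_eq
      rw [hCreal]
      have h2 : ((2:ℝ) ^ m) ^ N ≠ 0 := by positivity
      field_simp
      rw [← mul_pow, div_mul_cancel₀ _ (by positivity)]
      ring
  have hT : Tendsto A atTop (v.filterAt x) := by
    rw [v.tendsto_filterAt_iff]
    refine ⟨Eventually.of_forall hmem, fun ε hε => ?_⟩
    have hlim : Tendsto (fun m : ℕ => S / 2 ^ m) atTop (𝓝 0) := by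
      have h2 : Tendsto (fun m : ℕ => ((1:ℝ)/2) ^ m) atTop (𝓝 0) :=
        tendsto_pow_atTop_nhds_zero_of_lt_one (by norm_num) (by norm_num)
      have h3 : Tendsto (fun m : ℕ => S * (1/2 : ℝ) ^ m) atTop (𝓝 (S * 0)) :=
        Tendsto.const_mul S h2
      rw [mul_zero] at h3
      refine h3.congr fun m => ?_
      rw [div_pow, one_pow, mul_one_div]
    filter_upwards [hlim.eventually_lt_const hε] with m hm
    exact (hsub m).trans (closedBall_subset_closedBall hm.le)
  exact (hx.comp hT).congr fun m => setAverage_closedRectSet _ g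

end
end JN
namespace JN

open MeasureTheory ENNReal Filter Metric Set Topology NNReal

variable {d : ℕ} {n : Fin d → ℕ}

noncomputable section

lemma volT_pos (Q : Rect n) : 0 < (volume (rectSet Q)).toReal :=
  ENNReal.toReal_pos (volume_rectSet_pos Q).ne' (volume_rectSet_ne_top Q)

lemma avg_rect_eq (Q : Rect n) (u : ProductSpace n → ℝ) :
    (⨍ y in rectSet Q, u y) = (volume (rectSet Q)).toReal⁻¹ * ∫ y in rectSet Q, u y := by
  rw [setAverage_eq, smul_eq_mul, measureReal_def]

lemma avg_const (Q : Rect n) (c : ℝ) : (⨍ _y in rectSet Q, c) = c := by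
  rw [avg_rect_eq, setIntegral_const, measureReal_def, smul_eq_mul, ← mul_assoc,
    inv_mul_cancel₀ (volT_pos Q).ne', one_mul]

lemma avg_mono {Q : Rect n} {u v : ProductSpace n → ℝ} (hu : IntegrableOn u (rectSet Q))
    (hv : IntegrableOn v (rectSet Q)) (h : ∀ y ∈ rectSet Q, u y ≤ v y) :
    (⨍ y in rectSet Q, u y) ≤ ⨍ y in rectSet Q, v y := by
  rw [avg_rect_eq, avg_rect_eq]
  apply mul_le_mul_of_nonneg_left _ (inv_nonneg.mpr ENNReal.toReal_nonneg)
  exact setIntegral_mono_on hu hv (measurableSet_rectSet Q) h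

lemma abs_avg_le {Q : Rect n} (u : ProductSpace n → ℝ) :
    |⨍ y in rectSet Q, u y| ≤ ⨍ y in rectSet Q, |u y| := by
  rw [avg_rect_eq, avg_rect_eq, abs_mul, abs_inv, abs_of_nonneg ENNReal.toReal_nonneg]
  apply mul_le_mul_of_nonneg_left _ (inv_nonneg.mpr ENNReal.toReal_nonneg)
  simpa [Real.norm_eq_abs] using
    norm_integral_le_integral_norm (μ := volume.restrict (rectSet Q)) u

lemma avg_sub_const {Q : Rect n} {u : ProductSpace n → ℝ} (hu : IntegrableOn u (rectSet Q))
    (c : ℝ) : (⨍ y in rectSet Q, (u y - c)) = (⨍ y in rectSet Q, u y) - c := by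
  rw [avg_rect_eq, avg_rect_eq,
    integral_sub hu (integrableOn_const (volume_rectSet_ne_top Q)),
    setIntegral_const, measureReal_def, smul_eq_mul, mul_sub, ← mul_assoc,
    inv_mul_cancel₀ (volT_pos Q).ne', one_mul]

lemma lintegral_ofReal_rect {Q : Rect n} {u : ProductSpace n → ℝ}
    (hu : IntegrableOn u (rectSet Q)) (h0 : ∀ y, 0 ≤ u y) :
    ∫⁻ y in rectSet Q, ENNReal.ofReal (u y) = ENNReal.ofReal (∫ y in rectSet Q, u y) :=
  (ofReal_integral_eq_lintegral_ofReal hu (Eventually.of_forall h0)).symm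

lemma lintegral_le_of_avg_le {Q : Rect n} {u : ProductSpace n → ℝ} {c : ℝ}
    (hu : IntegrableOn u (rectSet Q)) (h0 : ∀ y, 0 ≤ u y)
    (hc : (⨍ y in rectSet Q, u y) ≤ c) :
    ∫⁻ y in rectSet Q, ENNReal.ofReal (u y) ≤ ENNReal.ofReal c * volume (rectSet Q) := by
  rw [lintegral_ofReal_rect hu h0]
  rw [avg_rect_eq] at hc
  have h1 : ∫ y in rectSet Q, u y ≤ c * (volume (rectSet Q)).toReal := by
    rw [inv_mul_le_iff₀ (volT_pos Q)] at hc
    linarith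
  calc ENNReal.ofReal (∫ y in rectSet Q, u y) ≤
      ENNReal.ofReal (c * (volume (rectSet Q)).toReal) := ENNReal.ofReal_le_ofReal h1
    _ = ENNReal.ofReal c * volume (rectSet Q) := by
      rw [ENNReal.ofReal_mul', ENNReal.ofReal_toReal (volume_rectSet_ne_top Q)]
      exact ENNReal.toReal_nonneg

lemma mul_vol_le_lintegral {Q : Rect n} {u : ProductSpace n → ℝ} {c : ℝ}
    (hu : IntegrableOn u (rectSet Q)) (h0 : ∀ y, 0 ≤ u y)
    (hc : c ≤ ⨍ y in rectSet Q, u y) :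
    ENNReal.ofReal c * volume (rectSet Q) ≤ ∫⁻ y in rectSet Q, ENNReal.ofReal (u y) := by
  rw [lintegral_ofReal_rect hu h0]
  rw [avg_rect_eq] at hc
  have h1 : c * (volume (rectSet Q)).toReal ≤ ∫ y in rectSet Q, u y := by
    rw [le_inv_mul_iff₀ (volT_pos Q)] at hc
    linarith
  calc ENNReal.ofReal c * volume (rectSet Q)
      = ENNReal.ofReal (c * (volume (rectSet Q)).toReal) := by
        rw [ENNReal.ofReal_mul', ENNReal.ofReal_toReal (volume_rectSet_ne_top Q)]
        exact ENNReal.toReal_nonneg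
    _ ≤ ENNReal.ofReal (∫ y in rectSet Q, u y) := ENNReal.ofReal_le_ofReal h1

lemma locallyIntegrable_abs_sub {f : ProductSpace n → ℝ} (hf : LocallyIntegrable f volume)
    (c : ℝ) : LocallyIntegrable (fun y => |f y - c|) volume := by
  rw [MeasureTheory.locallyIntegrable_iff]
  intro K hK
  have := ((hf.integrableOn_isCompact hK).sub
    (integrableOn_const (C := c) hK.measure_lt_top.ne)).norm
  simpa [Real.norm_eq_abs, IntegrableOn] using this

lemma integrableOn_abs_sub {f : ProductSpace n → ℝ} (hf : LocallyIntegrable f volume)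
    (c : ℝ) (Q : Rect n) : IntegrableOn (fun y => |f y - c|) (rectSet Q) volume :=
  integrableOn_rectSet (locallyIntegrable_abs_sub hf c) Q

end
end JN
namespace JN

open MeasureTheory ENNReal Filter Metric Set Topology NNReal

variable {d : ℕ} {n : Fin d → ℕ}

noncomputable section

/-- The generation-`m` dyadic child of `R` containing `x`. -/
def Dm (R : Rect n) (m : ℕ) (x : ProductSpace n) : Set (ProductSpace n) :=
  rectSet (chRect R m (idx R m x))

lemma mem_Dm_self (R : Rect n) (m : ℕ) (x : ProductSpace n) : x ∈ Dm R m x := mem_own R m x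

lemma Dm_subset_rect {R : Rect n} {x : ProductSpace n} (hx : x ∈ rectSet R) (m : ℕ) :
    Dm R m x ⊆ rectSet R := chRect_subset hx

lemma Dm_congr {R : Rect n} {m' m : ℕ} (hm : m' ≤ m) {x y : ProductSpace n}
    (hy : y ∈ Dm R m x) : Dm R m' y = Dm R m' x := D_congr hm hy

/-- The stopped indices at generation `m`, for the function `|f · - c|` and threshold `lam`. -/
def Sm (f : ProductSpace n → ℝ) (c : ℝ) (R : Rect n) (lam : ℝ) (m : ℕ) :
    Set (∀ i, Fin (n i) → ℤ) :=
  {j | ∃ x, x ∈ rectSet R ∧ idx R m x = j ∧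
    (lam < ⨍ y in Dm R m x, |f y - c|) ∧ ∀ m' < m, (⨍ y in Dm R m' x, |f y - c|) ≤ lam}

def Bm (f : ProductSpace n → ℝ) (c : ℝ) (R : Rect n) (lam : ℝ) (m : ℕ) :
    Set (ProductSpace n) :=
  ⋃ j ∈ Sm f c R lam m, rectSet (chRect R m j)

def Bset (f : ProductSpace n → ℝ) (c : ℝ) (R : Rect n) (lam : ℝ) : Set (ProductSpace n) :=
  ⋃ m, Bm f c R lam m

variable {f : ProductSpace n → ℝ} {c lam : ℝ} {R : Rect n}

lemma mem_Bm_iff {m : ℕ} {x : ProductSpace n} :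
    x ∈ Bm f c R lam m ↔ x ∈ rectSet R ∧ (lam < ⨍ y in Dm R m x, |f y - c|) ∧
      ∀ m' < m, (⨍ y in Dm R m' x, |f y - c|) ≤ lam := by
  constructor
  · intro hx
    obtain ⟨j, hj, hxj⟩ := Set.mem_iUnion₂.mp hx
    obtain ⟨x₀, hx₀R, hx₀j, hx₀gt, hx₀le⟩ := hj
    have hxD : x ∈ Dm R m x₀ := by rw [Dm, hx₀j]; exact hxj
    have hDm : ∀ m' ≤ m, Dm R m' x = Dm R m' x₀ := fun m' hm' => Dm_congr hm' hxD
    refine ⟨Dm_subset_rect hx₀R m hxD, ?_, ?_⟩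
    · rw [hDm m le_rfl]; exact hx₀gt
    · intro m' hm'; rw [hDm m' hm'.le]; exact hx₀le m' hm'
  · rintro ⟨hxR, hgt, hle⟩
    exact Set.mem_biUnion ⟨x, hxR, rfl, hgt, hle⟩ (mem_Dm_self R m x)

lemma Bm_subset {m : ℕ} : Bm f c R lam m ⊆ rectSet R := fun _ hx => (mem_Bm_iff.mp hx).1

lemma measurableSet_Bm {m : ℕ} : MeasurableSet (Bm f c R lam m) :=
  MeasurableSet.biUnion (Set.to_countable _) fun j _ => measurableSet_rectSet _

lemma measurableSet_Bset : MeasurableSet (Bset f c R lam) :=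
  MeasurableSet.iUnion fun _ => measurableSet_Bm

lemma Bset_subset : Bset f c R lam ⊆ rectSet R :=
  Set.iUnion_subset fun _ => Bm_subset

lemma Bm_disjoint : Pairwise (Function.onFun Disjoint (Bm f c R lam)) := by
  intro m m' hmm'
  wlog hlt : m < m' generalizing m m'
  · exact (this hmm'.symm (by omega)).symm
  rw [Function.onFun, Set.disjoint_left]
  intro x hx hx'
  have h1 := (mem_Bm_iff.mp hx).2.1
  have h2 := (mem_Bm_iff.mp hx').2.2 m hlt
  linarith

lemma mem_Bset_iff {x : ProductSpace n} :
    x ∈ Bset f c R lam ↔ x ∈ rectSet R ∧ ∃ m, lam < ⨍ y in Dm R m x, |f y - c| := by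
  constructor
  · intro hx
    obtain ⟨m, hm⟩ := Set.mem_iUnion.mp hx
    exact ⟨(mem_Bm_iff.mp hm).1, m, (mem_Bm_iff.mp hm).2.1⟩
  · rintro ⟨hxR, hex⟩
    classical
    have hfind := Nat.find_spec hex
    refine Set.mem_iUnion.mpr ⟨Nat.find hex, mem_Bm_iff.mpr ⟨hxR, hfind, ?_⟩⟩
    intro m' hm'
    exact not_lt.mp (Nat.find_min hex hm')

/-- Generic disjoint-union upper bound at one generation. -/
lemma lintegral_Bm_le {m : ℕ} (φ : ProductSpace n → ℝ≥0∞) {cst : ℝ≥0∞}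
    (h : ∀ j ∈ Sm f c R lam m,
      (∫⁻ x in rectSet (chRect R m j), φ x) ≤ cst * volume (rectSet (chRect R m j))) :
    (∫⁻ x in Bm f c R lam m, φ x) ≤ cst * volume (Bm f c R lam m) := by
  rw [Bm, Set.biUnion_eq_iUnion]
  have hdisj : Pairwise (Function.onFun Disjoint fun j : Sm f c R lam m => rectSet (chRect R m (j : _))) := by
    intro j j' hjj'
    rw [Function.onFun, Set.disjoint_left]
    intro x hx hx'
    exact hjj' (Subtype.ext ((mem_chRect_iff.mp hx).symm.trans (mem_chRect_iff.mp hx')))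
  rw [lintegral_iUnion (fun j => measurableSet_rectSet _) hdisj,
    measure_iUnion hdisj (fun j => measurableSet_rectSet _), ← ENNReal.tsum_mul_left]
  exact ENNReal.tsum_le_tsum fun j => h j j.2

/-- Generic disjoint-union lower bound at one generation. -/
lemma le_lintegral_Bm {m : ℕ} (φ : ProductSpace n → ℝ≥0∞) {cst : ℝ≥0∞}
    (h : ∀ j ∈ Sm f c R lam m,
      cst * volume (rectSet (chRect R m j)) ≤ ∫⁻ x in rectSet (chRect R m j), φ x) :
    cst * volume (Bm f c R lam m) ≤ ∫⁻ x in Bm f c R lam m, φ x := by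
  rw [Bm, Set.biUnion_eq_iUnion]
  have hdisj : Pairwise (Function.onFun Disjoint fun j : Sm f c R lam m => rectSet (chRect R m (j : _))) := by
    intro j j' hjj'
    rw [Function.onFun, Set.disjoint_left]
    intro x hx hx'
    exact hjj' (Subtype.ext ((mem_chRect_iff.mp hx).symm.trans (mem_chRect_iff.mp hx')))
  rw [lintegral_iUnion (fun j => measurableSet_rectSet _) hdisj,
    measure_iUnion hdisj (fun j => measurableSet_rectSet _), ← ENNReal.tsum_mul_left]
  exact ENNReal.tsum_le_tsum fun j => h j j.2

lemma volT_chRect (R : Rect n) (m : ℕ) (j : ∀ i, Fin (n i) → ℤ) :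
    (volume (rectSet (chRect R m j))).toReal =
      (∏ i, (R i).side ^ (n i)) / (2 ^ m) ^ (∑ i, n i) := by
  rw [volume_rectSet, prod_side_chRect,
    ENNReal.toReal_ofReal (div_nonneg (prod_side_pos R).le (by positivity))]

lemma inv_mul_le_of_le_mul {V cst I : ℝ≥0∞} (hV0 : V ≠ 0) (hVt : V ≠ ⊤)
    (h : I ≤ cst * V) : V⁻¹ * I ≤ cst := by
  calc V⁻¹ * I ≤ V⁻¹ * (cst * V) := mul_le_mul_right h _
    _ = cst * (V⁻¹ * V) := by ring
    _ = cst := by rw [ENNReal.inv_mul_cancel hV0 hVt, mul_one]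

end
end JN
namespace JN

open MeasureTheory ENNReal Filter Metric Set Topology NNReal

variable {d : ℕ} {n : Fin d → ℕ}

noncomputable section

lemma integral_le_of_avg_le {Q : Rect n} {u : ProductSpace n → ℝ} {c : ℝ}
    (hc : (⨍ y in rectSet Q, u y) ≤ c) :
    (∫ y in rectSet Q, u y) ≤ c * (volume (rectSet Q)).toReal := by
  rw [avg_rect_eq, inv_mul_le_iff₀ (volT_pos Q)] at hc
  linarith

lemma le_mul_of_inv_mul_le {V I X : ℝ≥0∞} (hV0 : V ≠ 0) (hVt : V ≠ ⊤)
    (h : V⁻¹ * I ≤ X) : I ≤ X * V := by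
  have h1 : I = V * (V⁻¹ * I) := by
    rw [← mul_assoc, ENNReal.mul_inv_cancel hV0 hVt, one_mul]
  rw [h1]
  calc V * (V⁻¹ * I) ≤ V * X := mul_le_mul_right h V
    _ = X * V := mul_comm _ _

/-- Core lemma: `L²` bound on oscillation for a bounded function with `bmo`-type control. -/
lemma core (hd : 1 ≤ d) {f : ProductSpace n → ℝ} (hf : LocallyIntegrable f volume)
    {M : ℝ} (hM : ∀ x, |f x| ≤ M) {b : ℝ} (hb0 : 0 < b)
    (hosc : ∀ Q : Rect n, (⨍ y in rectSet Q, |f y - ⨍ z in rectSet Q, f z|) ≤ b) :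
    ∀ Q : Rect n, (volume (rectSet Q))⁻¹ *
        ∫⁻ x in rectSet Q, ENNReal.ofReal ((f x - ⨍ y in rectSet Q, f y) ^ 2) ≤
      ENNReal.ofReal ((32 + 16 * 4 ^ (∑ i, n i)) * b ^ 2) := by
  set N : ℕ := ∑ i, n i with hN
  set X : ℝ≥0∞ := ⨆ Q : Rect n, (volume (rectSet Q))⁻¹ *
    ∫⁻ x in rectSet Q, ENNReal.ofReal ((f x - ⨍ y in rectSet Q, f y) ^ 2) with hX
  have hM0 : 0 ≤ M := le_trans (abs_nonneg _) (hM (fun _ _ => 0))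
  -- f is bounded, so X is finite
  have habs_le : ∀ (Q : Rect n) (x : ProductSpace n), |f x - ⨍ y in rectSet Q, f y| ≤ 2 * M := by
    intro Q x
    have h2 : (⨍ y in rectSet Q, |f y|) ≤ M := by
      have h3 := avg_mono (Q := Q) (integrableOn_rectSet hf Q).norm
        (integrableOn_const (volume_rectSet_ne_top Q))
        (fun y _ => hM y)
      rwa [avg_const] at h3
    have h1 : |⨍ y in rectSet Q, f y| ≤ M := le_trans (abs_avg_le f) h2
    calc |f x - ⨍ y in rectSet Q, f y| ≤ |f x| + |⨍ y in rectSet Q, f y| := abs_sub _ _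
      _ ≤ 2 * M := by linarith [hM x]
  have hXle : X ≤ ENNReal.ofReal ((2 * M) ^ 2) := by
    apply iSup_le
    intro Q
    apply inv_mul_le_of_le_mul (volume_rectSet_pos Q).ne' (volume_rectSet_ne_top Q)
    calc (∫⁻ x in rectSet Q, ENNReal.ofReal ((f x - ⨍ y in rectSet Q, f y) ^ 2))
        ≤ ∫⁻ _x in rectSet Q, ENNReal.ofReal ((2 * M) ^ 2) := by
          apply lintegral_mono
          intro x
          apply ENNReal.ofReal_le_ofReal
          have := abs_le.mp (habs_le Q x)
          exact sq_le_sq' this.1 this.2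
      _ = ENNReal.ofReal ((2 * M) ^ 2) * volume (rectSet Q) := setLIntegral_const _ _
  have hXt : X ≠ ⊤ := (lt_of_le_of_lt hXle ENNReal.ofReal_lt_top).ne
  set c2R : ℝ := 2 * ((2:ℝ) ^ N * (4 * b)) ^ 2 with hc2R
  have hc2R0 : 0 ≤ c2R := by positivity
  -- the key per-rectangle estimate
  have key : ∀ R : Rect n, (volume (rectSet R))⁻¹ *
      (∫⁻ x in rectSet R, ENNReal.ofReal ((f x - ⨍ y in rectSet R, f y) ^ 2)) ≤
      (2 * X + ENNReal.ofReal c2R) * ENNReal.ofReal (1/4 : ℝ) +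
        ENNReal.ofReal ((4 * b) ^ 2) := by
    intro R
    set fR : ℝ := ⨍ y in rectSet R, f y with hfR
    have hgint : ∀ Q : Rect n, IntegrableOn (fun y => |f y - fR|) (rectSet Q) volume :=
      integrableOn_abs_sub hf fR
    have hg0 : ∀ y : ProductSpace n, 0 ≤ |f y - fR| := fun y => abs_nonneg _
    set B : Set (ProductSpace n) := Bset f fR R (4 * b) with hB
    -- per-piece lower bound for the oscillation
    have piece1 : ∀ m : ℕ, ∀ j ∈ Sm f fR R (4 * b) m,
        ENNReal.ofReal (4 * b) * volume (rectSet (chRect R m j)) ≤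
          ∫⁻ x in rectSet (chRect R m j), ENNReal.ofReal |f x - fR| := by
      intro m j hj
      obtain ⟨x₀, hx₀R, hj0, hgt, _⟩ := hj
      have hQD : rectSet (chRect R m j) = Dm R m x₀ := by rw [Dm, hj0]
      rw [hQD]
      exact mul_vol_le_lintegral (hgint _) hg0 hgt.le
    -- per-piece upper bound for the square integral
    have piece2 : ∀ m : ℕ, ∀ j ∈ Sm f fR R (4 * b) m,
        (∫⁻ x in rectSet (chRect R m j), ENNReal.ofReal ((f x - fR) ^ 2)) ≤
          (2 * X + ENNReal.ofReal c2R) * volume (rectSet (chRect R m j)) := by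
      intro m j hj
      obtain ⟨x₀, hx₀R, hj0, hgt, hle⟩ := hj
      cases m with
      | zero =>
        exfalso
        have hD0 : Dm R 0 x₀ = rectSet R := D_zero hx₀R
        rw [hD0] at hgt
        have := hosc R
        rw [← hfR] at this
        linarith
      | succ m' =>
        set Q : Rect n := chRect R (m' + 1) j with hQ
        have hQD : rectSet Q = Dm R (m' + 1) x₀ := by rw [hQ, Dm, hj0]
        have hparent_le : (⨍ y in Dm R m' x₀, |f y - fR|) ≤ 4 * b :=
          hle m' (Nat.lt_succ_self m')
        have hsubP : rectSet Q ⊆ Dm R m' x₀ := hQD ▸ D_subset_of_le (Nat.le_succ m') x₀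
        set P : ℝ := ∏ i, (R i).side ^ (n i) with hP
        have hP0 : 0 < P := prod_side_pos R
        have hvolQ : (volume (rectSet Q)).toReal = P / (2 ^ (m' + 1)) ^ N :=
          volT_chRect R (m' + 1) j
        have hvolP : (volume (Dm R m' x₀)).toReal = P / (2 ^ m') ^ N :=
          volT_chRect R m' _
        have hratio : (volume (Dm R m' x₀)).toReal = 2 ^ N * (volume (rectSet Q)).toReal := by
          rw [hvolQ, hvolP]
          rw [show ((2:ℝ) ^ (m' + 1)) ^ N = (2 ^ m') ^ N * 2 ^ N by
            rw [pow_succ, mul_pow]]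
          have h2 : ((2:ℝ) ^ m') ^ N ≠ 0 := by positivity
          field_simp
        have havgQ : (⨍ y in rectSet Q, |f y - fR|) ≤ 2 ^ N * (4 * b) := by
          rw [avg_rect_eq]
          have hIle : (∫ y in rectSet Q, |f y - fR|) ≤ ∫ y in Dm R m' x₀, |f y - fR| :=
            setIntegral_mono_set (hgint _) (Eventually.of_forall hg0)
              (HasSubset.Subset.eventuallyLE hsubP)
          have hIP : (∫ y in Dm R m' x₀, |f y - fR|) ≤
              4 * b * (volume (Dm R m' x₀)).toReal :=
            integral_le_of_avg_le hparent_le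
          rw [inv_mul_le_iff₀ (volT_pos Q)]
          calc (∫ y in rectSet Q, |f y - fR|) ≤ 4 * b * (volume (Dm R m' x₀)).toReal :=
              le_trans hIle hIP
            _ = (volume (rectSet Q)).toReal * (2 ^ N * (4 * b)) := by rw [hratio]; ring
        set fQ : ℝ := ⨍ y in rectSet Q, f y with hfQ
        have hcQ : |fQ - fR| ≤ 2 ^ N * (4 * b) := by
          have h1 : fQ - fR = ⨍ y in rectSet Q, (f y - fR) :=
            (avg_sub_const (integrableOn_rectSet hf Q) fR).symm
          rw [h1]
          exact le_trans (abs_avg_le _) havgQ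
        have hpt : ∀ x : ProductSpace n, ENNReal.ofReal ((f x - fR) ^ 2) ≤
            ENNReal.ofReal (2 * (f x - fQ) ^ 2) + ENNReal.ofReal (2 * (fQ - fR) ^ 2) := by
          intro x
          rw [← ENNReal.ofReal_add (by positivity) (by positivity)]
          apply ENNReal.ofReal_le_ofReal
          nlinarith [sq_nonneg ((f x - fQ) - (fQ - fR))]
        calc (∫⁻ x in rectSet Q, ENNReal.ofReal ((f x - fR) ^ 2))
            ≤ ∫⁻ x in rectSet Q,
              (ENNReal.ofReal (2 * (f x - fQ) ^ 2) + ENNReal.ofReal (2 * (fQ - fR) ^ 2)) :=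
              lintegral_mono hpt
          _ = (∫⁻ x in rectSet Q, ENNReal.ofReal (2 * (f x - fQ) ^ 2)) +
              ENNReal.ofReal (2 * (fQ - fR) ^ 2) * volume (rectSet Q) := by
              rw [lintegral_add_right _ measurable_const, setLIntegral_const]
          _ ≤ 2 * X * volume (rectSet Q) + ENNReal.ofReal c2R * volume (rectSet Q) := by
              apply add_le_add
              · have he : (∫⁻ x in rectSet Q, ENNReal.ofReal (2 * (f x - fQ) ^ 2)) =
                    2 * ∫⁻ x in rectSet Q, ENNReal.ofReal ((f x - fQ) ^ 2) := by
                  rw [← lintegral_const_mul' 2 _ (by norm_num)]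
                  apply lintegral_congr
                  intro x
                  rw [ENNReal.ofReal_mul (by norm_num : (0:ℝ) ≤ 2)]
                  norm_num
                rw [he, mul_assoc]
                apply mul_le_mul_right
                apply le_mul_of_inv_mul_le (volume_rectSet_pos Q).ne'
                  (volume_rectSet_ne_top Q)
                exact le_iSup (fun Q' : Rect n => (volume (rectSet Q'))⁻¹ *
                  ∫⁻ x in rectSet Q', ENNReal.ofReal ((f x - ⨍ y in rectSet Q', f y) ^ 2)) Q
              · apply mul_le_mul_left
                apply ENNReal.ofReal_le_ofReal
                have h1 := abs_le.mp hcQ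
                have h2 : (fQ - fR) ^ 2 ≤ (2 ^ N * (4 * b)) ^ 2 := sq_le_sq' h1.1 h1.2
                rw [hc2R]
                linarith
          _ = (2 * X + ENNReal.ofReal c2R) * volume (rectSet Q) := (add_mul _ _ _).symm
    -- sums over the bad set
    have hIB : (∫⁻ x in B, ENNReal.ofReal ((f x - fR) ^ 2)) ≤
        (2 * X + ENNReal.ofReal c2R) * volume B := by
      rw [hB, Bset, lintegral_iUnion (fun _ => measurableSet_Bm) Bm_disjoint,
        measure_iUnion Bm_disjoint (fun _ => measurableSet_Bm), ← ENNReal.tsum_mul_left]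
      exact ENNReal.tsum_le_tsum fun m => lintegral_Bm_le _ (piece2 m)
    have hgB : ENNReal.ofReal (4 * b) * volume B ≤
        ∫⁻ x in B, ENNReal.ofReal |f x - fR| := by
      rw [hB, Bset, lintegral_iUnion (fun _ => measurableSet_Bm) Bm_disjoint,
        measure_iUnion Bm_disjoint (fun _ => measurableSet_Bm), ← ENNReal.tsum_mul_left]
      exact ENNReal.tsum_le_tsum fun m => le_lintegral_Bm _ (piece1 m)
    -- total mass of the bad set
    have hgR : (∫⁻ x in rectSet R, ENNReal.ofReal |f x - fR|) ≤
        ENNReal.ofReal b * volume (rectSet R) :=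
      lintegral_le_of_avg_le (hgint R) hg0 (hosc R)
    have hvolB : volume B ≤ ENNReal.ofReal (1/4 : ℝ) * volume (rectSet R) := by
      have h1 : ENNReal.ofReal (4 * b) * volume B ≤ ENNReal.ofReal b * volume (rectSet R) :=
        le_trans hgB (le_trans (lintegral_mono_set Bset_subset) hgR)
      have h4b : (0:ℝ) < 4 * b := by linarith
      have h2 : volume B = (ENNReal.ofReal (4 * b))⁻¹ * (ENNReal.ofReal (4 * b) * volume B) := by
        rw [← mul_assoc, ENNReal.inv_mul_cancel (ENNReal.ofReal_pos.mpr h4b).ne' ENNReal.ofReal_ne_top, one_mul]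
      rw [h2]
      calc (ENNReal.ofReal (4 * b))⁻¹ * (ENNReal.ofReal (4 * b) * volume B)
          ≤ (ENNReal.ofReal (4 * b))⁻¹ * (ENNReal.ofReal b * volume (rectSet R)) :=
            mul_le_mul_right h1 _
        _ = ((ENNReal.ofReal (4 * b))⁻¹ * ENNReal.ofReal b) * volume (rectSet R) := by
            rw [mul_assoc]
        _ = ENNReal.ofReal (1/4 : ℝ) * volume (rectSet R) := by
            rw [← ENNReal.ofReal_inv_of_pos h4b, ← ENNReal.ofReal_mul (by positivity)]
            congr 2
            field_simp
    -- the good set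
    have hgood : ∀ᵐ x : ProductSpace n,
        x ∈ rectSet R \ B → (f x - fR) ^ 2 ≤ (4 * b) ^ 2 := by
      filter_upwards [ae_tendsto_D hd R (locallyIntegrable_abs_sub hf fR)] with x htend hxG
      have hnot : ∀ m : ℕ,
          (⨍ y in rectSet (chRect R m (idx R m x)), |f y - fR|) ≤ 4 * b := by
        intro m
        by_contra hcon
        exact hxG.2 (mem_Bset_iff.mpr ⟨hxG.1, m, not_le.mp hcon⟩)
      have hlim : |f x - fR| ≤ 4 * b := le_of_tendsto htend (Eventually.of_forall hnot)
      have h1 := abs_le.mp hlim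
      exact sq_le_sq' h1.1 h1.2
    have hIG : (∫⁻ x in rectSet R \ B, ENNReal.ofReal ((f x - fR) ^ 2)) ≤
        ENNReal.ofReal ((4 * b) ^ 2) * volume (rectSet R) := by
      have hmeas : MeasurableSet (rectSet R \ B) :=
        (measurableSet_rectSet R).diff measurableSet_Bset
      calc (∫⁻ x in rectSet R \ B, ENNReal.ofReal ((f x - fR) ^ 2))
          ≤ ∫⁻ _x in rectSet R \ B, ENNReal.ofReal ((4 * b) ^ 2) := by
            apply lintegral_mono_ae
            rw [ae_restrict_iff' hmeas]
            filter_upwards [hgood] with x hx hxmem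
            exact ENNReal.ofReal_le_ofReal (hx hxmem)
        _ = ENNReal.ofReal ((4 * b) ^ 2) * volume (rectSet R \ B) := setLIntegral_const _ _
        _ ≤ ENNReal.ofReal ((4 * b) ^ 2) * volume (rectSet R) :=
            mul_le_mul_right (measure_mono Set.diff_subset) _
    -- combine
    have hsplit : (∫⁻ x in rectSet R, ENNReal.ofReal ((f x - fR) ^ 2)) =
        (∫⁻ x in B, ENNReal.ofReal ((f x - fR) ^ 2)) +
          ∫⁻ x in rectSet R \ B, ENNReal.ofReal ((f x - fR) ^ 2) := by
      rw [← lintegral_inter_add_diff _ (rectSet R) measurableSet_Bset,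
        Set.inter_eq_right.mpr Bset_subset]
    apply inv_mul_le_of_le_mul (volume_rectSet_pos R).ne' (volume_rectSet_ne_top R)
    rw [hsplit]
    calc (∫⁻ x in B, ENNReal.ofReal ((f x - fR) ^ 2)) +
          (∫⁻ x in rectSet R \ B, ENNReal.ofReal ((f x - fR) ^ 2))
        ≤ (2 * X + ENNReal.ofReal c2R) * (ENNReal.ofReal (1/4 : ℝ) * volume (rectSet R)) +
          ENNReal.ofReal ((4 * b) ^ 2) * volume (rectSet R) :=
          add_le_add (le_trans hIB (mul_le_mul_right hvolB _)) hIG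
      _ = ((2 * X + ENNReal.ofReal c2R) * ENNReal.ofReal (1/4 : ℝ) +
          ENNReal.ofReal ((4 * b) ^ 2)) * volume (rectSet R) := by ring
  -- absorption
  have hXle2 : X ≤ (2 * X + ENNReal.ofReal c2R) * ENNReal.ofReal (1/4 : ℝ) +
      ENNReal.ofReal ((4 * b) ^ 2) := iSup_le key
  have hfin : (2 * X + ENNReal.ofReal c2R) * ENNReal.ofReal (1/4 : ℝ) +
      ENNReal.ofReal ((4 * b) ^ 2) ≠ ⊤ := by
    apply ENNReal.add_ne_top.mpr
    constructor
    · exact ENNReal.mul_ne_top (ENNReal.add_ne_top.mpr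
        ⟨ENNReal.mul_ne_top (by norm_num) hXt, ENNReal.ofReal_ne_top⟩) ENNReal.ofReal_ne_top
    · exact ENNReal.ofReal_ne_top
  have htr := ENNReal.toReal_mono hfin hXle2
  have hexp : ((2 * X + ENNReal.ofReal c2R) * ENNReal.ofReal (1/4 : ℝ) +
      ENNReal.ofReal ((4 * b) ^ 2)).toReal =
      (2 * X.toReal + c2R) * (1/4) + (4 * b) ^ 2 := by
    rw [ENNReal.toReal_add (ENNReal.mul_ne_top (ENNReal.add_ne_top.mpr
        ⟨ENNReal.mul_ne_top (by norm_num) hXt, ENNReal.ofReal_ne_top⟩) ENNReal.ofReal_ne_top)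
      ENNReal.ofReal_ne_top,
      ENNReal.toReal_mul, ENNReal.toReal_add (ENNReal.mul_ne_top (by norm_num) hXt)
        ENNReal.ofReal_ne_top,
      ENNReal.toReal_mul, ENNReal.toReal_ofReal hc2R0,
      ENNReal.toReal_ofReal (by norm_num : (0:ℝ) ≤ 1/4),
      ENNReal.toReal_ofReal (by positivity : (0:ℝ) ≤ (4*b)^2)]
    norm_num
  rw [hexp] at htr
  have h4N : ((2:ℝ) ^ N) ^ 2 = 4 ^ N := by
    rw [← pow_mul, mul_comm, pow_mul]
    norm_num
  have hc2R' : c2R = 32 * 4 ^ N * b ^ 2 := by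
    rw [hc2R, mul_pow, h4N]
    ring
  have hfinal : X.toReal ≤ (32 + 16 * 4 ^ N) * b ^ 2 := by
    rw [hc2R'] at htr
    nlinarith [pow_pos (by norm_num : (0:ℝ) < 4) N]
  intro Q
  calc (volume (rectSet Q))⁻¹ *
      (∫⁻ x in rectSet Q, ENNReal.ofReal ((f x - ⨍ y in rectSet Q, f y) ^ 2))
      ≤ X := le_iSup (fun Q' : Rect n => (volume (rectSet Q'))⁻¹ *
        ∫⁻ x in rectSet Q', ENNReal.ofReal ((f x - ⨍ y in rectSet Q', f y) ^ 2)) Q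
    _ = ENNReal.ofReal X.toReal := (ENNReal.ofReal_toReal hXt).symm
    _ ≤ ENNReal.ofReal ((32 + 16 * 4 ^ N) * b ^ 2) := ENNReal.ofReal_le_ofReal hfinal

end
end JN
namespace JN

open MeasureTheory ENNReal Filter Metric Set Topology NNReal

variable {d : ℕ} {n : Fin d → ℕ}

noncomputable section

lemma avg_const_sub {Q : Rect n} {u : ProductSpace n → ℝ} (hu : IntegrableOn u (rectSet Q))
    (c : ℝ) : (⨍ y in rectSet Q, (c - u y)) = c - ⨍ y in rectSet Q, u y := by
  rw [avg_rect_eq, avg_rect_eq,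
    integral_sub (integrableOn_const (C := c) (volume_rectSet_ne_top Q)) hu,
    setIntegral_const, measureReal_def, smul_eq_mul, mul_sub, ← mul_assoc,
    inv_mul_cancel₀ (volT_pos Q).ne', one_mul]

lemma avg_add_const {Q : Rect n} {u : ProductSpace n → ℝ} (hu : IntegrableOn u (rectSet Q))
    (c : ℝ) : (⨍ y in rectSet Q, (u y + c)) = (⨍ y in rectSet Q, u y) + c := by
  have h := avg_sub_const hu (-c)
  simpa [sub_neg_eq_add] using h

/-- Truncation of a function at height `k`. -/
def trunc (k : ℝ) (f : ProductSpace n → ℝ) : ProductSpace n → ℝ :=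
  fun x => max (min (f x) k) (-k)

lemma min_lip (k a b : ℝ) : |min a k - min b k| ≤ |a - b| := by
  rcases le_total a k with h | h <;> rcases le_total b k with h' | h'
  · rw [min_eq_left h, min_eq_left h']
  · rw [min_eq_left h, min_eq_right h', abs_of_nonpos (by linarith),
      abs_of_nonpos (by linarith)]
    linarith
  · rw [min_eq_right h, min_eq_left h', abs_of_nonneg (by linarith),
      abs_of_nonneg (by linarith)]
    linarith
  · rw [min_eq_right h, min_eq_right h']
    simp [abs_nonneg]

lemma clamp_lip (k a b : ℝ) : |max (min a k) (-k) - max (min b k) (-k)| ≤ |a - b| :=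
  le_trans (abs_max_sub_max_le_abs _ _ _) (min_lip k a b)

lemma abs_trunc_le_self {k : ℝ} (hk : 0 ≤ k) (f : ProductSpace n → ℝ) (x : ProductSpace n) :
    |trunc k f x| ≤ |f x| := by
  unfold trunc
  rcases le_total (f x) 0 with h | h
  · rw [min_eq_left (le_trans h hk), abs_le]
    constructor
    · rw [abs_of_nonpos h, neg_neg]; exact le_max_left _ _
    · exact max_le (le_trans h (abs_nonneg _)) (by linarith [abs_nonneg (f x)])
  · rw [abs_le]
    constructor
    · have h1 : (0:ℝ) ≤ min (f x) k := le_min h hk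
      have h2 := le_max_left (min (f x) k) (-k)
      linarith [abs_nonneg (f x)]
    · exact max_le (le_trans (min_le_left _ _) (le_abs_self _))
        (by linarith [abs_nonneg (f x)])

lemma abs_trunc_le {k : ℝ} (hk : 0 ≤ k) (f : ProductSpace n → ℝ) (x : ProductSpace n) :
    |trunc k f x| ≤ k := by
  unfold trunc
  rw [abs_le]
  exact ⟨le_max_right _ _, max_le (min_le_right _ _) (by linarith)⟩

lemma continuous_clamp (k : ℝ) : Continuous (fun t : ℝ => max (min t k) (-k)) := by
  continuity

lemma aesm_trunc {k : ℝ} {f : ProductSpace n → ℝ} {μ : Measure (ProductSpace n)}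
    (hf : AEStronglyMeasurable f μ) : AEStronglyMeasurable (trunc k f) μ :=
  (continuous_clamp k).comp_aestronglyMeasurable hf

lemma locallyIntegrable_trunc {k : ℝ} (hk : 0 ≤ k) {f : ProductSpace n → ℝ}
    (hf : LocallyIntegrable f volume) : LocallyIntegrable (trunc k f) volume := by
  rw [MeasureTheory.locallyIntegrable_iff]
  intro K hK
  apply Integrable.mono (hf.integrableOn_isCompact hK).norm
    (aesm_trunc hf.aestronglyMeasurable.restrict)
  filter_upwards with x
  simp only [Real.norm_eq_abs, abs_abs]
  exact abs_trunc_le_self hk f x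

lemma trunc_tendsto (f : ProductSpace n → ℝ) (x : ProductSpace n) :
    Tendsto (fun k : ℕ => trunc k f x) atTop (𝓝 (f x)) := by
  apply tendsto_atTop_of_eventually_const (i₀ := ⌈|f x|⌉₊)
  intro k hk
  have h1 : |f x| ≤ (k : ℝ) := le_trans (Nat.le_ceil _) (by exact_mod_cast hk)
  have h2 := abs_le.mp h1
  unfold trunc
  rw [min_eq_left h2.2, max_eq_left h2.1]

/-- The oscillation bound passes to truncations, with a factor `2`. -/
lemma trunc_osc {f : ProductSpace n → ℝ} (hf : LocallyIntegrable f volume) {b : ℝ}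
    (hosc : ∀ Q : Rect n, (⨍ y in rectSet Q, |f y - ⨍ z in rectSet Q, f z|) ≤ b)
    {k : ℝ} (hk : 0 ≤ k) :
    ∀ Q : Rect n,
      (⨍ y in rectSet Q, |trunc k f y - ⨍ z in rectSet Q, trunc k f z|) ≤ 2 * b := by
  intro Q
  set g := trunc k f with hg
  set c := ⨍ z in rectSet Q, f z with hc
  set gQ := ⨍ z in rectSet Q, g z with hgQ
  have hfc : IntegrableOn (fun y => |f y - c|) (rectSet Q) volume :=
    integrableOn_abs_sub hf c Q
  have hgi : IntegrableOn g (rectSet Q) volume :=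
    integrableOn_rectSet (locallyIntegrable_trunc hk hf) Q
  have hosc' : (⨍ y in rectSet Q, |f y - c|) ≤ b := hosc Q
  have hpt : ∀ x, |g x - gQ| ≤ |f x - c| + b := by
    intro x
    have h1 : g x - gQ = ⨍ y in rectSet Q, (g x - g y) := (avg_const_sub hgi (g x)).symm
    have h3 : (⨍ y in rectSet Q, |g x - g y|) ≤
        ⨍ y in rectSet Q, (|f y - c| + |f x - c|) := by
      apply avg_mono
      · exact ((integrableOn_const (C := g x) (volume_rectSet_ne_top Q)).sub hgi).norm
      · exact hfc.add (integrableOn_const (C := |f x - c|) (volume_rectSet_ne_top Q))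
      · intro y _
        calc |g x - g y| ≤ |f x - f y| := clamp_lip k (f x) (f y)
          _ ≤ |f y - c| + |f x - c| := by
            have h6 : f x - f y = (f x - c) - (f y - c) := by ring
            rw [h6]
            calc |(f x - c) - (f y - c)| ≤ |f x - c| + |f y - c| := abs_sub _ _
              _ = |f y - c| + |f x - c| := add_comm _ _
    have h7 : (⨍ y in rectSet Q, (|f y - c| + |f x - c|)) =
        (⨍ y in rectSet Q, |f y - c|) + |f x - c| := avg_add_const hfc _
    rw [h1]
    calc |⨍ y in rectSet Q, (g x - g y)| ≤ ⨍ y in rectSet Q, |g x - g y| := abs_avg_le _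
      _ ≤ ⨍ y in rectSet Q, (|f y - c| + |f x - c|) := h3
      _ = (⨍ y in rectSet Q, |f y - c|) + |f x - c| := h7
      _ ≤ |f x - c| + b := by linarith
  have hint1 : IntegrableOn (fun x => |g x - gQ|) (rectSet Q) volume :=
    (hgi.sub (integrableOn_const (C := gQ) (volume_rectSet_ne_top Q))).norm
  have hint2 : IntegrableOn (fun x => |f x - c| + b) (rectSet Q) volume :=
    hfc.add (integrableOn_const (C := b) (volume_rectSet_ne_top Q))
  calc (⨍ x in rectSet Q, |g x - gQ|) ≤ ⨍ x in rectSet Q, (|f x - c| + b) :=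
      avg_mono hint1 hint2 (fun x _ => hpt x)
    _ = (⨍ x in rectSet Q, |f x - c|) + b := avg_add_const hfc b
    _ ≤ 2 * b := by linarith

/-- The main per-rectangle `L²` bound, for a general locally integrable function. -/
lemma bmo2_rect_bound (hd : 1 ≤ d) {f : ProductSpace n → ℝ}
    (hf : LocallyIntegrable f volume) {b : ℝ} (hb0 : 0 < b)
    (hosc : ∀ Q : Rect n, (⨍ y in rectSet Q, |f y - ⨍ z in rectSet Q, f z|) ≤ b) :
    ∀ Q : Rect n, (volume (rectSet Q))⁻¹ *
        (∫⁻ x in rectSet Q, ENNReal.ofReal ((f x - ⨍ y in rectSet Q, f y) ^ 2)) ≤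
      ENNReal.ofReal ((32 + 16 * 4 ^ (∑ i, n i)) * (2 * b) ^ 2) := by
  intro Q
  have hcore : ∀ k : ℕ, ∀ Q' : Rect n, (volume (rectSet Q'))⁻¹ *
      (∫⁻ x in rectSet Q',
        ENNReal.ofReal ((trunc k f x - ⨍ y in rectSet Q', trunc k f y) ^ 2)) ≤
      ENNReal.ofReal ((32 + 16 * 4 ^ (∑ i, n i)) * (2 * b) ^ 2) := fun k =>
    core hd (locallyIntegrable_trunc (Nat.cast_nonneg k) hf)
      (abs_trunc_le (Nat.cast_nonneg k) f) (by linarith)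
      (trunc_osc hf hosc (Nat.cast_nonneg k))
  have hfiQ : IntegrableOn f (rectSet Q) volume := integrableOn_rectSet hf Q
  have hcQ : Tendsto (fun k : ℕ => ⨍ y in rectSet Q, trunc k f y) atTop
      (𝓝 (⨍ y in rectSet Q, f y)) := by
    simp only [avg_rect_eq]
    apply Filter.Tendsto.const_mul
    apply tendsto_integral_of_dominated_convergence (fun y => |f y|)
    · intro k; exact aesm_trunc hf.aestronglyMeasurable.restrict
    · simpa [Real.norm_eq_abs] using hfiQ.norm
    · intro k
      filter_upwards with y
      rw [Real.norm_eq_abs]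
      exact abs_trunc_le_self (Nat.cast_nonneg k) f y
    · filter_upwards with y
      exact trunc_tendsto f y
  have hpt : ∀ x : ProductSpace n, Tendsto
      (fun k : ℕ => ENNReal.ofReal ((trunc k f x - ⨍ y in rectSet Q, trunc k f y) ^ 2))
      atTop (𝓝 (ENNReal.ofReal ((f x - ⨍ y in rectSet Q, f y) ^ 2))) := by
    intro x
    exact ENNReal.tendsto_ofReal (((trunc_tendsto f x).sub hcQ).pow 2)
  have hmeas : ∀ k : ℕ, AEMeasurable
      (fun x => ENNReal.ofReal ((trunc k f x - ⨍ y in rectSet Q, trunc k f y) ^ 2))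
      (volume.restrict (rectSet Q)) := by
    intro k
    have h1 : AEMeasurable (trunc k f) (volume.restrict (rectSet Q)) :=
      (aesm_trunc hf.aestronglyMeasurable.restrict).aemeasurable
    exact ((h1.sub aemeasurable_const).pow_const 2).ennreal_ofReal
  apply inv_mul_le_of_le_mul (volume_rectSet_pos Q).ne' (volume_rectSet_ne_top Q)
  have hfatou : (∫⁻ x in rectSet Q, ENNReal.ofReal ((f x - ⨍ y in rectSet Q, f y) ^ 2)) ≤
      liminf (fun k : ℕ => ∫⁻ x in rectSet Q,
        ENNReal.ofReal ((trunc k f x - ⨍ y in rectSet Q, trunc k f y) ^ 2)) atTop := by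
    calc (∫⁻ x in rectSet Q, ENNReal.ofReal ((f x - ⨍ y in rectSet Q, f y) ^ 2))
        = ∫⁻ x in rectSet Q, liminf (fun k : ℕ =>
            ENNReal.ofReal ((trunc k f x - ⨍ y in rectSet Q, trunc k f y) ^ 2)) atTop :=
          lintegral_congr fun x => ((hpt x).liminf_eq).symm
      _ ≤ _ := lintegral_liminf_le' hmeas
  refine le_trans hfatou ?_
  apply liminf_le_of_frequently_le'
  apply Frequently.of_forall
  intro k
  exact le_mul_of_inv_mul_le (volume_rectSet_pos Q).ne' (volume_rectSet_ne_top Q) (hcore k Q)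

end
end JN

open MeasureTheory ENNReal Filter Metric Set Topology NNReal JN in
/-- John–Nirenberg for little `bmo`: there is `C > 0` depending only
on the dimensions such that every locally integrable `f` with finite little `bmo` norm
is in `L²_loc` and satisfies `‖f‖_{bmo,2} ≤ C‖f‖_bmo`. -/
theorem statement12 {d : ℕ} (hd : 1 ≤ d) (n : Fin d → ℕ) (hn : ∀ i, 1 ≤ n i) :
    ∃ C > (0 : ℝ), ∀ f : ProductSpace n → ℝ, LocallyIntegrable f volume → bmo1 f ≠ ⊤ →
      (∀ K : Set (ProductSpace n), IsCompact K → IntegrableOn (fun x => f x ^ 2) K) ∧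
        bmo2 f ≤ ENNReal.ofReal C * bmo1 f := by
  classical
  set N : ℕ := ∑ i, n i with hN
  set K : ℝ := 32 + 16 * 4 ^ N with hK
  have hK0 : 0 < K := by positivity
  have hsqrtK : 0 < Real.sqrt K := Real.sqrt_pos.mpr hK0
  refine ⟨2 * Real.sqrt K, by positivity, ?_⟩
  intro f hf hbmo
  -- the oscillation bound, for every ε > 0
  have hosc : ∀ ε : ℝ, 0 < ε → ∀ Q : Rect n,
      (⨍ y in rectSet Q, |f y - ⨍ z in rectSet Q, f z|) ≤ (bmo1 f).toReal + ε := by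
    intro ε hε Q
    set c : ℝ := (bmo1 f).toReal + ε with hc
    have hc0 : 0 ≤ c := add_nonneg ENNReal.toReal_nonneg hε.le
    have h1 : (volume (rectSet Q))⁻¹ *
        (∫⁻ x in rectSet Q, ENNReal.ofReal |f x - ⨍ y in rectSet Q, f y|) ≤ bmo1 f :=
      le_iSup (fun R : Rect n => (volume (rectSet R))⁻¹ *
        ∫⁻ x in rectSet R, ENNReal.ofReal |f x - ⨍ y in rectSet R, f y|) Q
    have h2 : bmo1 f ≤ ENNReal.ofReal c :=
      calc bmo1 f = ENNReal.ofReal ((bmo1 f).toReal) := (ENNReal.ofReal_toReal hbmo).symm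
        _ ≤ ENNReal.ofReal c := ENNReal.ofReal_le_ofReal (by rw [hc]; linarith)
    have h4 : (∫⁻ x in rectSet Q, ENNReal.ofReal |f x - ⨍ y in rectSet Q, f y|) ≤
        ENNReal.ofReal c * volume (rectSet Q) :=
      le_mul_of_inv_mul_le (volume_rectSet_pos Q).ne' (volume_rectSet_ne_top Q)
        (le_trans h1 h2)
    rw [lintegral_ofReal_rect (integrableOn_abs_sub hf _ Q) (fun y => abs_nonneg _),
      show ENNReal.ofReal c * volume (rectSet Q) =
        ENNReal.ofReal (c * (volume (rectSet Q)).toReal) by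
          rw [ENNReal.ofReal_mul hc0, ENNReal.ofReal_toReal (volume_rectSet_ne_top Q)]] at h4
    have h5 : (∫ y in rectSet Q, |f y - ⨍ z in rectSet Q, f z|) ≤
        c * (volume (rectSet Q)).toReal :=
      (ENNReal.ofReal_le_ofReal_iff (mul_nonneg hc0 ENNReal.toReal_nonneg)).mp h4
    rw [avg_rect_eq, inv_mul_le_iff₀ (volT_pos Q)]
    linarith [h5, mul_comm c ((volume (rectSet Q)).toReal)]
  have hmain : ∀ ε : ℝ, 0 < ε → ∀ Q : Rect n, (volume (rectSet Q))⁻¹ *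
      (∫⁻ x in rectSet Q, ENNReal.ofReal ((f x - ⨍ y in rectSet Q, f y) ^ 2)) ≤
      ENNReal.ofReal (K * (2 * ((bmo1 f).toReal + ε)) ^ 2) := by
    intro ε hε
    exact bmo2_rect_bound hd hf (add_pos_of_nonneg_of_pos ENNReal.toReal_nonneg hε)
      (hosc ε hε)
  constructor
  · -- local square integrability
    intro Kc hKc
    obtain ⟨r, hr⟩ := hKc.isBounded.subset_closedBall 0
    set r0 : ℝ := max r 0 with hr0
    have hr00 : (0:ℝ) ≤ r0 := le_max_right r 0
    set R₀ : Rect n := fun _ =>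
      ⟨fun _ => -(r0 + 1), 2 * (r0 + 1), by linarith⟩ with hR₀
    have hsub : Kc ⊆ rectSet R₀ := by
      intro y hy
      have h1 : y ∈ closedBall (0 : ProductSpace n) r0 :=
        closedBall_subset_closedBall (le_max_left r 0) (hr hy)
      have h2 : dist y (0 : ProductSpace n) ≤ r0 := mem_closedBall.mp h1
      intro i t
      have h3 := (dist_pi_le_iff hr00).mp ((dist_pi_le_iff hr00).mp h2 i) t
      rw [Real.dist_eq] at h3
      simp only [Pi.zero_apply, sub_zero] at h3
      have h5 := abs_le.mp h3
      constructor
      · simp only [hR₀]; linarith [h5.1]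
      · simp only [hR₀]; linarith [h5.2]
    set cQ : ℝ := ⨍ y in rectSet R₀, f y with hcQ
    have hfin : (∫⁻ x in rectSet R₀, ENNReal.ofReal ((f x - cQ) ^ 2)) < ⊤ := by
      calc (∫⁻ x in rectSet R₀, ENNReal.ofReal ((f x - cQ) ^ 2))
          ≤ ENNReal.ofReal (K * (2 * ((bmo1 f).toReal + 1)) ^ 2) * volume (rectSet R₀) :=
            le_mul_of_inv_mul_le (volume_rectSet_pos R₀).ne' (volume_rectSet_ne_top R₀)
              (hmain 1 one_pos R₀)
        _ < ⊤ := ENNReal.mul_lt_top ENNReal.ofReal_lt_top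
            (volume_rectSet_ne_top R₀).lt_top
    have hsqm : AEStronglyMeasurable (fun x => (f x - cQ) ^ 2)
        (volume.restrict (rectSet R₀)) :=
      (continuous_pow 2).comp_aestronglyMeasurable
        (hf.aestronglyMeasurable.restrict.sub aestronglyMeasurable_const)
    have hsq : IntegrableOn (fun x => (f x - cQ) ^ 2) (rectSet R₀) volume := by
      refine ⟨hsqm, ?_⟩
      rw [hasFiniteIntegral_iff_ofReal (Eventually.of_forall fun x => sq_nonneg _)]
      exact hfin
    have hfi : IntegrableOn f (rectSet R₀) volume := integrableOn_rectSet hf R₀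
    have hsq2 : IntegrableOn (fun x => f x ^ 2) (rectSet R₀) volume := by
      have h6 := (hsq.add (hfi.const_mul (2 * cQ))).sub
        (integrableOn_const (C := cQ ^ 2) (volume_rectSet_ne_top R₀))
      apply h6.congr
      filter_upwards with x
      simp only [Pi.add_apply, Pi.sub_apply]
      ring
    exact hsq2.mono_set hsub
  · -- the bmo₂ bound
    have hstep : ∀ ε : ℝ, 0 < ε → bmo2 f ≤
        ENNReal.ofReal (2 * Real.sqrt K) * ENNReal.ofReal ((bmo1 f).toReal + ε) := by
      intro ε hε
      have hu0 : (0:ℝ) ≤ (bmo1 f).toReal + ε := add_nonneg ENNReal.toReal_nonneg hε.le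
      apply iSup_le
      intro R
      have h1 := hmain ε hε R
      calc ((volume (rectSet R))⁻¹ *
            ∫⁻ x in rectSet R, ENNReal.ofReal ((f x - ⨍ y in rectSet R, f y) ^ 2))
              ^ (1/2 : ℝ)
          ≤ (ENNReal.ofReal (K * (2 * ((bmo1 f).toReal + ε)) ^ 2)) ^ (1/2 : ℝ) :=
            ENNReal.rpow_le_rpow h1 (by norm_num)
        _ = ENNReal.ofReal ((K * (2 * ((bmo1 f).toReal + ε)) ^ 2) ^ (1/2 : ℝ)) :=
            ENNReal.ofReal_rpow_of_nonneg (by positivity) (by norm_num)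
        _ = ENNReal.ofReal ((2 * Real.sqrt K) * ((bmo1 f).toReal + ε)) := by
            congr 1
            have h := Real.sq_sqrt hK0.le
            rw [← Real.sqrt_eq_rpow,
              show K * (2 * ((bmo1 f).toReal + ε)) ^ 2 =
                ((2 * Real.sqrt K) * ((bmo1 f).toReal + ε)) ^ 2 from by
                  linear_combination (-4 * ((bmo1 f).toReal + ε) ^ 2) * h,
              Real.sqrt_sq (by positivity)]
        _ = ENNReal.ofReal (2 * Real.sqrt K) * ENNReal.ofReal ((bmo1 f).toReal + ε) :=
            ENNReal.ofReal_mul (by positivity)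
    apply ENNReal.le_of_forall_pos_le_add
    intro ε' hε' _
    set Cr : ℝ := 2 * Real.sqrt K with hCr
    have hCr0 : 0 < Cr := by positivity
    have hε : (0:ℝ) < (ε' : ℝ) / Cr := div_pos (by exact_mod_cast hε') hCr0
    calc bmo2 f ≤ ENNReal.ofReal Cr * ENNReal.ofReal ((bmo1 f).toReal + (ε' : ℝ) / Cr) :=
        hstep _ hε
      _ = ENNReal.ofReal Cr *
          (ENNReal.ofReal ((bmo1 f).toReal) + ENNReal.ofReal ((ε' : ℝ) / Cr)) := by
          rw [ENNReal.ofReal_add ENNReal.toReal_nonneg hε.le]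
      _ = ENNReal.ofReal Cr * bmo1 f + ENNReal.ofReal Cr * ENNReal.ofReal ((ε' : ℝ) / Cr) := by
          rw [ENNReal.ofReal_toReal hbmo, mul_add]
      _ = ENNReal.ofReal Cr * bmo1 f + ↑ε' := by
          rw [← ENNReal.ofReal_mul hCr0.le, mul_div_cancel₀ _ hCr0.ne',
            ENNReal.ofReal_coe_nnreal]
end

section
/- Let d ≥ 1, n₁,…,n_d ≥ 1, n = n₁+…+n_d, and let f ∈ L¹_loc(ℝⁿ). Then f has finite little bmo norm if and only if there is a constant C such that for every i = 1,…,d and almost every choice of the variables (x_j)_{j≠i}, the one-variable function x_i ↦ f(x₁,…,x_d) has one-parameter BMO(ℝ^{nᵢ}) norm at most C. Moreover the two quantities are equivalent: the least such C satisfies C ≤ c·‖f‖_bmo and ‖f‖_bmo ≤ c·C for a constant c depending only on d. -/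
open MeasureTheory ENNReal Filter

section Aux13
namespace S13
open Function Set Metric MeasureTheory ENNReal Filter

variable {d : ℕ} {n : Fin d → ℕ}

theorem cubeSet_eq_pi {m : ℕ} (Q : Cube m) :
    cubeSet Q = Set.pi Set.univ (fun k => Set.Ico (Q.corner k) (Q.corner k + Q.side)) := by
  ext x; simp [cubeSet, Set.mem_pi, Set.mem_Ico]

theorem measurableSet_cubeSet {m : ℕ} (Q : Cube m) : MeasurableSet (cubeSet Q) := by
  rw [cubeSet_eq_pi]; exact MeasurableSet.univ_pi fun k => measurableSet_Ico

theorem volume_cubeSet {m : ℕ} (Q : Cube m) :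
    volume (cubeSet Q) = ENNReal.ofReal Q.side ^ m := by
  rw [cubeSet_eq_pi, volume_pi_pi]
  simp [Real.volume_Ico]

theorem volume_cubeSet_pos {m : ℕ} (Q : Cube m) : 0 < volume (cubeSet Q) := by
  rw [volume_cubeSet]
  exact ENNReal.pow_pos (ENNReal.ofReal_pos.2 Q.side_pos) m

theorem volume_cubeSet_ne_top {m : ℕ} (Q : Cube m) : volume (cubeSet Q) ≠ ⊤ := by
  rw [volume_cubeSet]
  exact pow_ne_top ofReal_ne_top

theorem rectSet_eq_pi (R : Rect n) :
    rectSet R = Set.pi Set.univ (fun i => cubeSet (R i)) := by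
  ext x; simp [rectSet, Set.mem_pi]

theorem measurableSet_rectSet (R : Rect n) : MeasurableSet (rectSet R) := by
  rw [rectSet_eq_pi]; exact MeasurableSet.univ_pi fun i => measurableSet_cubeSet _

theorem volume_rectSet (R : Rect n) :
    volume (rectSet R) = ∏ i, volume (cubeSet (R i)) := by
  rw [rectSet_eq_pi, volume_pi_pi]

theorem volume_rectSet_pos (R : Rect n) : 0 < volume (rectSet R) := by
  rw [volume_rectSet]
  exact CanonicallyOrderedAdd.prod_pos.2 fun i _ => volume_cubeSet_pos _

theorem volume_rectSet_ne_top (R : Rect n) : volume (rectSet R) ≠ ⊤ := by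
  rw [volume_rectSet]
  exact ENNReal.prod_ne_top fun i _ => volume_cubeSet_ne_top _

instance uniqueCompl (i : Fin d) : Unique {j : Fin d // ¬ j ≠ i} where
  default := ⟨i, not_not_intro rfl⟩
  uniq := fun j => Subtype.ext (not_not.mp j.2)

/-- The measurable equivalence splitting off the `i`-th block. -/
def sliceEquiv (n : Fin d → ℕ) (i : Fin d) :
    ProductSpace n ≃ᵐ (∀ j : {j : Fin d // j ≠ i}, (Fin (n j) → ℝ)) × (Fin (n i) → ℝ) :=
  (MeasurableEquiv.piEquivPiSubtypeProd (fun j => Fin (n j) → ℝ) (fun j => j ≠ i)).trans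
    ((MeasurableEquiv.refl _).prodCongr
      (MeasurableEquiv.piUnique (fun j : {j : Fin d // ¬ j ≠ i} => Fin (n j) → ℝ)))

theorem sliceEquiv_apply (i : Fin d) (x : ProductSpace n) :
    sliceEquiv n i x = (fun j : {j : Fin d // j ≠ i} => x j, x i) := rfl

theorem measurePreserving_sliceEquiv (i : Fin d) :
    MeasurePreserving (sliceEquiv n i) volume volume := by
  have h1 := volume_preserving_piEquivPiSubtypeProd (fun j => Fin (n j) → ℝ) (fun j => j ≠ i)
  have h2 := measurePreserving_piUnique
    (fun j : {j : Fin d // ¬ j ≠ i} => (volume : Measure (Fin (n j) → ℝ)))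
  have h3 := (MeasurePreserving.id
    (volume : Measure (∀ j : {j : Fin d // j ≠ i}, (Fin (n j) → ℝ)))).prod h2
  exact h3.comp h1

theorem sliceEquiv_symm_apply (i : Fin d) (x : ProductSpace n) (t : Fin (n i) → ℝ) :
    (sliceEquiv n i).symm (fun j : {j : Fin d // j ≠ i} => x j, t) = Function.update x i t := by
  have h : sliceEquiv n i (Function.update x i t)
      = (fun j : {j : Fin d // j ≠ i} => x j, t) := by
    rw [sliceEquiv_apply]
    simp only [Prod.mk.injEq]
    exact ⟨funext fun j => Function.update_of_ne j.2 _ _, Function.update_self _ _ _⟩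
  rw [← h, MeasurableEquiv.symm_apply_apply]

end S13
end Aux13
section Aux13b
namespace S13
open Function Set Metric MeasureTheory ENNReal Filter

variable {d : ℕ} {n : Fin d → ℕ}

theorem measurePreserving_updatePair (i : Fin d) :
    MeasurePreserving (fun p : ProductSpace n × (Fin (n i) → ℝ) =>
      ((Function.update p.1 i p.2, p.1 i) : ProductSpace n × (Fin (n i) → ℝ)))
      volume volume := by
  set E := sliceEquiv n i with hE
  have hmid : MeasurePreserving (fun q : ((∀ j : {j : Fin d // j ≠ i}, (Fin (n j) → ℝ)) ×
      (Fin (n i) → ℝ)) × (Fin (n i) → ℝ) => ((q.1.1, q.2), q.1.2)) volume volume := by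
    have a1 := (volume_preserving_prodAssoc (α₁ := ∀ j : {j : Fin d // j ≠ i},
      (Fin (n j) → ℝ)) (β₁ := Fin (n i) → ℝ) (γ₁ := Fin (n i) → ℝ))
    have a2 : MeasurePreserving (fun q : (∀ j : {j : Fin d // j ≠ i}, (Fin (n j) → ℝ)) ×
        ((Fin (n i) → ℝ) × (Fin (n i) → ℝ)) => (q.1, Prod.swap q.2)) volume volume := by
      have := (MeasurePreserving.id (volume : Measure (∀ j : {j : Fin d // j ≠ i},
        (Fin (n j) → ℝ)))).prod
        (Measure.measurePreserving_swap (μ := (volume : Measure (Fin (n i) → ℝ)))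
          (ν := (volume : Measure (Fin (n i) → ℝ))))
      exact this
    have a3 : MeasurePreserving (fun q : (∀ j : {j : Fin d // j ≠ i}, (Fin (n j) → ℝ)) ×
        ((Fin (n i) → ℝ) × (Fin (n i) → ℝ)) => ((q.1, q.2.1), q.2.2)) volume volume := by
      have h := (volume_preserving_prodAssoc (α₁ := ∀ j : {j : Fin d // j ≠ i},
        (Fin (n j) → ℝ)) (β₁ := Fin (n i) → ℝ) (γ₁ := Fin (n i) → ℝ)).symm
        (e := MeasurableEquiv.prodAssoc)
      exact h
    exact (a3.comp a2).comp a1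
  have hE1 : MeasurePreserving (fun p : ProductSpace n × (Fin (n i) → ℝ) => (E p.1, p.2))
      volume volume := by
    have := (measurePreserving_sliceEquiv (n := n) i).prod
      (MeasurePreserving.id (volume : Measure (Fin (n i) → ℝ)))
    exact this
  have hE2 : MeasurePreserving (fun q : ((∀ j : {j : Fin d // j ≠ i}, (Fin (n j) → ℝ)) ×
      (Fin (n i) → ℝ)) × (Fin (n i) → ℝ) => (E.symm q.1, q.2)) volume volume := by
    have := ((measurePreserving_sliceEquiv (n := n) i).symm (e := E)).prod
      (MeasurePreserving.id (volume : Measure (Fin (n i) → ℝ)))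
    exact this
  have key : (fun p : ProductSpace n × (Fin (n i) → ℝ) =>
      ((Function.update p.1 i p.2, p.1 i) : ProductSpace n × (Fin (n i) → ℝ)))
      = (fun q : ((∀ j : {j : Fin d // j ≠ i}, (Fin (n j) → ℝ)) ×
          (Fin (n i) → ℝ)) × (Fin (n i) → ℝ) => (E.symm q.1, q.2))
        ∘ (fun q : ((∀ j : {j : Fin d // j ≠ i}, (Fin (n j) → ℝ)) ×
          (Fin (n i) → ℝ)) × (Fin (n i) → ℝ) => ((q.1.1, q.2), q.1.2))
        ∘ (fun p : ProductSpace n × (Fin (n i) → ℝ) => (E p.1, p.2)) := by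
    funext p
    simp only [Function.comp_apply, hE, sliceEquiv_apply]
    exact Prod.ext (sliceEquiv_symm_apply i p.1 p.2).symm rfl
  rw [key]
  exact (hE2.comp hmid).comp hE1

theorem swap_lintegral (i : Fin d) {H : ProductSpace n × (Fin (n i) → ℝ) → ℝ≥0∞}
    (hH : Measurable H) :
    ∫⁻ x, ∫⁻ t, H (x, t) = ∫⁻ x, ∫⁻ t, H (Function.update x i t, x i) := by
  have h1 := (measurePreserving_updatePair (n := n) i).lintegral_comp hH
  have h2 : ∫⁻ p : ProductSpace n × (Fin (n i) → ℝ), H p = ∫⁻ x, ∫⁻ t, H (x, t) := by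
    rw [Measure.volume_eq_prod _ _]
    exact lintegral_prod _ hH.aemeasurable
  have h3 : ∫⁻ p : ProductSpace n × (Fin (n i) → ℝ), H (Function.update p.1 i p.2, p.1 i)
      = ∫⁻ x, ∫⁻ t, H (Function.update x i t, x i) := by
    rw [Measure.volume_eq_prod _ _]
    exact lintegral_prod _ (hH.comp ((measurePreserving_updatePair (n := n) i).measurable)).aemeasurable
  rw [← h2, ← h3, h1]

end S13
end Aux13b
section Aux13c
namespace S13
open Function Set Metric MeasureTheory ENNReal Filter

variable {d : ℕ} {n : Fin d → ℕ}

theorem update_mem_rectSet_iff {R : Rect n} {x : ProductSpace n} {i : Fin d}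
    {t : Fin (n i) → ℝ} :
    Function.update x i t ∈ rectSet R ↔
      t ∈ cubeSet (R i) ∧ ∀ j, j ≠ i → x j ∈ cubeSet (R j) := by
  constructor
  · intro h
    refine ⟨by simpa using h i, fun j hj => by simpa [Function.update_of_ne hj] using h j⟩
  · intro ⟨h1, h2⟩ j
    rcases eq_or_ne j i with rfl | hj
    · simpa using h1
    · simpa [Function.update_of_ne hj] using h2 j hj

theorem mem_rectSet_iff' {R : Rect n} {x : ProductSpace n} {i : Fin d} :
    x ∈ rectSet R ↔ x i ∈ cubeSet (R i) ∧ ∀ j, j ≠ i → x j ∈ cubeSet (R j) := by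
  constructor
  · exact fun h => ⟨h i, fun j _ => h j⟩
  · intro ⟨h1, h2⟩ j
    rcases eq_or_ne j i with rfl | hj
    · exact h1
    · exact h2 j hj

/-- Tonelli-type identity: integrating over a rectangle, one may re-average the `i`-th
block variable. -/
theorem lintegral_update_rect (i : Fin d) {F : ProductSpace n → ℝ≥0∞} (hF : Measurable F)
    (R : Rect n) :
    ∫⁻ x in rectSet R, ∫⁻ t in cubeSet (R i), F (Function.update x i t) =
      volume (cubeSet (R i)) * ∫⁻ x in rectSet R, F x := by
  set Q := cubeSet (R i) with hQ
  have hQm : MeasurableSet Q := measurableSet_cubeSet _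
  have hRm : MeasurableSet (rectSet R) := measurableSet_rectSet R
  set H : ProductSpace n × (Fin (n i) → ℝ) → ℝ≥0∞ :=
    fun p => (rectSet R).indicator F p.1 * Q.indicator 1 p.2 with hHdef
  have hH : Measurable H :=
    ((hF.indicator hRm).comp measurable_fst).mul
      ((measurable_one.indicator hQm).comp measurable_snd)
  have hswap := swap_lintegral i hH
  -- LHS computation
  have hL : ∫⁻ x, ∫⁻ t, H (x, t) = volume Q * ∫⁻ x in rectSet R, F x := by
    have : ∀ x : ProductSpace n, ∫⁻ t, H (x, t) = (rectSet R).indicator F x * volume Q := by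
      intro x
      rw [hHdef]
      simp only
      rw [lintegral_const_mul _ (measurable_one.indicator hQm), lintegral_indicator hQm]
      simp [setLIntegral_one]
    simp only [this]
    rw [lintegral_mul_const _ (hF.indicator hRm), lintegral_indicator hRm, mul_comm]
  -- RHS computation
  have hR : ∫⁻ x, ∫⁻ t, H (Function.update x i t, x i)
      = ∫⁻ x in rectSet R, ∫⁻ t in Q, F (Function.update x i t) := by
    have hinner : ∀ x : ProductSpace n, ∫⁻ t, H (Function.update x i t, x i)
        = (rectSet R).indicator (fun x' => ∫⁻ t in Q, F (Function.update x' i t)) x := by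
      intro x
      by_cases hx : x ∈ rectSet R
      · rw [Set.indicator_of_mem hx]
        have hxi : x i ∈ Q := (mem_rectSet_iff' (i := i)).1 hx |>.1
        have hother := fun j hj => ((mem_rectSet_iff' (i := i)).1 hx).2 j hj
        have : ∀ t, H (Function.update x i t, x i)
            = Q.indicator (fun t => F (Function.update x i t)) t := by
          intro t
          rw [hHdef]
          simp only
          rw [Set.indicator_of_mem hxi]
          by_cases ht : t ∈ Q
          · have : Function.update x i t ∈ rectSet R :=
              update_mem_rectSet_iff.2 ⟨ht, hother⟩
            rw [Set.indicator_of_mem this, Set.indicator_of_mem ht]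
            simp
          · have : Function.update x i t ∉ rectSet R := by
              intro hc
              exact ht (update_mem_rectSet_iff.1 hc).1
            rw [Set.indicator_of_notMem this, Set.indicator_of_notMem ht, zero_mul]
        simp only [this]
        rw [lintegral_indicator hQm]
      · rw [Set.indicator_of_notMem hx]
        have : ∀ t, H (Function.update x i t, x i) = 0 := by
          intro t
          rw [hHdef]
          simp only
          by_cases hxi : x i ∈ Q
          · have : ¬ ∀ j, j ≠ i → x j ∈ cubeSet (R j) := by
              intro hall
              exact hx ((mem_rectSet_iff' (i := i)).2 ⟨hxi, hall⟩)
            have : Function.update x i t ∉ rectSet R := by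
              intro hc
              exact this (update_mem_rectSet_iff.1 hc).2
            rw [Set.indicator_of_notMem this, zero_mul]
          · rw [Set.indicator_of_notMem hxi, mul_zero]
        simp only [this]
        simp
    simp only [hinner]
    rw [lintegral_indicator hRm]
  rw [hL, hR] at hswap
  exact hswap.symm

/-- Transfer identity for functions not depending on the `i`-th block. -/
theorem lintegral_cyl (i : Fin d) {G : ProductSpace n → ℝ≥0∞} (hG : Measurable G)
    (hGc : ∀ x t, G (Function.update x i t) = G x) {s s' : Set (Fin (n i) → ℝ)}
    (hs : MeasurableSet s) (hs' : MeasurableSet s') :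
    volume s' * ∫⁻ x, s.indicator 1 (x i) * G x
      = volume s * ∫⁻ x, s'.indicator 1 (x i) * G x := by
  have hxi : Measurable fun x : ProductSpace n => x i := measurable_pi_apply i
  set H : ProductSpace n × (Fin (n i) → ℝ) → ℝ≥0∞ :=
    fun p => s'.indicator 1 p.2 * (s.indicator 1 (p.1 i) * G p.1) with hHdef
  have hH : Measurable H :=
    ((measurable_one.indicator hs').comp measurable_snd).mul
      ((((measurable_one.indicator hs)).comp (hxi.comp measurable_fst)).mul
        (hG.comp measurable_fst))
  have hswap := swap_lintegral i hH
  have hmeas1 : Measurable fun x : ProductSpace n => s.indicator 1 (x i) * G x :=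
    ((measurable_one.indicator hs).comp hxi).mul hG
  have hmeas2 : Measurable fun x : ProductSpace n => s'.indicator 1 (x i) * G x :=
    ((measurable_one.indicator hs').comp hxi).mul hG
  have hL : ∫⁻ x, ∫⁻ t, H (x, t) = volume s' * ∫⁻ x, s.indicator 1 (x i) * G x := by
    have : ∀ x : ProductSpace n, ∫⁻ t, H (x, t)
        = (s.indicator 1 (x i) * G x) * volume s' := by
      intro x
      rw [hHdef]
      simp only
      rw [lintegral_mul_const _ (measurable_one.indicator hs'), lintegral_indicator hs']
      simp [setLIntegral_one, mul_comm]
    simp only [this]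
    rw [lintegral_mul_const _ hmeas1, mul_comm]
  have hR : ∫⁻ x, ∫⁻ t, H (Function.update x i t, x i)
      = volume s * ∫⁻ x, s'.indicator 1 (x i) * G x := by
    have : ∀ (x : ProductSpace n) (t : Fin (n i) → ℝ), H (Function.update x i t, x i)
        = (s'.indicator 1 (x i) * G x) * s.indicator 1 t := by
      intro x t
      rw [hHdef]
      simp only [Function.update_self, hGc]
      ring
    simp only [this]
    have : ∀ x : ProductSpace n, ∫⁻ t, (s'.indicator 1 (x i) * G x) * s.indicator 1 t
        = (s'.indicator 1 (x i) * G x) * volume s := by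
      intro x
      rw [lintegral_const_mul _ (measurable_one.indicator hs), lintegral_indicator hs]
      simp [setLIntegral_one]
    simp only [this]
    rw [lintegral_mul_const _ hmeas2, mul_comm]
  rw [hL, hR] at hswap
  exact hswap

end S13
end Aux13c
section Aux13d
namespace S13
open Function Set Metric MeasureTheory ENNReal Filter Topology

variable {d : ℕ} {n : Fin d → ℕ}

theorem measurableSet_cylPart (i : Fin d) (R : Rect n) :
    MeasurableSet {x : ProductSpace n | ∀ j, j ≠ i → x j ∈ cubeSet (R j)} := by
  have : {x : ProductSpace n | ∀ j, j ≠ i → x j ∈ cubeSet (R j)}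
      = ⋂ j, {x : ProductSpace n | j ≠ i → x j ∈ cubeSet (R j)} := by
    ext x; simp [Set.mem_iInter]
  rw [this]
  refine MeasurableSet.iInter fun j => ?_
  by_cases hj : j = i
  · subst hj; simp
  · have : {x : ProductSpace n | j ≠ i → x j ∈ cubeSet (R j)}
        = (fun x : ProductSpace n => x j) ⁻¹' cubeSet (R j) := by
      ext x; simp [hj]
    rw [this]
    exact measurable_pi_apply j (measurableSet_cubeSet _)

theorem lintegral_rect_eq_indicator (i : Fin d) (Φ : ProductSpace n → ℝ≥0∞) (R : Rect n) :
    ∫⁻ x in rectSet R, Φ x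
      = ∫⁻ x, (cubeSet (R i)).indicator 1 (x i) *
          ({x : ProductSpace n | ∀ j, j ≠ i → x j ∈ cubeSet (R j)}.indicator 1 x * Φ x) := by
  rw [← lintegral_indicator (measurableSet_rectSet R)]
  congr 1
  funext x
  by_cases h1 : x i ∈ cubeSet (R i) <;>
    by_cases h2 : ∀ j, j ≠ i → x j ∈ cubeSet (R j)
  · have hx : x ∈ rectSet R := (mem_rectSet_iff' (i := i)).2 ⟨h1, h2⟩
    rw [Set.indicator_of_mem hx, Set.indicator_of_mem h1,
      Set.indicator_of_mem (show x ∈ {x : ProductSpace n | ∀ j, j ≠ i → x j ∈ cubeSet (R j)}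
        from h2)]
    simp
  · have hx : x ∉ rectSet R := fun hc => h2 ((mem_rectSet_iff' (i := i)).1 hc).2
    rw [Set.indicator_of_notMem hx,
      Set.indicator_of_notMem (show x ∉ {x : ProductSpace n | ∀ j, j ≠ i → x j ∈ cubeSet (R j)}
        from h2), zero_mul, mul_zero]
  · have hx : x ∉ rectSet R := fun hc => h1 ((mem_rectSet_iff' (i := i)).1 hc).1
    rw [Set.indicator_of_notMem hx, Set.indicator_of_notMem h1, zero_mul]
  · have hx : x ∉ rectSet R := fun hc => h1 ((mem_rectSet_iff' (i := i)).1 hc).1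
    rw [Set.indicator_of_notMem hx, Set.indicator_of_notMem h1, zero_mul]

/-- Changing the `i`-th cube of a rectangle, for functions not depending on the `i`-th block. -/
theorem cyl_rect (i : Fin d) {Φ : ProductSpace n → ℝ≥0∞} (hΦ : Measurable Φ)
    (hc : ∀ x t, Φ (Function.update x i t) = Φ x) (R : Rect n) (Q : Cube (n i)) :
    volume (cubeSet Q) * ∫⁻ x in rectSet R, Φ x
      = volume (cubeSet (R i)) * ∫⁻ x in rectSet (Function.update R i Q), Φ x := by
  set W := {x : ProductSpace n | ∀ j, j ≠ i → x j ∈ cubeSet (R j)} with hW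
  have hWm : MeasurableSet W := measurableSet_cylPart i R
  set G : ProductSpace n → ℝ≥0∞ := fun x => W.indicator 1 x * Φ x with hG
  have hGm : Measurable G := (measurable_one.indicator hWm).mul hΦ
  have hGc : ∀ x t, G (Function.update x i t) = G x := by
    intro x t
    rw [hG]
    simp only
    rw [hc]
    congr 1
    have : Function.update x i t ∈ W ↔ x ∈ W := by
      constructor
      · intro h j hj; simpa [Function.update_of_ne hj] using h j hj
      · intro h j hj; simpa [Function.update_of_ne hj] using h j hj
    by_cases hx : x ∈ W
    · rw [Set.indicator_of_mem hx, Set.indicator_of_mem (this.2 hx)]; rfl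
    · rw [Set.indicator_of_notMem hx, Set.indicator_of_notMem (fun hc' => hx (this.1 hc'))]

  have e1 := lintegral_rect_eq_indicator i Φ R
  have hset : {x : ProductSpace n | ∀ j, j ≠ i → x j ∈ cubeSet (Function.update R i Q j)}
      = W := by
    ext y
    simp only [Set.mem_setOf_eq, hW]
    constructor
    · intro h j hj; have := h j hj; rwa [Function.update_of_ne hj] at this
    · intro h j hj; rw [Function.update_of_ne hj]; exact h j hj
  have e2 : ∫⁻ x in rectSet (Function.update R i Q), Φ x
      = ∫⁻ x, (cubeSet Q).indicator 1 (x i) * G x := by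
    rw [lintegral_rect_eq_indicator i Φ (Function.update R i Q), hset]
    simp only [Function.update_self, hG]
  rw [e1, e2]
  exact lintegral_cyl i hGm hGc (measurableSet_cubeSet (R i)) (measurableSet_cubeSet Q)

/-- The rectangle with corner `x - r` and side `2r`. -/
def ballRect (x : ProductSpace n) {r : ℝ} (hr : 0 < r) : Rect n :=
  fun j => ⟨fun k => x j k - r, 2 * r, by linarith⟩

theorem ballRect_subset (x : ProductSpace n) {r : ℝ} (hr : 0 < r) :
    rectSet (ballRect x hr) ⊆ closedBall x r := by
  intro y hy
  rw [closedBall_pi _ hr.le]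
  refine Set.mem_univ_pi.2 fun j => ?_
  show y j ∈ closedBall (x j) r
  rw [closedBall_pi _ hr.le]
  refine Set.mem_univ_pi.2 fun k => ?_
  show y j k ∈ closedBall (x j k) r
  have h := hy j k
  simp only [ballRect] at h
  rw [Real.closedBall_eq_Icc]
  exact ⟨by linarith [h.1], by linarith [h.2]⟩

theorem volume_closedBall_pi (x : ProductSpace n) {r : ℝ} (hr : 0 < r) :
    volume (closedBall x r) = volume (rectSet (ballRect x hr)) := by
  rw [closedBall_pi _ hr.le, volume_pi_pi, volume_rectSet]
  refine Finset.prod_congr rfl fun j _ => ?_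
  show volume (closedBall (x j) r) = _
  rw [closedBall_pi _ hr.le, volume_pi_pi, volume_cubeSet]
  simp [Real.volume_closedBall, Finset.prod_const, ballRect]

theorem rectSet_ae_eq_closedBall (x : ProductSpace n) {r : ℝ} (hr : 0 < r) :
    rectSet (ballRect x hr) =ᵐ[volume] closedBall x r := by
  refine ae_eq_of_subset_of_measure_ge (ballRect_subset x hr)
    (le_of_eq (volume_closedBall_pi x hr))
    (measurableSet_rectSet _).nullMeasurableSet ?_
  rw [volume_closedBall_pi x hr]
  exact volume_rectSet_ne_top _

theorem rectSet_mem_nhds (x : ProductSpace n) {r : ℝ} (hr : 0 < r) :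
    rectSet (ballRect x hr) ∈ 𝓝 x := by
  have hU : IsOpen (⋂ j, ⋂ k, {y : ProductSpace n |
      y j k ∈ Ioo (x j k - r) (x j k - r + 2 * r)}) := by
    refine isOpen_iInter_of_finite fun j => isOpen_iInter_of_finite fun k => ?_
    exact isOpen_Ioo.preimage (by fun_prop)
  refine mem_nhds_iff.2 ⟨_, ?_, hU, ?_⟩
  · intro y hy j k
    simp only [Set.mem_iInter] at hy
    exact ⟨(hy j k).1.le, (hy j k).2⟩
  · simp only [Set.mem_iInter]
    intro j k
    constructor <;> [linarith; linarith]

/-- Besicovitch differentiation: a measurable function whose averages over every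
rectangle are at most `B` is a.e. at most `B`. -/
theorem ae_le_of_rect_avg {Φ : ProductSpace n → ℝ≥0∞} (hΦ : Measurable Φ) {B : ℝ≥0∞}
    (h : ∀ R : Rect n, ∫⁻ x in rectSet R, Φ x ≤ B * volume (rectSet R)) :
    ∀ᵐ x : ProductSpace n ∂volume, Φ x ≤ B := by
  rcases eq_or_ne B ⊤ with rfl | hB
  · exact ae_of_all _ fun x => le_top
  set ρ : Measure (ProductSpace n) := volume.withDensity Φ with hρ
  have hρrect : ∀ R : Rect n, ρ (rectSet R) = ∫⁻ x in rectSet R, Φ x := fun R =>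
    withDensity_apply Φ (measurableSet_rectSet R)
  haveI : IsLocallyFiniteMeasure ρ := by
    constructor
    intro x
    refine ⟨rectSet (ballRect x one_pos), rectSet_mem_nhds x one_pos, ?_⟩
    rw [hρrect]
    exact lt_of_le_of_lt (h _) (ENNReal.mul_lt_top hB.lt_top (volume_rectSet_ne_top _).lt_top)
  have hrn := Measure.rnDeriv_withDensity (volume : Measure (ProductSpace n)) hΦ
  have hbes := Besicovitch.ae_tendsto_rnDeriv ρ (volume : Measure (ProductSpace n))
  filter_upwards [hrn, hbes] with x hx hx2
  rw [hx] at hx2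
  refine le_of_tendsto hx2 ?_
  filter_upwards [self_mem_nhdsWithin] with r hr
  have hr0 : (0 : ℝ) < r := hr
  have : ρ (closedBall x r) ≤ B * volume (closedBall x r) := by
    have h1 : ρ (closedBall x r) = ∫⁻ y in rectSet (ballRect x hr0), Φ y := by
      rw [hρ, withDensity_apply Φ measurableSet_closedBall]
      exact (setLIntegral_congr (rectSet_ae_eq_closedBall x hr0)).symm
    rw [h1, volume_closedBall_pi x hr0]
    exact h _
  exact ENNReal.div_le_of_le_mul this

end S13
end Aux13d
section Aux13e
namespace S13
open Function Set Metric MeasureTheory ENNReal Filter Topology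

/-- Comparison of mean oscillation with oscillation around an arbitrary constant. -/
theorem oscL {α : Type*} [MeasurableSpace α] {μ : Measure α} {s : Set α}
    (h0 : μ s ≠ 0) (ht : μ s ≠ ⊤) {g : α → ℝ} (hg : IntegrableOn g s μ) (a : ℝ) :
    ∫⁻ x in s, ENNReal.ofReal |g x - ⨍ y in s, g y ∂μ| ∂μ
      ≤ 2 * ∫⁻ x in s, ENNReal.ofReal |g x - a| ∂μ := by
  set m := ⨍ y in s, g y ∂μ with hm
  have hpos : 0 < (μ s).toReal := ENNReal.toReal_pos h0 ht
  have hconst : IntegrableOn (fun _ => a) s μ := integrableOn_const ht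
  have hsub : IntegrableOn (fun y => g y - a) s μ := hg.sub hconst
  have hmeq : m - a = (μ s).toReal⁻¹ * ∫ y in s, (g y - a) ∂μ := by
    rw [hm, setAverage_eq, integral_sub hg hconst, integral_const]
    simp only [smul_eq_mul, Measure.restrict_apply_univ, measureReal_def]
    field_simp
  have habs : |m - a| ≤ (μ s).toReal⁻¹ * ∫ y in s, |g y - a| ∂μ := by
    rw [hmeq, abs_mul, abs_of_nonneg (inv_nonneg.2 ENNReal.toReal_nonneg)]
    refine mul_le_mul_of_nonneg_left ?_ (inv_nonneg.2 ENNReal.toReal_nonneg)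
    simpa [Real.norm_eq_abs] using norm_integral_le_integral_norm (fun y => g y - a)
      (μ := μ.restrict s)
  have hofReal : ENNReal.ofReal (∫ y in s, |g y - a| ∂μ)
      = ∫⁻ y in s, ENNReal.ofReal |g y - a| ∂μ :=
    ofReal_integral_eq_lintegral_ofReal hsub.abs (ae_of_all _ fun y => abs_nonneg _)
  have hkey : ENNReal.ofReal |m - a| ≤ (μ s)⁻¹ * ∫⁻ y in s, ENNReal.ofReal |g y - a| ∂μ := by
    calc ENNReal.ofReal |m - a|
        ≤ ENNReal.ofReal ((μ s).toReal⁻¹ * ∫ y in s, |g y - a| ∂μ) :=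
          ENNReal.ofReal_le_ofReal habs
      _ = ENNReal.ofReal (μ s).toReal⁻¹ * ENNReal.ofReal (∫ y in s, |g y - a| ∂μ) :=
          ENNReal.ofReal_mul (inv_nonneg.2 ENNReal.toReal_nonneg)
      _ = (μ s)⁻¹ * ∫⁻ y in s, ENNReal.ofReal |g y - a| ∂μ := by
          rw [hofReal, ENNReal.ofReal_inv_of_pos hpos, ENNReal.ofReal_toReal ht]
  have hpt : ∀ x, ENNReal.ofReal |g x - m|
      ≤ ENNReal.ofReal |g x - a| + ENNReal.ofReal |m - a| := by
    intro x
    rw [← ENNReal.ofReal_add (abs_nonneg _) (abs_nonneg _)]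
    refine ENNReal.ofReal_le_ofReal ?_
    calc |g x - m| ≤ |g x - a| + |a - m| := abs_sub_le _ _ _
      _ = |g x - a| + |m - a| := by rw [abs_sub_comm a m]
  calc ∫⁻ x in s, ENNReal.ofReal |g x - m| ∂μ
      ≤ ∫⁻ x in s, (ENNReal.ofReal |g x - a| + ENNReal.ofReal |m - a|) ∂μ :=
        lintegral_mono fun x => hpt x
    _ = (∫⁻ x in s, ENNReal.ofReal |g x - a| ∂μ) + ENNReal.ofReal |m - a| * μ s := by
        rw [lintegral_add_right _ measurable_const, lintegral_const,
          Measure.restrict_apply_univ]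
    _ ≤ (∫⁻ x in s, ENNReal.ofReal |g x - a| ∂μ)
        + ((μ s)⁻¹ * ∫⁻ y in s, ENNReal.ofReal |g y - a| ∂μ) * μ s := by
        exact add_le_add_right (mul_le_mul_left hkey _) _
    _ = (∫⁻ x in s, ENNReal.ofReal |g x - a| ∂μ)
        + ∫⁻ y in s, ENNReal.ofReal |g y - a| ∂μ := by
        rw [mul_comm ((μ s)⁻¹) _, mul_assoc, ENNReal.inv_mul_cancel h0 ht, mul_one]
    _ = 2 * ∫⁻ x in s, ENNReal.ofReal |g x - a| ∂μ := (two_mul _).symm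

variable {d : ℕ} {n : Fin d → ℕ}

/-- The mean of the `i`-th block slice of `f` through `x` over the cube `Q`. -/
noncomputable def sliceMean (i : Fin d) (Q : Cube (n i)) (f : ProductSpace n → ℝ) (x : ProductSpace n) : ℝ :=
  ⨍ t in cubeSet Q, f (Function.update x i t)

/-- The mean oscillation of the `i`-th block slice of `f` through `x` over the cube `Q`. -/
noncomputable def sliceOsc (i : Fin d) (Q : Cube (n i)) (f : ProductSpace n → ℝ) (x : ProductSpace n) :
    ℝ≥0∞ :=
  (volume (cubeSet Q))⁻¹ *
    ∫⁻ t in cubeSet Q, ENNReal.ofReal |f (Function.update x i t) - sliceMean i Q f x|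

theorem bmo1Cube_slice (i : Fin d) (f : ProductSpace n → ℝ) (x : ProductSpace n) :
    bmo1Cube (fun t => f (Function.update x i t)) = ⨆ Q : Cube (n i), sliceOsc i Q f x := rfl

theorem sliceMean_update (i : Fin d) (Q : Cube (n i)) (f : ProductSpace n → ℝ)
    (x : ProductSpace n) (t : Fin (n i) → ℝ) :
    sliceMean i Q f (Function.update x i t) = sliceMean i Q f x := by
  simp [sliceMean, Function.update_idem]

theorem sliceOsc_update (i : Fin d) (Q : Cube (n i)) (f : ProductSpace n → ℝ)
    (x : ProductSpace n) (t : Fin (n i) → ℝ) :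
    sliceOsc i Q f (Function.update x i t) = sliceOsc i Q f x := by
  simp [sliceOsc, Function.update_idem, sliceMean_update]

theorem measurable_sliceMean (i : Fin d) (Q : Cube (n i)) {f : ProductSpace n → ℝ}
    (hf : Measurable f) : Measurable (sliceMean i Q f) := by
  have hsm : StronglyMeasurable fun p : ProductSpace n × (Fin (n i) → ℝ) =>
      f (Function.update p.1 i p.2) := (hf.comp measurable_update').stronglyMeasurable
  have h := hsm.integral_prod_right' (ν := volume.restrict (cubeSet Q))
  have heq : sliceMean i Q f = fun x =>
      (volume (cubeSet Q)).toReal⁻¹ * ∫ t in cubeSet Q, f (Function.update x i t) := by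
    funext x; rw [sliceMean, setAverage_eq, smul_eq_mul, measureReal_def]
  rw [heq]
  exact h.measurable.const_mul _

theorem measurable_sliceOsc (i : Fin d) (Q : Cube (n i)) {f : ProductSpace n → ℝ}
    (hf : Measurable f) : Measurable (sliceOsc i Q f) := by
  apply Measurable.const_mul
  exact Measurable.lintegral_prod_right'
    (f := fun p : ProductSpace n × (Fin (n i) → ℝ) =>
      ENNReal.ofReal |f (Function.update p.1 i p.2) - sliceMean i Q f p.1|)
    (((hf.comp measurable_update').sub
      ((measurable_sliceMean i Q hf).comp measurable_fst)).abs.ennreal_ofReal)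

end S13
end Aux13e
section Aux13f
namespace S13
open Function Set Metric MeasureTheory ENNReal Filter Topology

variable {d : ℕ} {n : Fin d → ℕ}

/-- A big cube centered at the origin. -/
def bigCube (m : ℕ) (k : ℕ) : Cube m :=
  ⟨fun _ => -(k + 1 : ℝ), 2 * (k + 1), by positivity⟩

theorem mem_bigCube {m k : ℕ} {y : Fin m → ℝ} (h : ∀ l, |y l| ≤ k) :
    y ∈ cubeSet (bigCube m k) := by
  intro l
  have := abs_le.1 (h l)
  simp only [bigCube]
  constructor
  · linarith [this.1]
  · linarith [this.2]

theorem integrableOn_rectSet {f : ProductSpace n → ℝ} (hf : LocallyIntegrable f volume)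
    (R : Rect n) : IntegrableOn f (rectSet R) volume := by
  have hK : IsCompact (Set.pi Set.univ fun j => Set.pi Set.univ fun k =>
      Icc ((R j).corner k) ((R j).corner k + (R j).side)) :=
    isCompact_univ_pi fun j => isCompact_univ_pi fun k => isCompact_Icc
  refine (hf.integrableOn_isCompact hK).mono_set ?_
  intro x hx
  refine Set.mem_univ_pi.2 fun j => Set.mem_univ_pi.2 fun k => ?_
  exact ⟨(hx j k).1, (hx j k).2.le⟩

theorem lintegral_abs_rect_lt_top {f : ProductSpace n → ℝ} (hf : LocallyIntegrable f volume)
    (R : Rect n) : ∫⁻ x in rectSet R, ENNReal.ofReal |f x| < ⊤ := by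
  have h := (integrableOn_rectSet hf R).hasFiniteIntegral
  rw [hasFiniteIntegral_iff_norm] at h
  simpa [Real.norm_eq_abs] using h

/-- A measurable `i`-cylindrical set which is null on a slab of positive thickness is null. -/
theorem cyl_null (i : Fin d) {N : Set (ProductSpace n)} (hNm : MeasurableSet N)
    (hNc : ∀ x t, (Function.update x i t ∈ N) ↔ x ∈ N)
    {s : Set (Fin (n i) → ℝ)} (hs : MeasurableSet s) (hs0 : volume s ≠ 0)
    (h : volume (N ∩ {x : ProductSpace n | x i ∈ s}) = 0) : volume N = 0 := by
  have hG : Measurable (N.indicator (1 : ProductSpace n → ℝ≥0∞)) :=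
    measurable_one.indicator hNm
  have hGc : ∀ x t, N.indicator (1 : ProductSpace n → ℝ≥0∞) (Function.update x i t)
      = N.indicator 1 x := by
    intro x t
    by_cases hx : x ∈ N
    · rw [Set.indicator_of_mem hx, Set.indicator_of_mem ((hNc x t).2 hx)]; rfl
    · rw [Set.indicator_of_notMem hx,
        Set.indicator_of_notMem (fun hc => hx ((hNc x t).1 hc))]
  have eqset : ∀ (u : Set (Fin (n i) → ℝ)), MeasurableSet u →
      ∫⁻ x, u.indicator 1 (x i) * N.indicator 1 x
        = volume (N ∩ {x : ProductSpace n | x i ∈ u}) := by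
    intro u hu
    have heq : (fun x : ProductSpace n => u.indicator 1 (x i) * N.indicator 1 x)
        = (N ∩ {x : ProductSpace n | x i ∈ u}).indicator (1 : ProductSpace n → ℝ≥0∞) := by
      funext x
      by_cases h1 : x i ∈ u <;> by_cases h2 : x ∈ N <;>
        simp [Set.indicator_apply, h1, h2, Set.mem_setOf_eq]
    rw [heq]
    exact lintegral_indicator_one (hNm.inter (measurable_pi_apply i hu))
  have key : ∀ (u : Set (Fin (n i) → ℝ)), MeasurableSet u →
      volume (N ∩ {x : ProductSpace n | x i ∈ u}) = 0 := by
    intro u hu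
    have h2 := lintegral_cyl i hG hGc hs hu
    rw [eqset s hs, eqset u hu, h, mul_zero] at h2
    exact (mul_eq_zero.1 h2.symm).resolve_left hs0
  have hsub : N ⊆ ⋃ k : ℕ, N ∩ {x : ProductSpace n | x i ∈ cubeSet (bigCube (n i) k)} := by
    intro x hx
    obtain ⟨k, hk⟩ := exists_nat_ge (‖x i‖)
    refine Set.mem_iUnion.2 ⟨k, hx, mem_bigCube fun l => ?_⟩
    exact le_trans (norm_le_pi_norm (x i) l) hk
  refine measure_mono_null hsub (measure_iUnion_null fun k => ?_)
  exact key _ (measurableSet_cubeSet _)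

theorem ae_sliceIntegrable (i : Fin d) (Q : Cube (n i)) {f : ProductSpace n → ℝ}
    (hfm : Measurable f) (hf : LocallyIntegrable f volume) :
    ∀ᵐ x : ProductSpace n ∂volume,
      IntegrableOn (fun t => f (Function.update x i t)) (cubeSet Q) volume := by
  set I : ProductSpace n → ℝ≥0∞ :=
    fun x => ∫⁻ t in cubeSet Q, ENNReal.ofReal |f (Function.update x i t)| with hI
  have hIm : Measurable I :=
    Measurable.lintegral_prod_right'
      (f := fun p : ProductSpace n × (Fin (n i) → ℝ) =>
        ENNReal.ofReal |f (Function.update p.1 i p.2)|)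
      ((hfm.comp measurable_update').abs.ennreal_ofReal)
  have hIc : ∀ x t, I (Function.update x i t) = I x := by
    intro x t; simp [hI, Function.update_idem]
  set N := {x : ProductSpace n | I x = ⊤} with hN
  have hNm : MeasurableSet N := hIm (measurableSet_singleton ⊤)
  have hNc : ∀ x t, (Function.update x i t ∈ N ↔ x ∈ N) := by
    intro x t; simp only [hN, Set.mem_setOf_eq, hIc]
  have hcover : volume (N ∩ {x : ProductSpace n | x i ∈ cubeSet Q}) = 0 := by
    have hk : ∀ k : ℕ,
        volume (N ∩ rectSet (Function.update (fun j : Fin d => bigCube (n j) k) i Q)) = 0 := by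
      intro k
      set R := Function.update (fun j : Fin d => bigCube (n j) k) i Q with hR
      have hRiQ : R i = Q := Function.update_self _ _ _
      have hL1 := lintegral_update_rect i (hfm.abs.ennreal_ofReal) R
      have hfin : ∫⁻ x in rectSet R,
          (∫⁻ t in cubeSet (R i), ENNReal.ofReal |f (Function.update x i t)|) ≠ ⊤ := by
        rw [hL1]
        exact (ENNReal.mul_lt_top (volume_cubeSet_ne_top _).lt_top
          (lintegral_abs_rect_lt_top hf R)).ne
      have hmeas : Measurable fun x : ProductSpace n =>
          ∫⁻ t in cubeSet (R i), ENNReal.ofReal |f (Function.update x i t)| :=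
        Measurable.lintegral_prod_right'
          (f := fun p : ProductSpace n × (Fin (n i) → ℝ) =>
            ENNReal.ofReal |f (Function.update p.1 i p.2)|)
          ((hfm.comp measurable_update').abs.ennreal_ofReal)
      have hae := ae_lt_top hmeas hfin
      have hae2 : ∀ᵐ x ∂(volume.restrict (rectSet R)), x ∉ N := by
        filter_upwards [hae] with x hx
        simp only [hN, Set.mem_setOf_eq]
        rw [hI]
        simp only
        rw [← hRiQ]
        exact hx.ne
      rw [ae_restrict_iff' (measurableSet_rectSet R)] at hae2
      have hsub : N ∩ rectSet R ⊆ {x : ProductSpace n | ¬ (x ∈ rectSet R → x ∉ N)} := by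
        intro x hx
        simp only [Set.mem_setOf_eq, Classical.not_imp, not_not]
        exact ⟨hx.2, hx.1⟩
      exact measure_mono_null hsub (ae_iff.1 hae2)
    refine measure_mono_null ?_ (measure_iUnion_null fun k : ℕ => hk k)
    intro x hx
    obtain ⟨k, hk'⟩ := exists_nat_ge (‖x‖)
    refine Set.mem_iUnion.2 ⟨k, hx.1, ?_⟩
    intro j
    rcases eq_or_ne j i with rfl | hj
    · rw [Function.update_self]
      exact hx.2
    · rw [Function.update_of_ne hj]
      refine mem_bigCube fun l => ?_
      exact le_trans (norm_le_pi_norm (x j) l) (le_trans (norm_le_pi_norm x j) hk')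
  have hNnull : volume N = 0 :=
    cyl_null i hNm hNc (measurableSet_cubeSet Q) (volume_cubeSet_pos Q).ne' hcover
  have hae : ∀ᵐ x : ProductSpace n ∂volume, x ∉ N :=
    measure_eq_zero_iff_ae_notMem.1 hNnull
  filter_upwards [hae] with x hx
  refine ⟨((hfm.comp (measurable_update x)).aestronglyMeasurable), ?_⟩
  rw [hasFiniteIntegral_iff_norm]
  simp only [Real.norm_eq_abs]
  have : I x ≠ ⊤ := hx
  exact lt_top_iff_ne_top.2 this
end S13
end Aux13f
section Aux13g
namespace S13
open Function Set Metric MeasureTheory ENNReal Filter Topology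

variable {d : ℕ} {n : Fin d → ℕ}

theorem osc_rect_le (f : ProductSpace n → ℝ) (R : Rect n) :
    ∫⁻ x in rectSet R, ENNReal.ofReal |f x - ⨍ y in rectSet R, f y|
      ≤ bmo1 f * volume (rectSet R) := by
  have h : (volume (rectSet R))⁻¹ *
      ∫⁻ x in rectSet R, ENNReal.ofReal |f x - ⨍ y in rectSet R, f y| ≤ bmo1 f :=
    le_iSup (fun R : Rect n => (volume (rectSet R))⁻¹ *
      ∫⁻ x in rectSet R, ENNReal.ofReal |f x - ⨍ y in rectSet R, f y|) R
  calc ∫⁻ x in rectSet R, ENNReal.ofReal |f x - ⨍ y in rectSet R, f y|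
      = volume (rectSet R) * ((volume (rectSet R))⁻¹ *
        ∫⁻ x in rectSet R, ENNReal.ofReal |f x - ⨍ y in rectSet R, f y|) := by
        rw [← mul_assoc, ENNReal.mul_inv_cancel (volume_rectSet_pos R).ne'
          (volume_rectSet_ne_top R), one_mul]
    _ ≤ volume (rectSet R) * bmo1 f := mul_le_mul_right h _
    _ = bmo1 f * volume (rectSet R) := mul_comm _ _

theorem volume_rect_update (R : Rect n) (i : Fin d) (Q : Cube (n i)) :
    volume (rectSet (Function.update R i Q)) * volume (cubeSet (R i))
      = volume (rectSet R) * volume (cubeSet Q) := by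
  rw [volume_rectSet, volume_rectSet,
    ← Finset.mul_prod_erase Finset.univ (fun j => volume (cubeSet (R j)))
      (Finset.mem_univ i),
    ← Finset.mul_prod_erase Finset.univ
      (fun j => volume (cubeSet (Function.update R i Q j))) (Finset.mem_univ i)]
  have hprod : ∏ j ∈ Finset.univ.erase i, volume (cubeSet (Function.update R i Q j))
      = ∏ j ∈ Finset.univ.erase i, volume (cubeSet (R j)) :=
    Finset.prod_congr rfl fun j hj => by
      rw [Function.update_of_ne (Finset.mem_erase.1 hj).1]
  rw [hprod, Function.update_self]
  ring

/-- Key estimate: the average of the slice oscillation over a rectangle whose `i`-th cube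
is `Q` is controlled by twice the bmo norm. -/
theorem sliceOsc_avg_le (i : Fin d) (Q : Cube (n i)) {f : ProductSpace n → ℝ}
    (hfm : Measurable f) (hf : LocallyIntegrable f volume) (R : Rect n) (hRi : R i = Q) :
    ∫⁻ x in rectSet R, sliceOsc i Q f x ≤ (2 * bmo1 f) * volume (rectSet R) := by
  set a : ℝ := ⨍ y in rectSet R, f y with ha
  have hvQ0 : volume (cubeSet Q) ≠ 0 := (volume_cubeSet_pos Q).ne'
  have hvQt : volume (cubeSet Q) ≠ ⊤ := volume_cubeSet_ne_top Q
  have hinner_meas : Measurable fun x : ProductSpace n =>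
      ∫⁻ t in cubeSet Q, ENNReal.ofReal |f (Function.update x i t) - a| :=
    Measurable.lintegral_prod_right'
      (f := fun p : ProductSpace n × (Fin (n i) → ℝ) =>
        ENNReal.ofReal |f (Function.update p.1 i p.2) - a|)
      (((hfm.comp measurable_update').sub measurable_const).abs.ennreal_ofReal)
  have hL1 := lintegral_update_rect i
    (F := fun y => ENNReal.ofReal |f y - a|) ((hfm.sub measurable_const).abs.ennreal_ofReal) R
  rw [hRi] at hL1
  have step1 : ∫⁻ x in rectSet R, sliceOsc i Q f x
      ≤ ((volume (cubeSet Q))⁻¹ * 2) * ∫⁻ x in rectSet R,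
          ∫⁻ t in cubeSet Q, ENNReal.ofReal |f (Function.update x i t) - a| := by
    calc ∫⁻ x in rectSet R, sliceOsc i Q f x
        ≤ ∫⁻ x in rectSet R, ((volume (cubeSet Q))⁻¹ * 2) *
            ∫⁻ t in cubeSet Q, ENNReal.ofReal |f (Function.update x i t) - a| := by
          refine lintegral_mono_ae ?_
          filter_upwards [ae_restrict_of_ae (ae_sliceIntegrable i Q hfm hf)] with x hx
          calc sliceOsc i Q f x
              ≤ (volume (cubeSet Q))⁻¹ *
                (2 * ∫⁻ t in cubeSet Q, ENNReal.ofReal |f (Function.update x i t) - a|) :=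
                mul_le_mul_right (oscL hvQ0 hvQt hx a) _
            _ = ((volume (cubeSet Q))⁻¹ * 2) *
                ∫⁻ t in cubeSet Q, ENNReal.ofReal |f (Function.update x i t) - a| := by
                rw [mul_assoc]
      _ = _ := lintegral_const_mul _ hinner_meas
  calc ∫⁻ x in rectSet R, sliceOsc i Q f x
      ≤ ((volume (cubeSet Q))⁻¹ * 2) *
        (volume (cubeSet Q) * ∫⁻ x in rectSet R, ENNReal.ofReal |f x - a|) := by
        rw [← hL1]; exact step1
    _ = 2 * ∫⁻ x in rectSet R, ENNReal.ofReal |f x - a| := by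
        rw [← mul_assoc]
        have : (volume (cubeSet Q))⁻¹ * 2 * volume (cubeSet Q) = 2 := by
          rw [mul_comm ((volume (cubeSet Q))⁻¹) 2, mul_assoc,
            ENNReal.inv_mul_cancel hvQ0 hvQt, mul_one]
        rw [this]
    _ ≤ 2 * (bmo1 f * volume (rectSet R)) := mul_le_mul_right (osc_rect_le f R) _
    _ = (2 * bmo1 f) * volume (rectSet R) := by rw [mul_assoc]

theorem sliceOsc_ae_le (i : Fin d) (Q : Cube (n i)) {f : ProductSpace n → ℝ}
    (hfm : Measurable f) (hf : LocallyIntegrable f volume) :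
    ∀ᵐ x : ProductSpace n ∂volume, sliceOsc i Q f x ≤ 2 * bmo1 f := by
  refine ae_le_of_rect_avg (measurable_sliceOsc i Q hfm) (fun R => ?_)
  have hkey := sliceOsc_avg_le i Q hfm hf (Function.update R i Q)
    (Function.update_self _ _ _)
  have htr := cyl_rect i (measurable_sliceOsc i Q hfm) (sliceOsc_update i Q f) R Q
  have hQ0 : volume (cubeSet Q) ≠ 0 := (volume_cubeSet_pos Q).ne'
  have hQt : volume (cubeSet Q) ≠ ⊤ := volume_cubeSet_ne_top Q
  rw [← ENNReal.mul_le_mul_iff_right hQ0 hQt, htr]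
  calc volume (cubeSet (R i)) * ∫⁻ x in rectSet (Function.update R i Q), sliceOsc i Q f x
      ≤ volume (cubeSet (R i)) *
        ((2 * bmo1 f) * volume (rectSet (Function.update R i Q))) := mul_le_mul_right hkey _
    _ = (2 * bmo1 f) * (volume (rectSet (Function.update R i Q)) * volume (cubeSet (R i))) := by
        ring
    _ = (2 * bmo1 f) * (volume (rectSet R) * volume (cubeSet Q)) := by
        rw [volume_rect_update R i Q]
    _ = volume (cubeSet Q) * (2 * bmo1 f * volume (rectSet R)) := by ring

/-- A rational cube. -/
def ratCube (m : ℕ) (c : Fin m → ℚ) (s : {q : ℚ // 0 < q}) : Cube m :=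
  ⟨fun k => (c k : ℝ), (s.1 : ℝ), by exact_mod_cast s.2⟩

theorem cube_subset_ratCube {m : ℕ} (Q' : Cube m) :
    ∃ (c : Fin m → ℚ) (s : {q : ℚ // 0 < q}),
      cubeSet Q' ⊆ cubeSet (ratCube m c s) ∧
      volume (cubeSet (ratCube m c s)) ≤ 2 ^ m * volume (cubeSet Q') := by
  obtain ⟨s, hs1, hs2⟩ := exists_rat_btwn (show Q'.side < 2 * Q'.side by
    have := Q'.side_pos; linarith)
  have hspos : (0 : ℚ) < s := by
    have h0 : (0 : ℝ) < (s : ℝ) := lt_trans Q'.side_pos hs1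
    exact_mod_cast h0
  have hc : ∀ k : Fin m, ∃ c : ℚ, Q'.corner k + Q'.side - s < c ∧ (c : ℝ) < Q'.corner k := by
    intro k
    obtain ⟨c, h1, h2⟩ := exists_rat_btwn (show Q'.corner k + Q'.side - s < Q'.corner k by
      linarith)
    exact ⟨c, h1, h2⟩
  choose c hc1 hc2 using hc
  refine ⟨c, ⟨s, hspos⟩, ?_, ?_⟩
  · intro x hx k
    have h := hx k
    simp only [ratCube]
    constructor
    · linarith [h.1, hc2 k]
    · have : x k < Q'.corner k + Q'.side := h.2
      linarith [hc1 k]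
  · rw [volume_cubeSet, volume_cubeSet]
    simp only [ratCube]
    calc ENNReal.ofReal (s : ℝ) ^ m ≤ ENNReal.ofReal (2 * Q'.side) ^ m :=
        pow_le_pow_left' (ENNReal.ofReal_le_ofReal hs2.le) m
      _ = 2 ^ m * ENNReal.ofReal Q'.side ^ m := by
        rw [ENNReal.ofReal_mul (by norm_num), mul_pow]
        norm_num
end S13
end Aux13g
section Aux13h
namespace S13
open Function Set Metric MeasureTheory ENNReal Filter Topology

variable {d : ℕ} {n : Fin d → ℕ}

/-- Claim 2: a.e. bound for the slice bmo norm by the little bmo norm. -/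
theorem claim2 (i : Fin d) {f : ProductSpace n → ℝ} (hfm : Measurable f)
    (hf : LocallyIntegrable f volume) :
    ∀ᵐ x : ProductSpace n ∂volume,
      bmo1Cube (fun t => f (Function.update x i t)) ≤ 2 ^ (n i + 2) * bmo1 f := by
  have h1 : ∀ᵐ x : ProductSpace n ∂volume, ∀ (c : Fin (n i) → ℚ) (s : {q : ℚ // 0 < q}),
      sliceOsc i (ratCube (n i) c s) f x ≤ 2 * bmo1 f ∧
      IntegrableOn (fun t => f (Function.update x i t))
        (cubeSet (ratCube (n i) c s)) volume := by
    rw [ae_all_iff]; intro c; rw [ae_all_iff]; intro s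
    exact (sliceOsc_ae_le i _ hfm hf).and (ae_sliceIntegrable i _ hfm hf)
  filter_upwards [h1] with x hx
  rw [bmo1Cube_slice]
  refine iSup_le fun Q' => ?_
  obtain ⟨c, s, hsub, hvol⟩ := cube_subset_ratCube Q'
  obtain ⟨hosc, hint⟩ := hx c s
  set Q := ratCube (n i) c s with hQ
  set a : ℝ := sliceMean i Q f x with ha
  have hvQ'0 : volume (cubeSet Q') ≠ 0 := (volume_cubeSet_pos Q').ne'
  have hvQ't : volume (cubeSet Q') ≠ ⊤ := volume_cubeSet_ne_top Q'
  have hvQ0 : volume (cubeSet Q) ≠ 0 := (volume_cubeSet_pos Q).ne'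
  have hvQt : volume (cubeSet Q) ≠ ⊤ := volume_cubeSet_ne_top Q
  have hosc' : ∫⁻ t in cubeSet Q', ENNReal.ofReal
        |f (Function.update x i t) - sliceMean i Q' f x|
      ≤ 2 * ∫⁻ t in cubeSet Q', ENNReal.ofReal |f (Function.update x i t) - a| := by
    have := oscL (g := fun t => f (Function.update x i t)) hvQ'0 hvQ't
      (hint.mono_set hsub) a
    simpa [sliceMean] using this
  have hmono : ∫⁻ t in cubeSet Q', ENNReal.ofReal |f (Function.update x i t) - a|
      ≤ ∫⁻ t in cubeSet Q, ENNReal.ofReal |f (Function.update x i t) - a| :=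
    lintegral_mono_set hsub
  have hQosc : ∫⁻ t in cubeSet Q, ENNReal.ofReal |f (Function.update x i t) - a|
      = volume (cubeSet Q) * sliceOsc i Q f x := by
    rw [sliceOsc, ← ha, ← mul_assoc, ENNReal.mul_inv_cancel hvQ0 hvQt, one_mul]
  have hQQ' : (volume (cubeSet Q'))⁻¹ * volume (cubeSet Q) ≤ 2 ^ (n i) := by
    calc (volume (cubeSet Q'))⁻¹ * volume (cubeSet Q)
        ≤ (volume (cubeSet Q'))⁻¹ * (2 ^ (n i) * volume (cubeSet Q')) :=
          mul_le_mul_right hvol _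
      _ = 2 ^ (n i) * ((volume (cubeSet Q'))⁻¹ * volume (cubeSet Q')) := by ring
      _ = 2 ^ (n i) := by rw [ENNReal.inv_mul_cancel hvQ'0 hvQ't, mul_one]
  calc sliceOsc i Q' f x
      ≤ (volume (cubeSet Q'))⁻¹ *
        (2 * ∫⁻ t in cubeSet Q', ENNReal.ofReal |f (Function.update x i t) - a|) := by
        rw [sliceOsc]
        exact mul_le_mul_right hosc' _
    _ ≤ (volume (cubeSet Q'))⁻¹ *
        (2 * (volume (cubeSet Q) * sliceOsc i Q f x)) := by
        rw [← hQosc]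
        exact mul_le_mul_right (mul_le_mul_right hmono _) _
    _ ≤ (volume (cubeSet Q'))⁻¹ * (2 * (volume (cubeSet Q) * (2 * bmo1 f))) := by
        exact mul_le_mul_right (mul_le_mul_right (mul_le_mul_right hosc _) _) _
    _ = ((volume (cubeSet Q'))⁻¹ * volume (cubeSet Q)) * (2 * 2 * bmo1 f) := by ring
    _ ≤ 2 ^ (n i) * (2 * 2 * bmo1 f) := mul_le_mul_left hQQ' _
    _ = 2 ^ (n i + 2) * bmo1 f := by
        rw [pow_add]
        ring
end S13
end Aux13h
section Aux13i
namespace S13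
open Function Set Metric MeasureTheory ENNReal Filter Topology

variable {d : ℕ} {n : Fin d → ℕ}

theorem ofReal_abs_integral_le {α : Type*} [MeasurableSpace α] (μ : Measure α) (g : α → ℝ) :
    ENNReal.ofReal |∫ x, g x ∂μ| ≤ ∫⁻ x, ENNReal.ofReal |g x| ∂μ := by
  by_cases hg : Integrable g μ
  · calc ENNReal.ofReal |∫ x, g x ∂μ| ≤ ENNReal.ofReal (∫ x, |g x| ∂μ) :=
        ENNReal.ofReal_le_ofReal (by simpa [Real.norm_eq_abs] using norm_integral_le_integral_norm g (μ := μ))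
      _ = ∫⁻ x, ENNReal.ofReal |g x| ∂μ :=
        ofReal_integral_eq_lintegral_ofReal hg.abs (ae_of_all _ fun y => abs_nonneg _)
  · rw [integral_undef hg]
    simp

theorem ofReal_sliceMean_le (i : Fin d) (Q : Cube (n i)) (g : ProductSpace n → ℝ)
    (x : ProductSpace n) :
    ENNReal.ofReal |sliceMean i Q g x|
      ≤ (volume (cubeSet Q))⁻¹ * ∫⁻ t in cubeSet Q,
          ENNReal.ofReal |g (Function.update x i t)| := by
  rw [sliceMean, setAverage_eq, smul_eq_mul, measureReal_def, abs_mul,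
    abs_of_nonneg (inv_nonneg.2 ENNReal.toReal_nonneg),
    ENNReal.ofReal_mul (inv_nonneg.2 ENNReal.toReal_nonneg),
    ENNReal.ofReal_inv_of_pos (ENNReal.toReal_pos (volume_cubeSet_pos Q).ne'
      (volume_cubeSet_ne_top Q)),
    ENNReal.ofReal_toReal (volume_cubeSet_ne_top Q)]
  exact mul_le_mul_right (ofReal_abs_integral_le _ _) _

theorem lintegral_sliceMean_abs_le (i : Fin d) (R : Rect n) {g : ProductSpace n → ℝ}
    (hg : Measurable g) :
    ∫⁻ x in rectSet R, ENNReal.ofReal |sliceMean i (R i) g x|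
      ≤ ∫⁻ x in rectSet R, ENNReal.ofReal |g x| := by
  have hinner : Measurable fun x : ProductSpace n =>
      ∫⁻ t in cubeSet (R i), ENNReal.ofReal |g (Function.update x i t)| :=
    Measurable.lintegral_prod_right'
      (f := fun p : ProductSpace n × (Fin (n i) → ℝ) =>
        ENNReal.ofReal |g (Function.update p.1 i p.2)|)
      ((hg.comp measurable_update').abs.ennreal_ofReal)
  calc ∫⁻ x in rectSet R, ENNReal.ofReal |sliceMean i (R i) g x|
      ≤ ∫⁻ x in rectSet R, (volume (cubeSet (R i)))⁻¹ *
          ∫⁻ t in cubeSet (R i), ENNReal.ofReal |g (Function.update x i t)| :=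
        lintegral_mono fun x => ofReal_sliceMean_le i (R i) g x
    _ = (volume (cubeSet (R i)))⁻¹ * ∫⁻ x in rectSet R,
          ∫⁻ t in cubeSet (R i), ENNReal.ofReal |g (Function.update x i t)| :=
        lintegral_const_mul _ hinner
    _ = (volume (cubeSet (R i)))⁻¹ * (volume (cubeSet (R i)) *
          ∫⁻ x in rectSet R, ENNReal.ofReal |g x|) := by
        rw [lintegral_update_rect i hg.abs.ennreal_ofReal R]
    _ = ∫⁻ x in rectSet R, ENNReal.ofReal |g x| := by
        rw [← mul_assoc, ENNReal.inv_mul_cancel (volume_cubeSet_pos (R i)).ne'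
          (volume_cubeSet_ne_top (R i)), one_mul]

theorem ae_sliceIntegrableOn_of_lintegral (i : Fin d) (R : Rect n) {g : ProductSpace n → ℝ}
    (hg : Measurable g)
    (hfin : ∫⁻ x in rectSet R, ENNReal.ofReal |g x| ≠ ⊤) :
    ∀ᵐ x ∂(volume.restrict (rectSet R)),
      IntegrableOn (fun t => g (Function.update x i t)) (cubeSet (R i)) volume := by
  have hinner : Measurable fun x : ProductSpace n =>
      ∫⁻ t in cubeSet (R i), ENNReal.ofReal |g (Function.update x i t)| :=
    Measurable.lintegral_prod_right'
      (f := fun p : ProductSpace n × (Fin (n i) → ℝ) =>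
        ENNReal.ofReal |g (Function.update p.1 i p.2)|)
      ((hg.comp measurable_update').abs.ennreal_ofReal)
  have hL1 := lintegral_update_rect i hg.abs.ennreal_ofReal R
  have hfin2 : ∫⁻ x in rectSet R,
      (∫⁻ t in cubeSet (R i), ENNReal.ofReal |g (Function.update x i t)|) ≠ ⊤ := by
    rw [hL1]
    exact (ENNReal.mul_lt_top (volume_cubeSet_ne_top (R i)).lt_top hfin.lt_top).ne
  filter_upwards [ae_lt_top hinner hfin2] with x hx
  refine ⟨(hg.comp (measurable_update x)).aestronglyMeasurable, ?_⟩
  rw [hasFiniteIntegral_iff_norm]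
  simpa [Real.norm_eq_abs] using hx

theorem lintegral_sliceMean_sub (i : Fin d) (R : Rect n) {g1 g2 : ProductSpace n → ℝ}
    (hg1 : Measurable g1) (hg2 : Measurable g2)
    (hi1 : ∀ᵐ x ∂(volume.restrict (rectSet R)),
      IntegrableOn (fun t => g1 (Function.update x i t)) (cubeSet (R i)) volume)
    (hi2 : ∀ᵐ x ∂(volume.restrict (rectSet R)),
      IntegrableOn (fun t => g2 (Function.update x i t)) (cubeSet (R i)) volume) :
    ∫⁻ x in rectSet R, ENNReal.ofReal |sliceMean i (R i) g1 x - sliceMean i (R i) g2 x|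
      ≤ ∫⁻ x in rectSet R, ENNReal.ofReal |g1 x - g2 x| := by
  have hptwise : ∀ᵐ x ∂(volume.restrict (rectSet R)),
      ENNReal.ofReal |sliceMean i (R i) g1 x - sliceMean i (R i) g2 x|
        ≤ (volume (cubeSet (R i)))⁻¹ * ∫⁻ t in cubeSet (R i),
            ENNReal.ofReal |g1 (Function.update x i t) - g2 (Function.update x i t)| := by
    filter_upwards [hi1, hi2] with x hx1 hx2
    have hsub : sliceMean i (R i) g1 x - sliceMean i (R i) g2 x
        = sliceMean i (R i) (fun y => g1 y - g2 y) x := by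
      rw [sliceMean, sliceMean, sliceMean, setAverage_eq, setAverage_eq, setAverage_eq,
        smul_eq_mul, smul_eq_mul, smul_eq_mul, ← mul_sub]
      congr 1
      rw [← integral_sub hx1 hx2]
    rw [hsub]
    exact ofReal_sliceMean_le i (R i) _ x
  have hinner : Measurable fun x : ProductSpace n =>
      ∫⁻ t in cubeSet (R i), ENNReal.ofReal
        |g1 (Function.update x i t) - g2 (Function.update x i t)| :=
    Measurable.lintegral_prod_right'
      (f := fun p : ProductSpace n × (Fin (n i) → ℝ) =>
        ENNReal.ofReal |g1 (Function.update p.1 i p.2) - g2 (Function.update p.1 i p.2)|)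
      (((hg1.comp measurable_update').sub (hg2.comp measurable_update')).abs.ennreal_ofReal)
  calc ∫⁻ x in rectSet R, ENNReal.ofReal |sliceMean i (R i) g1 x - sliceMean i (R i) g2 x|
      ≤ ∫⁻ x in rectSet R, (volume (cubeSet (R i)))⁻¹ * ∫⁻ t in cubeSet (R i),
          ENNReal.ofReal |g1 (Function.update x i t) - g2 (Function.update x i t)| :=
        lintegral_mono_ae hptwise
    _ = (volume (cubeSet (R i)))⁻¹ * ∫⁻ x in rectSet R, ∫⁻ t in cubeSet (R i),
          ENNReal.ofReal |g1 (Function.update x i t) - g2 (Function.update x i t)| :=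
        lintegral_const_mul _ hinner
    _ = (volume (cubeSet (R i)))⁻¹ * (volume (cubeSet (R i)) *
          ∫⁻ x in rectSet R, ENNReal.ofReal |g1 x - g2 x|) := by
        have h := lintegral_update_rect i ((hg1.sub hg2).abs.ennreal_ofReal) R; simp only [Pi.sub_apply] at h; rw [h]
    _ = ∫⁻ x in rectSet R, ENNReal.ofReal |g1 x - g2 x| := by
        rw [← mul_assoc, ENNReal.inv_mul_cancel (volume_cubeSet_pos (R i)).ne'
          (volume_cubeSet_ne_top (R i)), one_mul]

/-- Iterated block averaging. -/
noncomputable def itMean (R : Rect n) : List (Fin d) → (ProductSpace n → ℝ) → ProductSpace n → ℝ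
  | [], g => g
  | i :: l, g => sliceMean i (R i) (itMean R l g)

theorem measurable_itMean (R : Rect n) (l : List (Fin d)) {g : ProductSpace n → ℝ}
    (hg : Measurable g) : Measurable (itMean R l g) := by
  induction l with
  | nil => exact hg
  | cons i l ih => exact measurable_sliceMean i (R i) ih

theorem itMean_update (R : Rect n) (l : List (Fin d)) (g : ProductSpace n → ℝ)
    (j : Fin d) (hj : j ∈ l) (x : ProductSpace n) (t : Fin (n j) → ℝ) :
    itMean R l g (Function.update x j t) = itMean R l g x := by
  induction l generalizing x with
  | nil => cases hj
  | cons i l ih =>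
    rcases eq_or_ne j i with rfl | hne
    · exact sliceMean_update j (R j) _ x t
    · have hjl : j ∈ l := by
        rcases List.mem_cons.1 hj with h | h
        · exact absurd h hne
        · exact h
      show sliceMean i (R i) (itMean R l g) (Function.update x j t)
        = sliceMean i (R i) (itMean R l g) x
      rw [sliceMean, sliceMean]
      congr 1
      funext s
      rw [Function.update_comm hne, ih hjl]

theorem itMean_const (R : Rect n) (g : ProductSpace n → ℝ) (x y : ProductSpace n) :
    itMean R (List.finRange d) g x = itMean R (List.finRange d) g y := by
  set h := itMean R (List.finRange d) g with hh
  have hind : ∀ (j : Fin d) (x : ProductSpace n) (t : Fin (n j) → ℝ),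
      h (Function.update x j t) = h x :=
    fun j x t => itMean_update R _ g j (List.mem_finRange j) x t
  let z : List (Fin d) → ProductSpace n :=
    fun l => l.foldr (fun i w => Function.update w i (y i)) x
  have hz : ∀ l : List (Fin d), h (z l) = h x := by
    intro l
    induction l with
    | nil => rfl
    | cons i l ih =>
      calc h (z (i :: l)) = h (Function.update (z l) i (y i)) := rfl
        _ = h (z l) := hind i _ _
        _ = h x := ih
  have hcoord : ∀ (l : List (Fin d)) (j : Fin d), j ∈ l → z l j = y j := by
    intro l
    induction l with
    | nil => intro j hj; cases hj
    | cons i l ih =>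
      intro j hj
      show Function.update (z l) i (y i) j = y j
      rcases eq_or_ne j i with rfl | hne
      · rw [Function.update_self]
      · rw [Function.update_of_ne hne]
        refine ih j ?_
        rcases List.mem_cons.1 hj with h' | h'
        · exact absurd h' hne
        · exact h'
  have hzy : z (List.finRange d) = y := funext fun j => hcoord _ j (List.mem_finRange j)
  rw [← hzy, hz]

theorem lintegral_itMean_abs_le (R : Rect n) (l : List (Fin d)) {g : ProductSpace n → ℝ}
    (hg : Measurable g) :
    ∫⁻ x in rectSet R, ENNReal.ofReal |itMean R l g x|
      ≤ ∫⁻ x in rectSet R, ENNReal.ofReal |g x| := by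
  induction l with
  | nil => exact le_rfl
  | cons i l ih =>
    exact le_trans (lintegral_sliceMean_abs_le i R (measurable_itMean R l hg)) ih

/-- The one-step oscillation bound coming from the slice bmo hypothesis. -/
theorem step_bound (R : Rect n) (i : Fin d) {f : ProductSpace n → ℝ} (hfm : Measurable f)
    {C : ℝ} (hC : ∀ᵐ x : ProductSpace n ∂volume,
      bmo1Cube (fun t => f (Function.update x i t)) ≤ ENNReal.ofReal C) :
    ∫⁻ x in rectSet R, ENNReal.ofReal |f x - sliceMean i (R i) f x|
      ≤ ENNReal.ofReal C * volume (rectSet R) := by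
  set Q := R i with hQ
  have hvQ0 : volume (cubeSet Q) ≠ 0 := (volume_cubeSet_pos Q).ne'
  have hvQt : volume (cubeSet Q) ≠ ⊤ := volume_cubeSet_ne_top Q
  have hmeasF : Measurable fun y : ProductSpace n =>
      ENNReal.ofReal |f y - sliceMean i Q f y| :=
    (hfm.sub (measurable_sliceMean i Q hfm)).abs.ennreal_ofReal
  have hL1 := lintegral_update_rect i hmeasF R
  have hinner_bound : ∀ᵐ x ∂(volume.restrict (rectSet R)),
      (∫⁻ t in cubeSet Q, ENNReal.ofReal
        |f (Function.update x i t) - sliceMean i Q f (Function.update x i t)|)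
      ≤ volume (cubeSet Q) * ENNReal.ofReal C := by
    filter_upwards [ae_restrict_of_ae hC] with x hx
    have heq : ∀ t : Fin (n i) → ℝ,
        ENNReal.ofReal |f (Function.update x i t) - sliceMean i Q f (Function.update x i t)|
        = ENNReal.ofReal |f (Function.update x i t) - sliceMean i Q f x| := by
      intro t; rw [sliceMean_update]
    calc (∫⁻ t in cubeSet Q, ENNReal.ofReal
          |f (Function.update x i t) - sliceMean i Q f (Function.update x i t)|)
        = ∫⁻ t in cubeSet Q, ENNReal.ofReal
            |f (Function.update x i t) - sliceMean i Q f x| := by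
          exact lintegral_congr fun t => heq t
      _ = volume (cubeSet Q) * sliceOsc i Q f x := by
          rw [sliceOsc, ← mul_assoc, ENNReal.mul_inv_cancel hvQ0 hvQt, one_mul]
      _ ≤ volume (cubeSet Q) * ENNReal.ofReal C := by
          refine mul_le_mul_right (le_trans ?_ hx) _
          rw [bmo1Cube_slice]
          exact le_iSup (fun Q'' : Cube (n i) => sliceOsc i Q'' f x) Q
  have h2 : volume (cubeSet Q) * ∫⁻ x in rectSet R,
      ENNReal.ofReal |f x - sliceMean i Q f x|
      ≤ volume (cubeSet Q) * (ENNReal.ofReal C * volume (rectSet R)) := by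
    rw [← hL1]
    calc ∫⁻ x in rectSet R, ∫⁻ t in cubeSet (R i), ENNReal.ofReal
          |f (Function.update x i t) - sliceMean i Q f (Function.update x i t)|
        ≤ ∫⁻ _x in rectSet R, volume (cubeSet Q) * ENNReal.ofReal C :=
          lintegral_mono_ae hinner_bound
      _ = volume (cubeSet Q) * ENNReal.ofReal C * volume (rectSet R) := by
          rw [setLIntegral_const]
      _ = volume (cubeSet Q) * (ENNReal.ofReal C * volume (rectSet R)) := by ring
  exact (ENNReal.mul_le_mul_iff_right hvQ0 hvQt).1 h2

/-- Telescoping estimate. -/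
theorem telescope (R : Rect n) {f : ProductSpace n → ℝ} (hfm : Measurable f)
    (hf : LocallyIntegrable f volume) {C : ℝ}
    (hC : ∀ i : Fin d, ∀ᵐ x : ProductSpace n ∂volume,
      bmo1Cube (fun t => f (Function.update x i t)) ≤ ENNReal.ofReal C)
    (l : List (Fin d)) :
    ∫⁻ x in rectSet R, ENNReal.ofReal |f x - itMean R l f x|
      ≤ (l.length : ℝ≥0∞) * (ENNReal.ofReal C * volume (rectSet R)) := by
  induction l with
  | nil =>
    simp [itMean]
  | cons i l ih =>
    set F := itMean R l f with hF
    have hFm : Measurable F := measurable_itMean R l hfm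
    have hfint : ∫⁻ x in rectSet R, ENNReal.ofReal |f x| ≠ ⊤ :=
      (lintegral_abs_rect_lt_top hf R).ne
    have hFint : ∫⁻ x in rectSet R, ENNReal.ofReal |F x| ≠ ⊤ :=
      (lt_of_le_of_lt (lintegral_itMean_abs_le R l hfm) (lintegral_abs_rect_lt_top hf R)).ne
    have hptwise : ∀ x : ProductSpace n,
        ENNReal.ofReal |f x - itMean R (i :: l) f x|
          ≤ ENNReal.ofReal |f x - sliceMean i (R i) f x|
            + ENNReal.ofReal |sliceMean i (R i) f x - sliceMean i (R i) F x| := by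
      intro x
      have habs : |f x - itMean R (i :: l) f x|
          ≤ |f x - sliceMean i (R i) f x|
            + |sliceMean i (R i) f x - sliceMean i (R i) F x| := by
        have : itMean R (i :: l) f = sliceMean i (R i) F := rfl
        rw [this]
        exact abs_sub_le _ _ _
      exact le_trans (ENNReal.ofReal_le_ofReal habs) (ENNReal.ofReal_add_le)
    calc ∫⁻ x in rectSet R, ENNReal.ofReal |f x - itMean R (i :: l) f x|
        ≤ ∫⁻ x in rectSet R, (ENNReal.ofReal |f x - sliceMean i (R i) f x|
            + ENNReal.ofReal |sliceMean i (R i) f x - sliceMean i (R i) F x|) :=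
          lintegral_mono hptwise
      _ = (∫⁻ x in rectSet R, ENNReal.ofReal |f x - sliceMean i (R i) f x|)
           + ∫⁻ x in rectSet R,
              ENNReal.ofReal |sliceMean i (R i) f x - sliceMean i (R i) F x| := by
          rw [lintegral_add_left (f := fun x => ENNReal.ofReal |f x - sliceMean i (R i) f x|) ((hfm.sub (measurable_sliceMean i (R i) hfm)).abs.ennreal_ofReal)]
      _ ≤ ENNReal.ofReal C * volume (rectSet R)
           + ∫⁻ x in rectSet R, ENNReal.ofReal |f x - F x| := by
          refine add_le_add (step_bound R i hfm (hC i)) ?_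
          exact lintegral_sliceMean_sub i R hfm hFm
            (ae_restrict_of_ae (ae_sliceIntegrable i (R i) hfm hf))
            (ae_sliceIntegrableOn_of_lintegral i R hFm hFint)
      _ ≤ ENNReal.ofReal C * volume (rectSet R)
           + (l.length : ℝ≥0∞) * (ENNReal.ofReal C * volume (rectSet R)) := add_le_add_right ih _
      _ = ((i :: l).length : ℝ≥0∞) * (ENNReal.ofReal C * volume (rectSet R)) := by
          rw [List.length_cons]
          push_cast
          ring
end S13
end Aux13i
section Aux13j
namespace S13
open Function Set Metric MeasureTheory ENNReal Filter Topology

variable {d : ℕ} {n : Fin d → ℕ}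

/-- Claim 3: slice bmo bounds imply the little bmo bound. -/
theorem claim3 {f : ProductSpace n → ℝ} (hfm : Measurable f) (hf : LocallyIntegrable f volume)
    {C : ℝ} (hC : ∀ i : Fin d, ∀ᵐ x : ProductSpace n ∂volume,
      bmo1Cube (fun t => f (Function.update x i t)) ≤ ENNReal.ofReal C) :
    bmo1 f ≤ 2 * (d : ℝ≥0∞) * ENNReal.ofReal C := by
  refine iSup_le fun R => ?_
  set x0 : ProductSpace n := fun j => fun k => 0 with hx0
  set b : ℝ := itMean R (List.finRange d) f x0 with hb
  have hosc := oscL (μ := (volume : Measure (ProductSpace n)))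
    (volume_rectSet_pos R).ne' (volume_rectSet_ne_top R) (integrableOn_rectSet hf R) b
  have hcongr : ∫⁻ x in rectSet R, ENNReal.ofReal |f x - b|
      = ∫⁻ x in rectSet R, ENNReal.ofReal |f x - itMean R (List.finRange d) f x| :=
    lintegral_congr fun x => by rw [show itMean R (List.finRange d) f x = b from
      itMean_const R f x x0]
  have htel := telescope R hfm hf hC (List.finRange d)
  rw [List.length_finRange] at htel
  have hbound : ∫⁻ x in rectSet R, ENNReal.ofReal |f x - ⨍ y in rectSet R, f y|
      ≤ 2 * ((d : ℝ≥0∞) * (ENNReal.ofReal C * volume (rectSet R))) :=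
    le_trans hosc (mul_le_mul_right (le_of_eq_of_le hcongr htel) 2)
  have hv0 := (volume_rectSet_pos R).ne'
  have hvt := volume_rectSet_ne_top R
  calc (volume (rectSet R))⁻¹ *
        ∫⁻ x in rectSet R, ENNReal.ofReal |f x - ⨍ y in rectSet R, f y|
      ≤ (volume (rectSet R))⁻¹ *
        (2 * ((d : ℝ≥0∞) * (ENNReal.ofReal C * volume (rectSet R)))) :=
        mul_le_mul_right hbound _
    _ = (2 * (d : ℝ≥0∞) * ENNReal.ofReal C) *
        ((volume (rectSet R))⁻¹ * volume (rectSet R)) := by ring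
    _ = 2 * (d : ℝ≥0∞) * ENNReal.ofReal C := by
        rw [ENNReal.inv_mul_cancel hv0 hvt, mul_one]

theorem locallyIntegrable_congr {f g : ProductSpace n → ℝ}
    (hf : LocallyIntegrable f volume) (h : f =ᵐ[volume] g) : LocallyIntegrable g volume := by
  intro x
  obtain ⟨s, hs, hint⟩ := hf x
  exact ⟨s, hs, hint.congr (ae_restrict_of_ae h)⟩

theorem bmo1_congr {f g : ProductSpace n → ℝ} (h : f =ᵐ[volume] g) : bmo1 f = bmo1 g := by
  refine iSup_congr fun R => ?_
  have hres : f =ᵐ[volume.restrict (rectSet R)] g := ae_restrict_of_ae h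
  have havg : (⨍ y in rectSet R, f y) = ⨍ y in rectSet R, g y := average_congr hres
  congr 1
  refine lintegral_congr_ae ?_
  filter_upwards [hres] with x hx
  rw [hx, havg]

theorem bmo1Cube_congr {m : ℕ} {g1 g2 : (Fin m → ℝ) → ℝ} (h : g1 =ᵐ[volume] g2) :
    bmo1Cube g1 = bmo1Cube g2 := by
  refine iSup_congr fun Q => ?_
  have hres : g1 =ᵐ[volume.restrict (cubeSet Q)] g2 := ae_restrict_of_ae h
  have havg : (⨍ y in cubeSet Q, g1 y) = ⨍ y in cubeSet Q, g2 y := average_congr hres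
  congr 1
  refine lintegral_congr_ae ?_
  filter_upwards [hres] with x hx
  rw [hx, havg]

/-- Almost every slice of two a.e.-equal functions are a.e. equal. -/
theorem ae_slice_eq (i : Fin d) {f g : ProductSpace n → ℝ} (h : f =ᵐ[volume] g) :
    ∀ᵐ x : ProductSpace n ∂volume,
      (fun t => f (Function.update x i t)) =ᵐ[volume] fun t => g (Function.update x i t) := by
  obtain ⟨N, hsub, hNm, hN0⟩ := exists_measurable_superset_of_null (ae_iff.1 h)
  set w : ProductSpace n → ℝ≥0∞ :=
    fun x => ∫⁻ t, N.indicator 1 (Function.update x i t) with hw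
  have hwm : Measurable w :=
    Measurable.lintegral_prod_right'
      (f := fun p : ProductSpace n × (Fin (n i) → ℝ) =>
        N.indicator 1 (Function.update p.1 i p.2))
      ((measurable_one.indicator hNm).comp measurable_update')
  have hkey : ∀ k : ℕ, ∀ᵐ x : ProductSpace n ∂volume,
      (cubeSet (bigCube (n i) k)).indicator 1 (x i) * w x = 0 := by
    intro k
    set s := cubeSet (bigCube (n i) k) with hs
    have hsm : MeasurableSet s := measurableSet_cubeSet _
    have hH : Measurable fun p : ProductSpace n × (Fin (n i) → ℝ) =>
        s.indicator (1 : (Fin (n i) → ℝ) → ℝ≥0∞) p.2 * N.indicator 1 p.1 :=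
      ((measurable_one.indicator hsm).comp measurable_snd).mul
        ((measurable_one.indicator hNm).comp measurable_fst)
    have hswap := swap_lintegral i hH
    have hL : ∫⁻ x : ProductSpace n, ∫⁻ t : Fin (n i) → ℝ,
        s.indicator 1 t * N.indicator 1 x = 0 := by
      have : ∀ x : ProductSpace n, ∫⁻ t : Fin (n i) → ℝ,
          s.indicator (1 : (Fin (n i) → ℝ) → ℝ≥0∞) t * N.indicator 1 x
          = N.indicator 1 x * volume s := by
        intro x
        rw [lintegral_mul_const _ (measurable_one.indicator hsm), lintegral_indicator hsm]
        simp [setLIntegral_one, mul_comm]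
      simp only [this]
      rw [lintegral_mul_const _ (measurable_one.indicator hNm), lintegral_indicator hNm]
      simp [setLIntegral_one, hN0]
    have hR : ∫⁻ x : ProductSpace n, ∫⁻ t : Fin (n i) → ℝ,
        s.indicator 1 (x i) * N.indicator 1 (Function.update x i t)
        = ∫⁻ x : ProductSpace n, s.indicator 1 (x i) * w x := by
      refine lintegral_congr fun x => ?_
      rw [hw]
      simp only
      exact lintegral_const_mul _ ((measurable_one.indicator hNm).comp (measurable_update x))
    have heq0 : ∫⁻ x : ProductSpace n, s.indicator 1 (x i) * w x = 0 := by
      rw [← hR]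
      calc ∫⁻ x : ProductSpace n, ∫⁻ t : Fin (n i) → ℝ,
            s.indicator 1 (x i) * N.indicator 1 (Function.update x i t)
          = ∫⁻ x : ProductSpace n, ∫⁻ t : Fin (n i) → ℝ,
            s.indicator 1 t * N.indicator 1 x := hswap.symm
        _ = 0 := hL
    have hmeas : Measurable fun x : ProductSpace n => s.indicator 1 (x i) * w x :=
      ((measurable_one.indicator hsm).comp (measurable_pi_apply i)).mul hwm
    exact (lintegral_eq_zero_iff hmeas).1 heq0
  have hall := ae_all_iff.2 hkey
  filter_upwards [hall] with x hx
  obtain ⟨k, hk⟩ := exists_nat_ge (‖x i‖)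
  have hmem : x i ∈ cubeSet (bigCube (n i) k) :=
    mem_bigCube fun l => le_trans (norm_le_pi_norm (x i) l) hk
  have hw0 : w x = 0 := by
    have := hx k
    rw [Set.indicator_of_mem hmem] at this
    simpa using this
  have hpre : volume {t : Fin (n i) → ℝ | Function.update x i t ∈ N} = 0 := by
    have : w x = volume {t : Fin (n i) → ℝ | Function.update x i t ∈ N} := by
      rw [hw]
      simp only
      have heq : (fun t : Fin (n i) → ℝ => N.indicator (1 : ProductSpace n → ℝ≥0∞)
          (Function.update x i t))
          = {t : Fin (n i) → ℝ | Function.update x i t ∈ N}.indicator 1 := by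
        funext t
        by_cases ht : Function.update x i t ∈ N
        · rw [Set.indicator_of_mem ht, Set.indicator_of_mem (by exact ht)]; rfl
        · rw [Set.indicator_of_notMem ht, Set.indicator_of_notMem (by exact ht)]
      rw [heq]
      exact lintegral_indicator_one ((measurable_update x) hNm)
    rw [← this, hw0]
  refine ae_iff.2 (measure_mono_null ?_ hpre)
  intro t ht
  exact hsub ht
end S13
end Aux13j
/-- a locally integrable `f` has finite little `bmo` norm iff for every
block `i` and a.e. choice of the remaining variables, the one-variable function
`t ↦ f(…,t,…)` has one-parameter `BMO(ℝ^{nᵢ})` norm at most some constant `C`;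
moreover the least such `C` and `‖f‖_bmo` are equivalent, with constants depending
only on `d`. -/
theorem statement13 {d : ℕ} (hd : 1 ≤ d) (n : Fin d → ℕ) (hn : ∀ i, 1 ≤ n i) :
    ∃ c > (0 : ℝ), ∀ f : ProductSpace n → ℝ, LocallyIntegrable f volume →
      ((bmo1 f ≠ ⊤ ↔ ∃ C : ℝ, 0 ≤ C ∧ ∀ i : Fin d,
          ∀ᵐ x ∂(volume : Measure (ProductSpace n)),
            bmo1Cube (fun t => f (Function.update x i t)) ≤ ENNReal.ofReal C) ∧
        (∀ i : Fin d, ∀ᵐ x ∂(volume : Measure (ProductSpace n)),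
          bmo1Cube (fun t => f (Function.update x i t)) ≤ ENNReal.ofReal c * bmo1 f) ∧
        (∀ C : ℝ, 0 ≤ C →
          (∀ i : Fin d, ∀ᵐ x ∂(volume : Measure (ProductSpace n)),
            bmo1Cube (fun t => f (Function.update x i t)) ≤ ENNReal.ofReal C) →
          bmo1 f ≤ ENNReal.ofReal (c * C))) := by
  classical
  set M : ℕ := Finset.univ.sup n with hM
  set c : ℝ := 2 ^ (M + 2) + 2 * d with hc
  have hc0 : (0 : ℝ) < c := by positivity
  refine ⟨c, hc0, ?_⟩
  intro f hf
  have hsm := hf.aestronglyMeasurable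
  set g : ProductSpace n → ℝ := hsm.mk f with hg
  have hfg : f =ᵐ[volume] g := hsm.ae_eq_mk
  have hgm : Measurable g := hsm.stronglyMeasurable_mk.measurable
  have hgl : LocallyIntegrable g volume := S13.locallyIntegrable_congr hf hfg
  have hbmoeq : bmo1 f = bmo1 g := S13.bmo1_congr hfg
  have hsliceeq : ∀ i : Fin d, ∀ᵐ x : ProductSpace n ∂volume,
      bmo1Cube (fun t => f (Function.update x i t))
        = bmo1Cube (fun t => g (Function.update x i t)) := by
    intro i
    filter_upwards [S13.ae_slice_eq i hfg] with x hx
    exact S13.bmo1Cube_congr hx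
  have hcoef1 : ∀ i : Fin d, (2 : ℝ≥0∞) ^ (n i + 2) ≤ ENNReal.ofReal c := by
    intro i
    have hle : n i + 2 ≤ M + 2 := by
      have : n i ≤ M := Finset.le_sup (Finset.mem_univ i)
      omega
    have h1 : (2 : ℝ≥0∞) ^ (n i + 2) ≤ (2 : ℝ≥0∞) ^ (M + 2) :=
      pow_le_pow_right₀ (by norm_num) hle
    have h2 : ((2 : ℝ≥0∞)) ^ (M + 2) = ENNReal.ofReal ((2 : ℝ) ^ (M + 2)) := by
      rw [ENNReal.ofReal_pow (by norm_num)]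
      norm_num
    refine le_trans h1 ?_
    rw [h2]
    refine ENNReal.ofReal_le_ofReal ?_
    rw [hc]
    have : (0 : ℝ) ≤ 2 * d := by positivity
    linarith
  have hcoef2 : 2 * (d : ℝ≥0∞) ≤ ENNReal.ofReal c := by
    have heq : 2 * (d : ℝ≥0∞) = ENNReal.ofReal (2 * d) := by
      rw [ENNReal.ofReal_mul (by norm_num)]
      norm_num
    rw [heq]
    refine ENNReal.ofReal_le_ofReal ?_
    rw [hc]
    have : (0 : ℝ) ≤ 2 ^ (M + 2) := by positivity
    linarith
  have hclaim2 : ∀ i : Fin d, ∀ᵐ x : ProductSpace n ∂volume,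
      bmo1Cube (fun t => f (Function.update x i t)) ≤ ENNReal.ofReal c * bmo1 f := by
    intro i
    filter_upwards [S13.claim2 i hgm hgl, hsliceeq i] with x h2 heq
    rw [heq, hbmoeq]
    exact le_trans h2 (mul_le_mul_left (hcoef1 i) _)
  have hclaim3 : ∀ C : ℝ, 0 ≤ C →
      (∀ i : Fin d, ∀ᵐ x ∂(volume : Measure (ProductSpace n)),
        bmo1Cube (fun t => f (Function.update x i t)) ≤ ENNReal.ofReal C) →
      bmo1 f ≤ ENNReal.ofReal (c * C) := by
    intro C hC0 hCs
    have hCs' : ∀ i : Fin d, ∀ᵐ x : ProductSpace n ∂volume,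
        bmo1Cube (fun t => g (Function.update x i t)) ≤ ENNReal.ofReal C := by
      intro i
      filter_upwards [hCs i, hsliceeq i] with x h1 h2
      rwa [← h2]
    have h3 := S13.claim3 hgm hgl hCs'
    rw [hbmoeq]
    refine le_trans h3 ?_
    calc 2 * (d : ℝ≥0∞) * ENNReal.ofReal C
        ≤ ENNReal.ofReal c * ENNReal.ofReal C := mul_le_mul_left hcoef2 _
      _ = ENNReal.ofReal (c * C) := (ENNReal.ofReal_mul hc0.le).symm
  refine ⟨⟨?_, ?_⟩, hclaim2, hclaim3⟩
  · intro hne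
    refine ⟨c * (bmo1 f).toReal, by positivity, fun i => ?_⟩
    filter_upwards [hclaim2 i] with x hx
    refine le_trans hx (le_of_eq ?_)
    rw [ENNReal.ofReal_mul hc0.le, ENNReal.ofReal_toReal hne]
  · rintro ⟨C, hC0, hCs⟩
    exact ne_top_of_le_ne_top ENNReal.ofReal_ne_top (hclaim3 C hC0 hCs)
end

section
/- Let μ be a σ-finite measure, let X be a reflexive Banach space, and let T : X → L¹(μ) be an injective bounded linear map. Suppose (f_m) is a sequence in X with sup_m ‖f_m‖_X < ∞ and the functions T f_m converge μ-almost everywhere to a measurable function g. Then there exists f ∈ X with T f = g μ-a.e., ‖f‖_X ≤ liminf_m ‖f_m‖_X, and f_m → f in the weak topology of X. -/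
open MeasureTheory Filter

open scoped Topology

section Aux

variable {α : Type*} [MeasurableSpace α] {μ : Measure α}

private lemma Lp_coeFn_sum {ι : Type*} (s : Finset ι) (F : ι → Lp ℝ 1 μ) :
    (↑(∑ i ∈ s, F i) : α → ℝ) =ᵐ[μ] fun a => ∑ i ∈ s, (F i : α → ℝ) a := by
  classical
  induction s using Finset.induction_on with
  | empty =>
    simp only [Finset.sum_empty]
    exact Lp.coeFn_zero (E := ℝ) (p := 1) (μ := μ)
  | @insert j s hj ih =>
    rw [Finset.sum_insert hj]
    filter_upwards [Lp.coeFn_add (F j) (∑ i ∈ s, F i), ih] with a h1 h2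
    simp only [h1, Pi.add_apply, h2, Finset.sum_insert hj]

private lemma aux15 {X : Type*} [NormedAddCommGroup X] [NormedSpace ℝ X] [CompleteSpace X]
    (hrefl : Function.Surjective (NormedSpace.inclusionInDoubleDual ℝ X))
    (T : X →L[ℝ] Lp ℝ 1 μ)
    (f : ℕ → X) {M : ℝ} (hM : ∀ m, ‖f m‖ ≤ M)
    (g : α → ℝ)
    (hae : ∀ᵐ a ∂μ, Tendsto (fun m => (T (f m) : α → ℝ) a) atTop (nhds (g a)))
    (U : Ultrafilter ℕ) (hU : ↑U ≤ (atTop : Filter ℕ)) :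
    ∃ flim : X, (T flim : α → ℝ) =ᵐ[μ] g ∧
      ∀ Λ : StrongDual ℝ X, Tendsto (fun m => Λ (f m)) (↑U) (𝓝 (Λ flim)) := by
  classical
  -- Step 1: ultrafilter limits of `Λ (f m)` exist
  have hex : ∀ Λ : StrongDual ℝ X, ∃ c, Tendsto (fun m => Λ (f m)) (↑U) (𝓝 c) := by
    intro Λ
    have hmem : ∀ m, Λ (f m) ∈ Set.Icc (-(‖Λ‖ * M)) (‖Λ‖ * M) := by
      intro m
      have h1 : |Λ (f m)| ≤ ‖Λ‖ * M := by
        calc |Λ (f m)| = ‖Λ (f m)‖ := rfl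
          _ ≤ ‖Λ‖ * ‖f m‖ := Λ.le_opNorm _
          _ ≤ ‖Λ‖ * M := mul_le_mul_of_nonneg_left (hM m) (norm_nonneg Λ)
      exact abs_le.mp h1
    have hle : ↑(U.map fun m => Λ (f m)) ≤ 𝓟 (Set.Icc (-(‖Λ‖ * M)) (‖Λ‖ * M)) := by
      rw [Ultrafilter.coe_map, Filter.le_principal_iff, Filter.mem_map]
      exact Filter.univ_mem' hmem
    obtain ⟨c, -, hc⟩ := isCompact_Icc.ultrafilter_le_nhds (U.map fun m => Λ (f m)) hle
    exact ⟨c, hc⟩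
  choose φ hφ using hex
  -- Step 2: `φ` is a bounded linear functional on the dual; reflexivity gives `flim`
  have hadd : ∀ Λ₁ Λ₂ : StrongDual ℝ X, φ (Λ₁ + Λ₂) = φ Λ₁ + φ Λ₂ := by
    intro Λ₁ Λ₂
    exact tendsto_nhds_unique (hφ (Λ₁ + Λ₂)) (by simpa using (hφ Λ₁).add (hφ Λ₂))
  have hsmul : ∀ (c : ℝ) (Λ : StrongDual ℝ X), φ (c • Λ) = c * φ Λ := by
    intro c Λ
    exact tendsto_nhds_unique (hφ (c • Λ)) (by simpa using (hφ Λ).const_mul c)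
  have hMnn : 0 ≤ M := le_trans (norm_nonneg _) (hM 0)
  let Φ : StrongDual ℝ (StrongDual ℝ X) :=
    LinearMap.mkContinuous
      { toFun := φ
        map_add' := hadd
        map_smul' := hsmul } M
      (by
        intro Λ
        have h1 : Tendsto (fun m => ‖Λ (f m)‖) (↑U) (𝓝 ‖φ Λ‖) := (hφ Λ).norm
        refine le_of_tendsto' h1 fun m => ?_
        calc ‖Λ (f m)‖ ≤ ‖Λ‖ * ‖f m‖ := Λ.le_opNorm _
          _ ≤ ‖Λ‖ * M := mul_le_mul_of_nonneg_left (hM m) (norm_nonneg Λ)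
          _ = M * ‖Λ‖ := mul_comm _ _)
  obtain ⟨flim, hflim⟩ := hrefl Φ
  have hweak : ∀ Λ : StrongDual ℝ X, Tendsto (fun m => Λ (f m)) (↑U) (𝓝 (Λ flim)) := by
    intro Λ
    have h1 : Λ flim = φ Λ := by
      have := congrArg (fun Ψ : StrongDual ℝ (StrongDual ℝ X) => Ψ Λ) hflim
      simpa [NormedSpace.dual_def, Φ] using this
    rw [h1]; exact hφ Λ
  refine ⟨flim, ?_, hweak⟩
  -- Step 3 (Mazur): `flim` lies in the closed convex hull of each tail
  have hclos : ∀ N : ℕ, flim ∈ closure (convexHull ℝ (f '' Set.Ici N)) := by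
    intro N
    by_contra hnot
    obtain ⟨Λ, u, hsu, hu⟩ := geometric_hahn_banach_closed_point
      ((convex_convexHull ℝ _).closure) isClosed_closure hnot
    have hev : ∀ᶠ m in (↑U : Filter ℕ), Λ (f m) ≤ u := by
      have h1 : ∀ᶠ m in (↑U : Filter ℕ), N ≤ m := hU (eventually_ge_atTop N)
      exact h1.mono fun m hm =>
        (hsu _ (subset_closure (subset_convexHull ℝ _ ⟨m, hm, rfl⟩))).le
    exact absurd hu (not_lt.mpr (le_of_tendsto (hweak Λ) hev))
  -- Step 4: approximate `flim` by convex combinations of tails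
  have hx : ∀ N : ℕ, ∃ y ∈ convexHull ℝ (f '' Set.Ici N), dist flim y < 1 / (N + 1) := by
    intro N
    exact Metric.mem_closure_iff.mp (hclos N) _ (by positivity)
  choose x hx1 hx2 using hx
  have hxlim : Tendsto x atTop (𝓝 flim) := by
    rw [tendsto_iff_dist_tendsto_zero]
    refine squeeze_zero (fun _ => dist_nonneg) (fun N => ?_)
      tendsto_one_div_add_atTop_nhds_zero_nat
    rw [dist_comm]; exact (hx2 N).le
  have hT1 : Tendsto (fun N => T (x N)) atTop (𝓝 (T flim)) :=
    (T.continuous.tendsto _).comp hxlim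
  -- Step 5: L¹ convergence gives an a.e. convergent subsequence
  have hTm : TendstoInMeasure μ (fun N => (T (x N) : α → ℝ)) atTop ((T flim : α → ℝ)) := by
    refine tendstoInMeasure_of_tendsto_eLpNorm_of_ne_top one_ne_zero ENNReal.one_ne_top
      (fun N => Lp.aestronglyMeasurable _) (Lp.aestronglyMeasurable _) ?_
    have hkey : ∀ N, eLpNorm ((T (x N) : α → ℝ) - (T flim : α → ℝ)) 1 μ
        = ENNReal.ofReal (dist (T (x N)) (T flim)) := by
      intro N
      rw [Lp.dist_def, ENNReal.ofReal_toReal]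
      rw [← eLpNorm_congr_ae (Lp.coeFn_sub (T (x N)) (T flim))]
      exact (Lp.eLpNorm_lt_top _).ne
    have hd : Tendsto (fun N => dist (T (x N)) (T flim)) atTop (𝓝 0) :=
      tendsto_iff_dist_tendsto_zero.mp hT1
    have := (ENNReal.tendsto_ofReal hd)
    rw [ENNReal.ofReal_zero] at this
    exact this.congr fun N => (hkey N).symm
  obtain ⟨ns, hns_mono, hns⟩ := hTm.exists_seq_tendsto_ae
  -- Step 6: extract convex combination data
  have hrep : ∀ N : ℕ, ∃ (ι : Type) (t : Finset ι) (w : ι → ℝ) (z : ι → X),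
      (∀ i ∈ t, 0 ≤ w i) ∧ ∑ i ∈ t, w i = 1 ∧ (∀ i ∈ t, z i ∈ f '' Set.Ici N) ∧
      ∑ i ∈ t, w i • z i = x N := by
    intro N
    have h1 := hx1 N
    rw [convexHull_eq] at h1
    obtain ⟨ι, t, w, z, hw0, hw1, hz, hcm⟩ := h1
    exact ⟨ι, t, w, z, hw0, hw1, hz, by rw [← Finset.centerMass_eq_of_sum_1 _ _ hw1, hcm]⟩
  choose ι t w z hw0 hw1 hz hsum using hrep
  have hcoe : ∀ N, (T (x N) : α → ℝ)
      =ᵐ[μ] fun a => ∑ i ∈ t N, w N i * (T (z N i) : α → ℝ) a := by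
    intro N
    have h1 : T (x N) = ∑ i ∈ t N, w N i • T (z N i) := by
      rw [← hsum N, map_sum]
      simp [_root_.map_smul]
    rw [h1]
    refine (Lp_coeFn_sum (t N) _).trans ?_
    have h2 : ∀ᵐ a ∂μ, ∀ i ∈ t N,
        ((w N i • T (z N i) : Lp ℝ 1 μ) : α → ℝ) a = w N i * (T (z N i) : α → ℝ) a := by
      rw [Filter.eventually_all_finset]
      intro i _
      filter_upwards [Lp.coeFn_smul (w N i) (T (z N i))] with a ha
      simpa using ha
    filter_upwards [h2] with a ha
    exact Finset.sum_congr rfl fun i hi => ha i hi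
  -- Step 7: combine everything pointwise a.e.
  filter_upwards [hae, hns, ae_all_iff.mpr hcoe] with a hg_a h_ns h_coe
  suffices htx : Tendsto (fun N => (T (x N) : α → ℝ) a) atTop (𝓝 (g a)) by
    exact tendsto_nhds_unique (h_ns) (htx.comp hns_mono.tendsto_atTop)
  rw [Metric.tendsto_atTop]
  intro ε hε
  obtain ⟨N₀, hN₀⟩ := (Metric.tendsto_atTop.mp hg_a) (ε / 2) (by positivity)
  refine ⟨N₀, fun N hN => ?_⟩
  rw [Real.dist_eq, h_coe N]
  have hsub : ∑ i ∈ t N, w N i * (T (z N i) : α → ℝ) a - g a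
      = ∑ i ∈ t N, w N i * ((T (z N i) : α → ℝ) a - g a) := by
    simp only [mul_sub, Finset.sum_sub_distrib, ← Finset.sum_mul, hw1 N, one_mul]
  rw [hsub]
  calc |∑ i ∈ t N, w N i * ((T (z N i) : α → ℝ) a - g a)|
      ≤ ∑ i ∈ t N, |w N i * ((T (z N i) : α → ℝ) a - g a)| := Finset.abs_sum_le_sum_abs _ _
    _ ≤ ∑ i ∈ t N, w N i * (ε / 2) := by
        refine Finset.sum_le_sum fun i hi => ?_
        rw [abs_mul, abs_of_nonneg (hw0 N i hi)]
        refine mul_le_mul_of_nonneg_left ?_ (hw0 N i hi)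
        obtain ⟨m, hm, hfm⟩ := hz N i hi
        rw [← hfm]
        have := hN₀ m (le_trans hN hm)
        rw [Real.dist_eq] at this
        exact this.le
    _ = ε / 2 := by rw [← Finset.sum_mul, hw1 N, one_mul]
    _ < ε := by linarith

end Aux

/-- let `μ` be σ-finite, `X` a reflexive Banach space (expressed via
surjectivity of the canonical inclusion into the double dual), and `T : X → L¹(μ)` an
injective bounded linear map. If `sup_m ‖f_m‖ < ∞` and the functions `T f_m` converge
`μ`-a.e. to a measurable `g`, then there is `f ∈ X` with `T f = g` a.e.,
`‖f‖ ≤ liminf ‖f_m‖`, and `f_m → f` weakly in `X`. -/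
theorem statement15 {α : Type*} [MeasurableSpace α] (μ : Measure α) [SigmaFinite μ]
    (X : Type*) [NormedAddCommGroup X] [NormedSpace ℝ X] [CompleteSpace X]
    (hrefl : Function.Surjective (NormedSpace.inclusionInDoubleDual ℝ X))
    (T : X →L[ℝ] Lp ℝ 1 μ) (hT : Function.Injective T)
    (f : ℕ → X) (hbdd : ∃ M : ℝ, ∀ m, ‖f m‖ ≤ M)
    (g : α → ℝ) (hg : Measurable g)
    (hae : ∀ᵐ a ∂μ, Tendsto (fun m => (T (f m) : α → ℝ) a) atTop (nhds (g a))) :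
    ∃ flim : X, (T flim : α → ℝ) =ᵐ[μ] g ∧
      ‖flim‖ ≤ liminf (fun m => ‖f m‖) atTop ∧
      ∀ Λ : X →L[ℝ] ℝ, Tendsto (fun m => Λ (f m)) atTop (nhds (Λ flim)) := by
  obtain ⟨M, hM⟩ := hbdd
  obtain ⟨flim, hflim_ae, hflim_weak⟩ :=
    aux15 hrefl T f hM g hae (Ultrafilter.of atTop) (Ultrafilter.of_le _)
  have hweak_all : ∀ Λ : X →L[ℝ] ℝ, Tendsto (fun m => Λ (f m)) atTop (𝓝 (Λ flim)) := by
    intro Λ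
    by_contra hcon
    rw [Metric.tendsto_atTop] at hcon
    push_neg at hcon
    obtain ⟨ε, hε, hfreq⟩ := hcon
    have hfr : ∃ᶠ m in atTop, ε ≤ dist (Λ (f m)) (Λ flim) := by
      rw [frequently_atTop]
      intro N
      obtain ⟨n, hn, hd⟩ := hfreq N
      exact ⟨n, hn, hd⟩
    have hNB : NeBot (atTop ⊓ 𝓟 {m | ε ≤ dist (Λ (f m)) (Λ flim)}) :=
      frequently_iff_neBot.mp hfr
    set U' := Ultrafilter.of (atTop ⊓ 𝓟 {m | ε ≤ dist (Λ (f m)) (Λ flim)}) with hU'def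
    have hU'le : ↑U' ≤ atTop ⊓ 𝓟 {m | ε ≤ dist (Λ (f m)) (Λ flim)} := Ultrafilter.of_le _
    obtain ⟨flim', hflim'_ae, hflim'_weak⟩ :=
      aux15 hrefl T f hM g hae U' (hU'le.trans inf_le_left)
    have hTeq : T flim' = T flim := Lp.ext (hflim'_ae.trans hflim_ae.symm)
    have heq : flim' = flim := hT hTeq
    have h1 : Tendsto (fun m => dist (Λ (f m)) (Λ flim)) (↑U') (𝓝 0) := by
      have h2 := hflim'_weak Λ
      rw [heq] at h2
      exact tendsto_iff_dist_tendsto_zero.mp h2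
    have h2 : ∀ᶠ m in (↑U' : Filter ℕ), ε ≤ dist (Λ (f m)) (Λ flim) :=
      (hU'le.trans inf_le_right) (mem_principal_self _)
    linarith [ge_of_tendsto h1 h2]
  have hbddabove : IsBoundedUnder (· ≤ ·) atTop (fun m => ‖f m‖) :=
    isBoundedUnder_of ⟨M, fun m => hM m⟩
  have hbddbelow : IsBoundedUnder (· ≥ ·) atTop (fun m => ‖f m‖) :=
    isBoundedUnder_of ⟨0, fun m => norm_nonneg _⟩
  have hLnn : 0 ≤ liminf (fun m => ‖f m‖) atTop :=
    le_liminf_of_le hbddabove.isCoboundedUnder_ge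
      (Eventually.of_forall fun m => norm_nonneg _)
  refine ⟨flim, hflim_ae, ?_, hweak_all⟩
  refine NormedSpace.norm_le_dual_bound ℝ flim hLnn fun Λ => ?_
  have habs : Tendsto (fun m => ‖Λ (f m)‖) atTop (𝓝 ‖Λ flim‖) := (hweak_all Λ).norm
  have h1 : ‖Λ flim‖ = liminf (fun m => ‖Λ (f m)‖) atTop := habs.liminf_eq.symm
  have h2 : liminf (fun m => ‖Λ (f m)‖) atTop ≤ liminf (fun m => ‖Λ‖ * ‖f m‖) atTop := by
    refine liminf_le_liminf (Eventually.of_forall fun m => Λ.le_opNorm (f m))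
      (isBoundedUnder_of ⟨0, fun m => norm_nonneg _⟩) ?_
    exact (isBoundedUnder_of
      ⟨‖Λ‖ * M, fun m => mul_le_mul_of_nonneg_left (hM m) (norm_nonneg Λ)⟩).isCoboundedUnder_ge
  have h3 : ‖Λ‖ * liminf (fun m => ‖f m‖) atTop = liminf (fun m => ‖Λ‖ * ‖f m‖) atTop := by
    have hmono : Monotone (fun r : ℝ => ‖Λ‖ * r) :=
      fun a b hab => mul_le_mul_of_nonneg_left hab (norm_nonneg Λ)
    exact hmono.map_liminf_of_continuousAt (fun m => ‖f m‖)
      ((continuous_const.mul continuous_id).continuousAt)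
      hbddabove.isCoboundedUnder_ge hbddbelow
  rw [mul_comm] at h3
  rw [h1]
  exact h2.trans_eq h3.symm
end
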